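/- arXiv:2410.17125 — 5 statements merged into one kernel-verified Lean document; each statement's English description precedes it below -/
import Mathlib

section
/- Let 𝔤 be a finite-dimensional semisimple Lie algebra over ℂ with Cartan subalgebra 𝔥, let α be a root of (𝔤,𝔥) with coroot h_α ∈ 𝔥, and let V be a finite-dimensional 𝔤-module. Let W ⊆ V be an 𝔥-invariant linear subspace such that x·w ∈ W for every x in the root space 𝔤_α and every w ∈ W. Then Σ_β dim_ℂ(W ∩ V_β)·β(h_α) ≥ 0, where β runs over the 𝔥-weights of V; equivalently, the trace of the action of h_α on W is a nonnegative integer. (Since β(h_α) = 2(β,α)/(α,α) for the Killing-induced form (·,·) on 𝔥*, this is the paper's statement Σ_{β∈Δ(W,𝔥)}(β,α) ≥ 0, where Δ(W,𝔥) is the multiset of nonzero 𝔥-weights of W counted with multiplicity.) -/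
open LieAlgebra LieModule LieAlgebra.IsKilling
open Module

section RingLemma
variable {R : Type*} [Ring R] {H E F : R}

/-- Quadratic Casimir-type element (4FE + 2H + H²). -/
def casD (H E F : R) : R := F*E + F*E + F*E + F*E + H + H + H*H

lemma casD_comm (hHE : H*E = E*H + (E + E)) (hHF : H*F = F*H - (F + F))
    (hEF : E*F = F*E + H) :
    (casD H E F) * E = E * (casD H E F) ∧
    (casD H E F) * F = F * (casD H E F) ∧
    (casD H E F) * H = H * (casD H E F) := by
  have rHE : ∀ x : R, H*(E*x) = E*(H*x) + (E*x + E*x) := fun x => by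
    rw [← mul_assoc, hHE, add_mul, mul_assoc, add_mul]
  have rHF : ∀ x : R, H*(F*x) = F*(H*x) - (F*x + F*x) := fun x => by
    rw [← mul_assoc, hHF, sub_mul, mul_assoc, add_mul]
  have rEF : ∀ x : R, E*(F*x) = F*(E*x) + H*x := fun x => by
    rw [← mul_assoc, hEF, add_mul, mul_assoc]
  refine ⟨?_, ?_, ?_⟩ <;>
  · simp only [casD, mul_add, add_mul, mul_assoc]
    simp only [rHE, rHF, rEF, hHE, hHF, hEF, mul_add, add_mul, mul_assoc, mul_sub, sub_mul]
    abel
end RingLemma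

section Sl2Aux

variable {L : Type*} [LieRing L] [LieAlgebra ℂ L]
  {V : Type*} [AddCommGroup V] [Module ℂ V] [LieRingModule L V] [LieModule ℂ L V]
  {h e f : L}

attribute [local instance 100] LieRing.ofAssociativeRing

local notation "TH" => LieModule.toEnd ℂ L V h
local notation "TE" => LieModule.toEnd ℂ L V e
local notation "TF" => LieModule.toEnd ℂ L V f

lemma relHE (ht : IsSl2Triple h e f) : TH * TE = TE * TH + (TE + TE) := by
  have he2 : (⁅h, e⁆ : L) = e + e := by rw [ht.lie_h_e_nsmul, two_smul]
  have h1 : TH * TE - TE * TH = TE + TE := by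
    rw [← Ring.lie_def, ← LieHom.map_lie, he2, map_add]
  rw [sub_eq_iff_eq_add'] at h1
  exact h1

lemma relHF (ht : IsSl2Triple h e f) : TH * TF = TF * TH - (TF + TF) := by
  have hf2 : (⁅h, f⁆ : L) = -(f + f) := by rw [ht.lie_h_f_nsmul, two_smul]
  have h1 : TH * TF - TF * TH = -(TF + TF) := by
    rw [← Ring.lie_def, ← LieHom.map_lie, hf2, map_neg, map_add]
  rw [sub_eq_iff_eq_add'] at h1
  rw [h1, ← sub_eq_add_neg]

lemma relEF (ht : IsSl2Triple h e f) : TE * TF = TF * TE + TH := by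
  have h1 : TE * TF - TF * TE = TH := by
    rw [← Ring.lie_def, ← LieHom.map_lie, ht.lie_e_f]
  rw [sub_eq_iff_eq_add'] at h1
  exact h1

lemma pow_shift {H G : Module.End ℂ V} {s : ℂ} (hc : H*G = G*H + s•G) (k : ℕ) :
    H * G^k = G^k * H + (s*k) • G^k := by
  have rHG : ∀ x : Module.End ℂ V, H*(G*x) = G*(H*x) + s•(G*x) := fun x => by
    rw [← mul_assoc, hc, add_mul, mul_assoc, smul_mul_assoc]
  induction k with
  | zero => simp
  | succ k ih =>
    calc H * G^(k+1) = H*(G*G^k) := by rw [pow_succ']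
      _ = G*(H*G^k) + s•(G*G^k) := rHG _
      _ = G*(G^k*H + (s*k)•G^k) + s•(G*G^k) := by rw [ih]
      _ = (G*G^k)*H + (s*k)•(G*G^k) + s•(G*G^k) := by
            rw [mul_add, ← mul_assoc, mul_smul_comm]
      _ = G^(k+1)*H + (s*↑(k+1))•G^(k+1) := by
            rw [← pow_succ']
            push_cast
            match_scalars <;> ring

lemma pow_shift_apply {H G : Module.End ℂ V} {s : ℂ} (hc : H*G = G*H + s•G) (k : ℕ)
    {μ : ℂ} {v : V} (hv : H v = μ • v) :
    H ((G^k) v) = (μ + s*k) • ((G^k) v) := by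
  have := congrArg (fun (g : Module.End ℂ V) => g v) (pow_shift hc k)
  simp only [Module.End.mul_apply, LinearMap.add_apply, LinearMap.smul_apply] at this
  rw [this, hv, map_smul, add_smul]

variable [FiniteDimensional ℂ V]

lemma exists_pow_ne_zero {H G : Module.End ℂ V} {s : ℂ} (hs : s ≠ 0)
    (hc : H*G = G*H + s•G) {μ : ℂ} {v : V} (hv : v ≠ 0) (heig : H v = μ • v) :
    ∃ i : ℕ, (G^i) v ≠ 0 ∧ (G^(i+1)) v = 0 := by
  have hterm : ∃ i, (G^i) v = 0 := by
    by_contra! contra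
    have hinj : Function.Injective (fun i : ℕ => μ + s * i) := by
      intro a b hab
      simp only [add_right_inj] at hab
      exact_mod_cast mul_left_cancel₀ hs hab
    have hinf : (Set.range fun i : ℕ => μ + s * i).Infinite :=
      Set.infinite_range_of_injective hinj
    exact hinf (H.eigenvectors_linearIndependent (Set.range fun i : ℕ => μ + s * i)
      (fun ⟨_, hr⟩ => (G ^ Classical.choose hr) v)
      (fun ⟨r, hr⟩ => by
        simp only [Module.End.hasEigenvector_iff, Module.End.mem_eigenspace_iff]
        refine ⟨?_, contra _⟩
        rw [pow_shift_apply hc _ heig,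
          show μ + s*↑(Classical.choose hr) = r from Classical.choose_spec hr])).finite
  classical
  have h0 : Nat.find hterm ≠ 0 := by
    intro h0
    have := Nat.find_spec hterm
    rw [h0] at this
    simp at this
    exact hv this
  refine ⟨Nat.find hterm - 1, Nat.find_min hterm (by omega), ?_⟩
  have hone : Nat.find hterm - 1 + 1 = Nat.find hterm := by omega
  rw [hone]
  exact Nat.find_spec hterm

end Sl2Aux

section Main

variable {L : Type*} [LieRing L] [LieAlgebra ℂ L]
  {V : Type*} [AddCommGroup V] [Module ℂ V] [LieRingModule L V] [LieModule ℂ L V]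
  [FiniteDimensional ℂ V] {h e f : L}

local notation "TH" => LieModule.toEnd ℂ L V h
local notation "TE" => LieModule.toEnd ℂ L V e
local notation "TF" => LieModule.toEnd ℂ L V f

lemma relHE' (ht : IsSl2Triple h e f) : TH * TE = TE * TH + (2:ℂ) • TE := by
  rw [two_smul]; exact relHE ht

lemma relHF' (ht : IsSl2Triple h e f) : TH * TF = TF * TH + (-2:ℂ) • TF := by
  rw [show ((-2:ℂ)) • TF = -(TF + TF) by rw [neg_smul, two_smul], ← sub_eq_add_neg]
  exact relHF ht

/-- Any nonzero generalized eigenspace of the Cartan element contains an honest eigenvector. -/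
lemma exists_eigvec (ht : IsSl2Triple h e f) {μ : ℂ}
    (hμ : (TH).maxGenEigenspace μ ≠ ⊥) :
    ∃ w : V, w ≠ 0 ∧ TH w = μ • w ∧ w ∈ (TH).maxGenEigenspace μ := by
  have hmaps : ∀ x ∈ (TH).maxGenEigenspace μ, TH x ∈ (TH).maxGenEigenspace μ :=
    fun x hx => Module.End.mapsTo_maxGenEigenspace_of_comm rfl μ hx
  haveI : Nontrivial ((TH).maxGenEigenspace μ) := Submodule.nontrivial_iff_ne_bot.mpr hμ
  obtain ⟨ν, hν⟩ := Module.End.exists_eigenvalue ((TH).restrict hmaps)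
  obtain ⟨w0, hw0⟩ := hν.exists_hasEigenvector
  have hw0ne : (w0 : V) ≠ 0 := fun hc => hw0.right (Subtype.ext hc)
  have heig : TH (w0 : V) = ν • (w0 : V) := by
    simpa using congrArg Subtype.val (Module.End.mem_eigenspace_iff.mp hw0.left)
  have hνμ : ν = μ := by
    by_contra hne
    refine hw0ne (Submodule.disjoint_def.mp
      (Module.End.disjoint_genEigenspace TH hne 1 ⊤) _ ?_ ?_)
    · exact Module.End.mem_eigenspace_iff.mpr heig
    · exact w0.2
  subst hνμ
  exact ⟨w0, hw0ne, heig, w0.2⟩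

lemma eigen_int (ht : IsSl2Triple h e f) {μ : ℂ}
    (hμ : (TH).maxGenEigenspace μ ≠ ⊥) : ∃ z : ℤ, μ = z := by
  obtain ⟨w, hwne, hweig, -⟩ := exists_eigvec ht hμ
  obtain ⟨i, hi1, hi2⟩ := exists_pow_ne_zero two_ne_zero (relHE' ht) hwne hweig
  have P : ht.HasPrimitiveVectorWith ((TE^i) w) (μ + 2*i) := by
    refine ⟨hi1, ?_, ?_⟩
    · simpa only [LieModule.toEnd_apply_apply] using pow_shift_apply (relHE' ht) i hweig
    · have h3 : TE ((TE^i) w) = 0 := by rw [← Module.End.mul_apply, ← pow_succ']; exact hi2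
      simpa only [LieModule.toEnd_apply_apply] using h3
  obtain ⟨n, hn⟩ := P.exists_nat
  exact ⟨(n:ℤ) - 2*i, by push_cast; linear_combination hn⟩

/-- `E^k` is injective on the generalized eigenspace of weight `-k`. -/
lemma inj_pow_e (ht : IsSl2Triple h e f) (k : ℕ) {v : V}
    (hv : v ∈ (TH).maxGenEigenspace (-(k:ℂ))) (hzero : ((TE)^k) v = 0) : v = 0 := by
  by_contra hvne
  obtain ⟨cDE, cDF, cDH⟩ := casD_comm (relHE (V := V) ht) (relHF (V := V) ht) (relEF (V := V) ht)
  set D := casD TH TE TF with hD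
  have cDE' : Commute D TE := cDE
  have cDF' : Commute D TF := cDF
  -- H preserves ker (E^k)
  have hkerH : ∀ x ∈ LinearMap.ker (TE^k), TH x ∈ LinearMap.ker (TE^k) := by
    intro x hx
    rw [LinearMap.mem_ker] at hx ⊢
    have h2 := congrArg (fun g : Module.End ℂ V => g x) (pow_shift (relHE' ht) k)
    simp only [Module.End.mul_apply, LinearMap.add_apply, LinearMap.smul_apply] at h2
    rw [hx, map_zero, smul_zero, add_zero] at h2
    exact h2.symm
  -- find an honest common eigenvector inside ker(E^k) ⊓ 𝕎(-k)
  set Y₀ : Submodule ℂ V := LinearMap.ker (TE^k) ⊓ (TH).maxGenEigenspace (-(k:ℂ)) with hY₀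
  have hY₀maps : ∀ x ∈ Y₀, TH x ∈ Y₀ := by
    intro x hx
    obtain ⟨hx1, hx2⟩ := Submodule.mem_inf.mp hx
    exact Submodule.mem_inf.mpr
      ⟨hkerH x hx1, Module.End.mapsTo_maxGenEigenspace_of_comm rfl _ hx2⟩
  have hY₀ne : Y₀ ≠ ⊥ := Submodule.ne_bot_iff _ |>.mpr
    ⟨v, Submodule.mem_inf.mpr ⟨LinearMap.mem_ker.mpr hzero, hv⟩, hvne⟩
  haveI : Nontrivial Y₀ := Submodule.nontrivial_iff_ne_bot.mpr hY₀ne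
  obtain ⟨ν, hν⟩ := Module.End.exists_eigenvalue ((TH).restrict hY₀maps)
  obtain ⟨w0, hw0⟩ := hν.exists_hasEigenvector
  have hw0ne : (w0 : V) ≠ 0 := fun hc => hw0.right (Subtype.ext hc)
  have heigw : TH (w0 : V) = ν • (w0 : V) := by
    simpa using congrArg Subtype.val (Module.End.mem_eigenspace_iff.mp hw0.left)
  have hνμ : ν = -(k:ℂ) := by
    by_contra hne
    refine hw0ne (Submodule.disjoint_def.mp
      (Module.End.disjoint_genEigenspace TH hne 1 ⊤) _ ?_ ?_)
    · exact Module.End.mem_eigenspace_iff.mpr heigw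
    · exact (Submodule.mem_inf.mp w0.2).2
  rw [hνμ] at heigw
  -- now find a common (D, H)-eigenvector inside ker(E^k) ⊓ eigenspace(H, -k)
  set Y₁ : Submodule ℂ V := LinearMap.ker (TE^k) ⊓ (TH).eigenspace (-(k:ℂ)) with hY₁
  have hY₁maps : ∀ x ∈ Y₁, D x ∈ Y₁ := by
    intro x hx
    obtain ⟨hx1, hx2⟩ := Submodule.mem_inf.mp hx
    refine Submodule.mem_inf.mpr ⟨?_, ?_⟩
    · rw [LinearMap.mem_ker]
      have h2 := congrArg (fun g : Module.End ℂ V => g x) (cDE'.pow_right k).eq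
      simp only [Module.End.mul_apply] at h2
      rw [LinearMap.mem_ker.mp hx1, map_zero] at h2
      exact h2.symm
    · have h2 := congrArg (fun g : Module.End ℂ V => g x) cDH
      simp only [Module.End.mul_apply] at h2
      rw [Module.End.mem_eigenspace_iff.mp hx2, map_smul] at h2
      exact Module.End.mem_eigenspace_iff.mpr h2.symm
  have hY₁ne : Y₁ ≠ ⊥ := Submodule.ne_bot_iff _ |>.mpr
    ⟨w0, Submodule.mem_inf.mpr ⟨(Submodule.mem_inf.mp w0.2).1,
      Module.End.mem_eigenspace_iff.mpr heigw⟩, hw0ne⟩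
  haveI : Nontrivial Y₁ := Submodule.nontrivial_iff_ne_bot.mpr hY₁ne
  obtain ⟨c, hc⟩ := Module.End.exists_eigenvalue (D.restrict hY₁maps)
  obtain ⟨v1, hv1⟩ := hc.exists_hasEigenvector
  have hv1ne : (v1 : V) ≠ 0 := fun hcon => hv1.right (Subtype.ext hcon)
  have hDv1 : D (v1 : V) = c • (v1 : V) := by
    simpa using congrArg Subtype.val (Module.End.mem_eigenspace_iff.mp hv1.left)
  have heigv1 : TH (v1 : V) = (-(k:ℂ)) • (v1 : V) :=
    Module.End.mem_eigenspace_iff.mp (Submodule.mem_inf.mp v1.2).2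
  have hEkv1 : (TE^k) (v1 : V) = 0 := LinearMap.mem_ker.mp (Submodule.mem_inf.mp v1.2).1
  -- climb with E
  obtain ⟨i, hi1, hi2⟩ := exists_pow_ne_zero two_ne_zero (relHE' ht) hv1ne heigv1
  have hik : i < k := by
    by_contra hik
    refine hi1 ?_
    rw [show i = (i-k)+k by omega, pow_add, Module.End.mul_apply, hEkv1, map_zero]
  set u := (TE^i) (v1 : V) with hu
  have hueig : TH u = (-(k:ℂ) + 2*i) • u := pow_shift_apply (relHE' ht) i heigv1
  have P : ht.HasPrimitiveVectorWith u (-(k:ℂ) + 2*i) := by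
    refine ⟨hi1, ?_, ?_⟩
    · simpa only [LieModule.toEnd_apply_apply] using hueig
    · have h3 : TE u = 0 := by rw [hu, ← Module.End.mul_apply, ← pow_succ']; exact hi2
      simpa only [LieModule.toEnd_apply_apply] using h3
  obtain ⟨n, hn⟩ := P.exists_nat
  -- D acts on u by c, and by n² + 2n
  have hDu : D u = c • u := by
    have h2 := congrArg (fun g : Module.End ℂ V => g (v1 : V)) (cDE'.pow_right i).eq
    simp only [Module.End.mul_apply] at h2
    rw [hDv1, map_smul] at h2
    exact h2
  have hEu : TE u = 0 := by
    rw [hu, ← Module.End.mul_apply, ← pow_succ']; exact hi2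
  have hHu : TH u = (n:ℂ) • u := by rw [hueig, hn]
  have hDu2 : D u = ((n:ℂ)*n + (n + n)) • u := by
    rw [hD]
    simp only [casD, LinearMap.add_apply, Module.End.mul_apply, hEu, map_zero, hHu, map_smul]
    module
  have hcn : c = (n:ℂ)*n + (n + n) := smul_left_injective ℂ hi1 (hDu.symm.trans hDu2)
  -- descend with F
  obtain ⟨b, hb1, hb2⟩ := exists_pow_ne_zero (by norm_num : (-2:ℂ) ≠ 0) (relHF' ht) hv1ne heigv1
  set y := (TF^b) (v1 : V) with hy
  have hyeig : TH y = (-(k:ℂ) + (-2)*b) • y := pow_shift_apply (relHF' ht) b heigv1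
  have hHy : TH y = (-((k:ℂ) + 2*b)) • y := by rw [hyeig]; ring_nf
  have hFy : TF y = 0 := by
    rw [hy, ← Module.End.mul_apply, ← pow_succ']; exact hb2
  have hFEy : TF (TE y) = ((k:ℂ) + 2*b) • y := by
    have h2 := congrArg (fun g : Module.End ℂ V => g y) (relEF ht)
    simp only [Module.End.mul_apply, LinearMap.add_apply] at h2
    rw [hFy, map_zero] at h2
    -- h2 : 0 = TF (TE y) + TH y
    have h3 : TF (TE y) = -(TH y) := eq_neg_of_add_eq_zero_left h2.symm
    rw [h3, hHy, ← neg_smul, neg_neg]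
  have hDy : D y = c • y := by
    have h2 := congrArg (fun g : Module.End ℂ V => g (v1 : V)) (cDF'.pow_right b).eq
    simp only [Module.End.mul_apply] at h2
    rw [hDv1, map_smul] at h2
    exact h2
  have hDy2 : D y = (((k:ℂ)+2*b)*((k:ℂ)+2*b) + (((k:ℂ)+2*b) + ((k:ℂ)+2*b))) • y := by
    rw [hD]
    simp only [casD, LinearMap.add_apply, Module.End.mul_apply, hFEy, hHy, map_smul]
    module
  have hcm : c = (((k:ℂ)+2*b)*((k:ℂ)+2*b) + (((k:ℂ)+2*b) + ((k:ℂ)+2*b))) :=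
    smul_left_injective ℂ hb1 (hDy.symm.trans hDy2)
  -- match the Casimir eigenvalues : n = k + 2b
  have hfact : ((n:ℂ) - ((k:ℂ)+2*b)) * ((n:ℂ) + ((k:ℂ)+2*b) + 2) = 0 := by
    linear_combination hcm - hcn
  have hne2 : ((n:ℂ) + ((k:ℂ)+2*b) + 2) ≠ 0 := by
    have : ((n:ℂ) + ((k:ℂ)+2*b) + 2) = ((n + k + 2*b + 2 : ℕ) : ℂ) := by push_cast; ring
    rw [this]
    exact Nat.cast_ne_zero.mpr (by omega)
  have hnm : (n:ℂ) = (k:ℂ) + 2*b := by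
    rcases mul_eq_zero.mp hfact with h' | h'
    · exact sub_eq_zero.mp h'
    · exact absurd h' hne2
  -- conclude i = k + b, contradicting i < k
  have hi : (i:ℂ) = (k:ℂ) + b := by linear_combination (hn + hnm)/2
  have : i = k + b := by exact_mod_cast hi
  omega

end Main

section Count

variable {L : Type*} [LieRing L] [LieAlgebra ℂ L]
  {V : Type*} [AddCommGroup V] [Module ℂ V] [LieRingModule L V] [LieModule ℂ L V]
  [FiniteDimensional ℂ V] {h e f : L}

local notation "TH" => LieModule.toEnd ℂ L V h
local notation "TE" => LieModule.toEnd ℂ L V e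

lemma e_maxGen_step (ht : IsSl2Triple h e f) {μ : ℂ} {x : V}
    (hx : x ∈ (TH).maxGenEigenspace μ) : TE x ∈ (TH).maxGenEigenspace (μ + 2) := by
  have he2 : e ∈ (LieModule.toEnd ℂ L L h).maxGenEigenspace (2:ℂ) := by
    rw [Module.End.mem_maxGenEigenspace]
    refine ⟨1, ?_⟩
    rw [pow_one, LinearMap.sub_apply, LinearMap.smul_apply, Module.End.one_apply,
      LieModule.toEnd_apply_apply, ht.lie_h_e_nsmul, two_smul, two_smul, sub_self]
  have h3 := LieModule.lie_mem_maxGenEigenspace_toEnd he2 hx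
  rw [show (2:ℂ) + μ = μ + 2 by ring] at h3
  simpa only [LieModule.toEnd_apply_apply] using h3

lemma e_pow_maxGen (ht : IsSl2Triple h e f) (j : ℕ) {μ : ℂ} {x : V}
    (hx : x ∈ (TH).maxGenEigenspace μ) : (TE^j) x ∈ (TH).maxGenEigenspace (μ + 2*j) := by
  induction j with
  | zero => simpa using hx
  | succ j ih =>
    have h3 := e_maxGen_step ht ih
    rw [show μ + 2*(j:ℂ) + 2 = μ + 2*((j:ℕ)+1 : ℕ) by push_cast; ring] at h3
    rw [pow_succ']
    simpa [Module.End.mul_apply] using h3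

theorem sl2_trace_nonneg (ht : IsSl2Triple h e f)
    (W : Submodule ℂ V) (hWh : ∀ x ∈ W, TH x ∈ W) (hWe : ∀ x ∈ W, TE x ∈ W) :
    ∃ n : ℕ, LinearMap.trace ℂ W ((TH).restrict hWh) = (n : ℂ) := by
  classical
  set H' : Module.End ℂ W := (TH).restrict hWh with hH'
  set N : ℂ → Submodule ℂ W := H'.maxGenEigenspace with hN
  have hNindep := H'.independent_maxGenEigenspace
  have hNfin : {μ | N μ ≠ ⊥}.Finite := WellFoundedGT.finite_ne_bot_of_iSupIndep hNindep
  have hNtop : ⨆ μ, N μ = ⊤ := H'.iSup_maxGenEigenspace_eq_top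
  have hInternal : DirectSum.IsInternal N :=
    DirectSum.isInternal_submodule_of_iSupIndep_of_iSup_eq_top hNindep hNtop
  have hmaps : ∀ μ : ℂ, Set.MapsTo H' (N μ) (N μ) := fun μ =>
    Module.End.mapsTo_maxGenEigenspace_of_comm rfl μ
  have htr : LinearMap.trace ℂ W H' =
      ∑ μ ∈ hNfin.toFinset, LinearMap.trace ℂ (N μ) (H'.restrict (hmaps μ)) :=
    LinearMap.trace_eq_sum_trace_restrict' hInternal hNfin hmaps
  -- the trace of `H'` on each block
  have hblock : ∀ μ : ℂ, LinearMap.trace ℂ (N μ) (H'.restrict (hmaps μ)) =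
      μ * (Module.finrank ℂ (N μ) : ℂ) := by
    intro μ
    have hmaps2 : ∀ x ∈ N μ, (H' - algebraMap ℂ (Module.End ℂ W) μ) x ∈ N μ := fun x hx =>
      Module.End.mapsTo_maxGenEigenspace_of_comm
        (Algebra.mul_sub_algebraMap_commutes H' μ) μ hx
    have hnil := Module.End.isNilpotent_restrict_maxGenEigenspace_sub_algebraMap H' μ
      (fun x hx => hmaps2 x hx)
    have h0 : LinearMap.trace ℂ (N μ)
        ((H' - algebraMap ℂ (Module.End ℂ W) μ).restrict hmaps2) = 0 :=
      (LinearMap.isNilpotent_trace_of_isNilpotent hnil).eq_zero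
    have hsplit : H'.restrict (hmaps μ) =
        (H' - algebraMap ℂ (Module.End ℂ W) μ).restrict hmaps2
          + μ • (1 : Module.End ℂ (N μ)) := by
      refine LinearMap.ext fun x => Subtype.ext ?_
      simp [LinearMap.restrict_coe_apply, Module.algebraMap_end_apply, sub_add_cancel]
      rfl
    rw [hsplit, map_add, h0, zero_add, map_smul, LinearMap.trace_one, smul_eq_mul]
  -- identify the blocks with subspaces of V
  have hNW : ∀ μ : ℂ, Submodule.map W.subtype (N μ) = W ⊓ (TH).maxGenEigenspace μ := by
    intro μ
    rw [Submodule.inf_genEigenspace TH W hWh]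
  set d : ℂ → ℕ := fun μ => Module.finrank ℂ ↥(W ⊓ (TH).maxGenEigenspace μ) with hd'
  have hd : ∀ μ, d μ = Module.finrank ℂ (N μ) := by
    intro μ
    rw [hd']
    simp only
    rw [← hNW μ, Submodule.finrank_map_subtype_eq]
  have hbot : ∀ μ, N μ = ⊥ ↔ (W ⊓ (TH).maxGenEigenspace μ) = ⊥ := by
    intro μ
    rw [← hNW μ]
    constructor
    · intro h1; rw [h1, Submodule.map_bot]
    · intro h1
      rw [← Submodule.map_bot W.subtype] at h1
      exact Submodule.map_injective_of_injective W.injective_subtype h1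
  -- dimension inequality from injectivity of E^k
  have hmono : ∀ k : ℕ, d (-(k:ℂ)) ≤ d ((k:ℕ):ℂ) := by
    intro k
    have hWek : ∀ (j : ℕ), ∀ x ∈ W, (TE^j) x ∈ W := by
      intro j
      induction j with
      | zero => intro x hx; simpa using hx
      | succ j ih =>
        intro x hx
        rw [pow_succ']
        exact hWe _ (ih x hx)
    have hmapk : ∀ x ∈ (W ⊓ (TH).maxGenEigenspace (-(k:ℂ))),
        (TE^k) x ∈ (W ⊓ (TH).maxGenEigenspace ((k:ℕ):ℂ)) := by
      intro x hx
      obtain ⟨hx1, hx2⟩ := Submodule.mem_inf.mp hx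
      refine Submodule.mem_inf.mpr ⟨hWek k x hx1, ?_⟩
      have h3 := e_pow_maxGen ht k hx2
      rw [show -(k:ℂ) + 2*k = ((k:ℕ):ℂ) by ring] at h3
      exact h3
    have hginj : Function.Injective ((TE^k).restrict hmapk) := by
      rw [injective_iff_map_eq_zero]
      intro a ha
      have ha' : (TE^k) (a : V) = 0 := by
        have := congrArg Subtype.val ha
        rwa [LinearMap.restrict_coe_apply] at this
      have := inj_pow_e ht k (Submodule.mem_inf.mp a.2).2 ha'
      exact Subtype.ext this
    exact LinearMap.finrank_le_finrank_of_injective hginj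
  -- arithmetic endgame
  set S : Finset ℂ := hNfin.toFinset with hS
  have htr2 : LinearMap.trace ℂ W H' = ∑ μ ∈ S, μ * (d μ : ℂ) := by
    rw [htr]
    exact Finset.sum_congr rfl fun μ _ => by rw [hblock μ, hd μ]
  have hint : ∀ μ ∈ S, ∃ z : ℤ, μ = (z:ℂ) := by
    intro μ hμ
    rw [hS, Set.Finite.mem_toFinset] at hμ
    have h1 : (TH).maxGenEigenspace μ ≠ ⊥ := by
      intro hcon
      apply hμ
      rw [hbot, hcon, inf_bot_eq]
    exact eigen_int ht h1
  set φ : ℂ → ℤ := fun μ => if hμ : ∃ z : ℤ, μ = (z:ℂ) then hμ.choose else 0 with hφ'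
  have hφ : ∀ μ, (∃ z : ℤ, μ = (z:ℂ)) → ((φ μ : ℤ) : ℂ) = μ := by
    intro μ hμ
    rw [hφ']
    simp only [dif_pos hμ]
    exact hμ.choose_spec.symm
  set T : Finset ℤ := S.image φ with hT
  set D : ℤ → ℕ := fun z => d ((z:ℤ):ℂ) with hD
  have hsum1 : ∑ μ ∈ S, μ * (d μ : ℂ) = ∑ z ∈ T, (z:ℂ) * (D z : ℂ) := by
    rw [hT, Finset.sum_image ?inj]
    case inj =>
      intro x hx y hy hxy
      rw [← hφ x (hint x hx), ← hφ y (hint y hy), hxy]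
    refine Finset.sum_congr rfl fun μ hμ => ?_
    rw [hD]
    simp only
    rw [hφ μ (hint μ hμ)]
  have hsupp : ∀ z : ℤ, D z ≠ 0 → z ∈ T := by
    intro z hz
    have h1 : (W ⊓ (TH).maxGenEigenspace ((z:ℂ))) ≠ ⊥ := by
      intro hcon
      apply hz
      show Module.finrank ℂ ↥(W ⊓ (TH).maxGenEigenspace ((z:ℂ))) = 0
      rw [hcon]
      exact finrank_bot ℂ V
    have h2 : ((z:ℤ):ℂ) ∈ S := by
      rw [hS, Set.Finite.mem_toFinset]
      intro hcon
      exact h1 ((hbot _).mp hcon)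
    refine Finset.mem_image.mpr ⟨(z:ℂ), h2, ?_⟩
    have h3 := hφ ((z:ℤ):ℂ) ⟨z, rfl⟩
    exact_mod_cast h3
  set T' : Finset ℤ := T ∪ T.image (fun z => -z) with hT'
  have hTT' : T ⊆ T' := Finset.subset_union_left
  have hsym : ∀ z ∈ T', -z ∈ T' := by
    intro z hz
    rcases Finset.mem_union.mp hz with h1 | h1
    · exact Finset.mem_union_right _ (Finset.mem_image.mpr ⟨z, h1, rfl⟩)
    · obtain ⟨w, hw, hwz⟩ := Finset.mem_image.mp h1
      refine Finset.mem_union_left _ ?_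
      rw [← hwz, neg_neg]
      exact hw
  have hsum2 : ∑ z ∈ T, (z:ℂ) * (D z : ℂ) = ∑ z ∈ T', (z:ℂ) * (D z : ℂ) := by
    refine Finset.sum_subset hTT' fun z _ hzT => ?_
    have : D z = 0 := by
      by_contra hcon
      exact hzT (hsupp z hcon)
    rw [this]
    simp
  set m : ℤ := ∑ z ∈ T', z * (D z : ℤ) with hm
  have htrm : LinearMap.trace ℂ W H' = (m:ℂ) := by
    rw [htr2, hsum1, hsum2, hm]
    push_cast
    rfl
  have hm2 : m = ∑ z ∈ T', (-z) * (D (-z) : ℤ) := by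
    rw [hm]
    refine Finset.sum_equiv (Equiv.neg ℤ) (fun z => ?_) (fun z hz => ?_)
    · constructor
      · intro hz; exact hsym z hz
      · intro hz; have := hsym _ hz; rwa [Equiv.neg_apply, neg_neg] at this
    · rw [Equiv.neg_apply, neg_neg]
  have hm0 : 0 ≤ m := by
    have h2m : m + m = ∑ z ∈ T', (z * (D z : ℤ) + (-z) * (D (-z) : ℤ)) := by
      rw [Finset.sum_add_distrib, ← hm, ← hm2]
    have hterm : ∀ z ∈ T', 0 ≤ z * (D z : ℤ) + (-z) * (D (-z) : ℤ) := by
      intro z _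
      rcases le_or_gt 0 z with hz | hz
      · have hle : D (-z) ≤ D z := by
          have h4 := hmono z.toNat
          rw [show ((z.toNat : ℕ) : ℂ) = ((z:ℤ):ℂ) by
            rw [← Int.cast_natCast, Int.toNat_of_nonneg hz]] at h4
          rw [show (-((z:ℤ):ℂ)) = ((-z : ℤ) : ℂ) by push_cast; ring] at h4
          exact h4
        have : ((D (-z) : ℤ)) ≤ (D z : ℤ) := by exact_mod_cast hle
        nlinarith
      · have hle : D z ≤ D (-z) := by
          have h4 := hmono (-z).toNat
          rw [show (((-z).toNat : ℕ) : ℂ) = ((-z:ℤ):ℂ) by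
            rw [← Int.cast_natCast, Int.toNat_of_nonneg (by omega)]] at h4
          rw [show (-((-z:ℤ):ℂ)) = ((z : ℤ) : ℂ) by push_cast; ring] at h4
          exact h4
        have : ((D z : ℤ)) ≤ (D (-z) : ℤ) := by exact_mod_cast hle
        nlinarith
    have := Finset.sum_nonneg hterm
    rw [← h2m] at this
    omega
  refine ⟨m.toNat, ?_⟩
  rw [htrm]
  rw [← Int.toNat_of_nonneg hm0]
  push_cast
  rfl

end Count


/-- Let `𝔤` be a finite-dimensional semisimple complex Lie algebra (semisimplicity
being expressed by the nondegeneracy of the Killing form, `IsKilling`), `𝔥` a Cartan subalgebra,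
`α` a root with coroot `coroot α`, and `V` a finite-dimensional `𝔤`-module.  If `W ⊆ V` is an
`𝔥`-invariant subspace with `𝔤_α · W ⊆ W`, then the trace of the action of the coroot of `α`
on `W` (which equals `Σ_β dim(W ∩ V_β)·β(h_α)`) is a nonnegative integer. -/
theorem trace_coroot_nonneg
    {𝔤 : Type*} [LieRing 𝔤] [LieAlgebra ℂ 𝔤] [FiniteDimensional ℂ 𝔤]
    [LieAlgebra.IsKilling ℂ 𝔤]
    (𝔥 : LieSubalgebra ℂ 𝔤) [𝔥.IsCartanSubalgebra]
    (α : LieModule.Weight ℂ 𝔥 𝔤) (hα : α.IsNonZero)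
    {V : Type*} [AddCommGroup V] [Module ℂ V] [LieRingModule 𝔤 V] [LieModule ℂ 𝔤 V]
    [FiniteDimensional ℂ V]
    (W : Submodule ℂ V)
    (hW𝔥 : ∀ (H : 𝔥) (w : V), w ∈ W → (LieModule.toEnd ℂ 𝔤 V (H : 𝔤)) w ∈ W)
    (hWα : ∀ x ∈ rootSpace 𝔥 ⇑α, ∀ w ∈ W, ⁅x, w⁆ ∈ W) :
    ∃ n : ℕ,
      LinearMap.trace ℂ W
        ((LieModule.toEnd ℂ 𝔤 V ((coroot α : 𝔥) : 𝔤)).restrict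
          (fun w hw => hW𝔥 (coroot α) w hw)) = (n : ℂ) := by
  obtain ⟨h, e, f, ht, heα, hfα⟩ := exists_isSl2Triple_of_weight_isNonZero hα
  have hh : h = ((coroot α : 𝔥) : 𝔤) := ht.h_eq_coroot hα heα hfα
  subst hh
  exact sl2_trace_nonneg ht W (fun x hx => hW𝔥 (coroot α) x hx)
    (fun x hx => by
      simpa only [LieModule.toEnd_apply_apply] using hWα e heα x hx)
end

section
/- Let 𝔤 be a finite-dimensional complex Lie algebra, 𝔤' ⊆ 𝔤 a semisimple Lie subalgebra, 𝔥' a Cartan subalgebra of 𝔤', and α a root of (𝔤',𝔥') with coroot h_α ∈ 𝔥' and root spaces 𝔤'_α, 𝔤'_{−α} ⊆ 𝔤'. Regard 𝔤 as a 𝔤'-module via the adjoint action. Let 𝔲 ⊆ 𝔤 be an 𝔥'-invariant subspace such that ⁅𝔤'_α, 𝔲⁆ ⊆ 𝔲, 𝔤'_α ⊆ 𝔲 and 𝔤'_{−α} ∩ 𝔲 = 0. Then the trace of ad(h_α) acting on 𝔲 is a strictly positive integer; equivalently, writing ρ_𝔲 ∈ (𝔥')* for half the sum of the 𝔥'-weights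 of 𝔲 counted with multiplicity, one has ρ_𝔲(h_α) > 0. (Applied with 𝔤' = 𝔤 and 𝔲 the nilradical of a parabolic subalgebra this gives the paper's inequality (ρ_𝔲, α) > 0 for all α ∈ Δ(𝔲,𝔱), and applied to a weakly 𝔤'-compatible parabolic it gives (ρ_𝔲|_{𝔱'}, α) > 0 for all α ∈ Δ(𝔲', 𝔱').) -/
open Module LinearMap Set

namespace Sl2Aux

attribute [local instance 100] LieRing.ofAssociativeRing

universe u

variable {V : Type u} [AddCommGroup V] [Module ℂ V]

lemma comm_pow {H X : Module.End ℂ V} {c : ℂ} (hX : H * X - X * H = c • X) (μ : ℂ) (k : ℕ) :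
    (H - (μ + c) • 1) ^ k * X = X * (H - μ • 1) ^ k := by
  have hcomm : (H - (μ + c) • 1) * X = X * (H - μ • 1) := by
    have h1 : H * X = X * H + c • X := by
      rw [← hX]; abel
    simp only [sub_mul, mul_sub, h1]
    simp only [smul_mul_assoc, one_mul, mul_smul_comm, mul_one]
    rw [add_smul]
    abel
  induction k with
  | zero => simp
  | succ k ih => rw [pow_succ, pow_succ, mul_assoc, hcomm, ← mul_assoc, ih, mul_assoc]

lemma shift {H X : Module.End ℂ V} {c : ℂ} (hX : H * X - X * H = c • X) (μ : ℂ) :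
    ∀ v ∈ H.maxGenEigenspace μ, X v ∈ H.maxGenEigenspace (μ + c) := by
  intro v hv
  rw [Module.End.mem_maxGenEigenspace] at hv ⊢
  obtain ⟨k, hk⟩ := hv
  refine ⟨k, ?_⟩
  have h2 := congrArg (fun φ : Module.End ℂ V => φ v) (comm_pow hX μ k)
  simp only [Module.End.mul_apply] at h2
  rw [h2, hk, map_zero]

lemma exists_eigenvector {H : Module.End ℂ V} {μ : ℂ}
    (h : H.maxGenEigenspace μ ≠ ⊥) :
    ∃ m : V, m ≠ 0 ∧ H m = μ • m ∧ m ∈ H.maxGenEigenspace μ := by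
  obtain ⟨w, hw, hw0⟩ := Submodule.exists_mem_ne_zero_of_ne_bot h
  rw [Module.End.mem_maxGenEigenspace] at hw
  obtain ⟨k, hk⟩ := hw
  suffices h' : ∀ (k : ℕ) (w : V), w ≠ 0 → ((H - μ • 1) ^ k) w = 0 →
      ∃ m : V, m ≠ 0 ∧ (H - μ • 1) m = 0 by
    obtain ⟨m, hm0, hm⟩ := h' k w hw0 hk
    refine ⟨m, hm0, ?_, ?_⟩
    · have := hm
      rw [LinearMap.sub_apply, LinearMap.smul_apply, Module.End.one_apply, sub_eq_zero] at this
      exact this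
    · rw [Module.End.mem_maxGenEigenspace]
      exact ⟨1, by simpa using hm⟩
  intro k
  induction k with
  | zero => intro w hw0 hk; simp at hk; exact absurd hk hw0
  | succ k ih =>
    intro w hw0 hk
    rcases eq_or_ne (((H - μ • 1) ^ k) w) 0 with h0 | h0
    · exact ih w hw0 h0
    · refine ⟨((H - μ • 1) ^ k) w, h0, ?_⟩
      rw [← Module.End.mul_apply, ← pow_succ']
      exact hk

lemma pow_eigen {H : Module.End ℂ V} {x : V} {ν : ℂ} (hx : H x = ν • x) (μ : ℂ) (N : ℕ) :
    ((H - μ • 1) ^ N) x = (ν - μ) ^ N • x := by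
  induction N with
  | zero => simp
  | succ N ih =>
    have h1 : (H - μ • 1) x = (ν - μ) • x := by
      rw [LinearMap.sub_apply, LinearMap.smul_apply, Module.End.one_apply, hx, ← sub_smul]
    rw [pow_succ', Module.End.mul_apply, ih, map_smul, h1, smul_smul, ← pow_succ]

/-- Key sl₂ fact: `E^k` is injective on the generalized `(-k)`-eigenspace of `H`. -/
theorem epow_injective_aux :
    ∀ (fuel : ℕ) (V : Type u) (_ : AddCommGroup V), ∀ (_ : Module ℂ V)
      (_ : FiniteDimensional ℂ V),
      finrank ℂ V ≤ fuel →
      ∀ (E F H : Module.End ℂ V),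
        E * F - F * E = H → H * E - E * H = (2:ℂ) • E → H * F - F * H = -((2:ℂ) • F) →
        ∀ (k : ℕ), 0 < k → ∀ v ∈ H.maxGenEigenspace (-(k:ℂ)), (E ^ k) v = 0 → v = 0 := by
  intro fuel
  induction fuel using Nat.strong_induction_on with
  | _ fuel IH =>
  intro V _ _ _ hdim E F H hEF hHE hHF k hk v hv hEv
  by_contra hv0
  -- `H` is nonzero
  have hH0 : H ≠ 0 := by
    rintro rfl
    rw [Module.End.mem_maxGenEigenspace] at hv
    obtain ⟨N, hN⟩ := hv
    have h1 : ((0:Module.End ℂ V) - (-(k:ℂ)) • 1) ^ N = ((k:ℂ)) ^ N • 1 := by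
      rw [zero_sub, neg_smul, neg_neg, smul_pow, one_pow]
    rw [h1] at hN
    simp only [LinearMap.smul_apply, Module.End.one_apply, smul_eq_zero] at hN
    rcases hN with h | h
    · exact pow_ne_zero N (Nat.cast_ne_zero.mpr hk.ne') h
    · exact hv0 h
  have t : IsSl2Triple H E F := by
    refine ⟨hH0, ?_, ?_, ?_⟩
    · rw [Ring.lie_def, hEF]
    · rw [Ring.lie_def, hHE, two_smul, two_smul]
    · rw [Ring.lie_def, hHF, two_smul, two_smul]
  -- climb to the top of the generalized eigenvalue chain
  set μ0 : ℂ := -(k:ℂ) with hμ0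
  have hne : H.maxGenEigenspace μ0 ≠ ⊥ := by
    intro hbot
    rw [hbot, Submodule.mem_bot] at hv
    exact hv0 hv
  have hfin : {μ : ℂ | H.maxGenEigenspace μ ≠ ⊥}.Finite :=
    WellFoundedGT.finite_ne_bot_of_iSupIndep H.independent_maxGenEigenspace
  have hinjr : Function.Injective (fun r : ℕ => μ0 + 2 * (r : ℂ)) := by
    intro a b hab
    simp only [add_right_inj] at hab
    field_simp at hab
    exact_mod_cast hab
  have hTfin : {r : ℕ | H.maxGenEigenspace (μ0 + 2 * (r:ℂ)) ≠ ⊥}.Finite := by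
    have : {r : ℕ | H.maxGenEigenspace (μ0 + 2 * (r:ℂ)) ≠ ⊥} =
        (fun r : ℕ => μ0 + 2 * (r : ℂ)) ⁻¹' {μ : ℂ | H.maxGenEigenspace μ ≠ ⊥} := rfl
    rw [this]
    exact hfin.preimage hinjr.injOn
  have hT0 : (0:ℕ) ∈ hTfin.toFinset := by
    simp only [Set.Finite.mem_toFinset, Set.mem_setOf_eq]
    simpa using hne
  set r : ℕ := hTfin.toFinset.max' ⟨0, hT0⟩ with hr_def
  have hr : H.maxGenEigenspace (μ0 + 2 * (r:ℂ)) ≠ ⊥ := by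
    have := hTfin.toFinset.max'_mem ⟨0, hT0⟩
    simpa only [Set.Finite.mem_toFinset, Set.mem_setOf_eq] using this
  have hrtop : H.maxGenEigenspace (μ0 + 2 * ((r:ℂ) + 1)) = ⊥ := by
    by_contra hcon
    have hmem : (r + 1 : ℕ) ∈ hTfin.toFinset := by
      simp only [Set.Finite.mem_toFinset, Set.mem_setOf_eq]
      push_cast
      exact hcon
    have := hTfin.toFinset.le_max' _ hmem
    omega
  -- a primitive vector
  obtain ⟨m, hm0, hHm, hmmem⟩ := exists_eigenvector hr
  set ν : ℂ := μ0 + 2 * (r:ℂ) with hν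
  have hEm : E m = 0 := by
    have := shift hHE ν m hmmem
    rw [show ν + 2 = μ0 + 2 * ((r:ℂ) + 1) by ring] at this
    rw [hrtop, Submodule.mem_bot] at this
    exact this
  have P : t.HasPrimitiveVectorWith m ν :=
    ⟨hm0, by rw [Module.End.lie_apply]; exact hHm, by rw [Module.End.lie_apply]; exact hEm⟩
  obtain ⟨n, hn⟩ := P.exists_nat
  -- the string through the primitive vector
  have hTE : (LieModule.toEnd ℂ (Module.End ℂ V) V) F = F := by
    rw [LieModule.toEnd_module_end]; rfl
  set s : ℕ → V := fun i => (F ^ i) m with hs_def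
  have hHs : ∀ i : ℕ, H (s i) = ((n:ℂ) - 2 * i) • s i := by
    intro i
    have h1 := P.lie_h_pow_toEnd_f i
    rw [hTE, Module.End.lie_apply, hn] at h1
    exact h1
  have hEs : ∀ i : ℕ, E (s (i + 1)) = (((i:ℂ) + 1) * ((n:ℂ) - i)) • s i := by
    intro i
    have h1 := P.lie_e_pow_succ_toEnd_f i
    rw [hTE, Module.End.lie_apply, hn] at h1
    exact h1
  have hs0 : s 0 = m := by simp [hs_def]
  have hEs0 : E (s 0) = 0 := by rw [hs0]; exact hEm
  have hsne : ∀ i : ℕ, i ≤ n → s i ≠ 0 := by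
    intro i hi
    have h1 := P.pow_toEnd_f_ne_zero_of_eq_nat hn hi
    rwa [hTE] at h1
  have hstop : s (n + 1) = 0 := by
    have h1 := P.pow_toEnd_f_eq_zero_of_eq_nat hn
    rwa [hTE] at h1
  have hFs : ∀ i : ℕ, F (s i) = s (i + 1) := by
    intro i
    simp only [hs_def, pow_succ', Module.End.mul_apply]
  -- linear independence of the string
  have hlin : LinearIndependent ℂ (fun i : Fin (n + 1) => s i) := by
    refine Module.End.eigenvectors_linearIndependent' H
      (fun i : Fin (n + 1) => (n:ℂ) - 2 * (i:ℕ)) ?_ _ ?_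
    · intro a b hab
      have h2 : ((a:ℕ):ℂ) = ((b:ℕ):ℂ) := by
        dsimp at hab
        linear_combination -hab / 2
      have : (a : ℕ) = b := by exact_mod_cast h2
      exact Fin.ext this
    · intro i
      exact ⟨Module.End.mem_eigenspace_iff.mpr (hHs i), hsne i (by omega)⟩
  -- the string submodule
  set S : Submodule ℂ V := Submodule.span ℂ (Set.range fun i : Fin (n + 1) => s i) with hS_def
  have hgen : ∀ i : ℕ, i ≤ n → s i ∈ S := by
    intro i hi
    exact Submodule.subset_span ⟨⟨i, by omega⟩, rfl⟩
  have hSstable : ∀ (X : Module.End ℂ V), (∀ i : Fin (n+1), X (s (i:ℕ)) ∈ S) →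
      ∀ x ∈ S, X x ∈ S := by
    intro X hX x hx
    have : S ≤ S.comap X := by
      rw [hS_def, Submodule.span_le]
      rintro _ ⟨i, rfl⟩
      exact hX i
    exact this hx
  have hSE : ∀ x ∈ S, E x ∈ S := by
    refine hSstable E ?_
    rintro ⟨iv, hiv⟩
    dsimp only
    match iv with
    | 0 => rw [hEs0]; exact S.zero_mem
    | j + 1 =>
      rw [hEs j]
      exact S.smul_mem _ (hgen j (by omega))
  have hSF : ∀ x ∈ S, F x ∈ S := by
    refine hSstable F ?_
    rintro ⟨iv, hiv⟩
    dsimp only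
    rw [hFs iv]
    rcases Nat.lt_or_ge iv n with h | h
    · exact hgen (iv + 1) (by omega)
    · have hivn : iv = n := by omega
      rw [hivn, hstop]
      exact S.zero_mem
  have hSH : ∀ x ∈ S, H x ∈ S := by
    refine hSstable H ?_
    rintro ⟨iv, hiv⟩
    dsimp only
    rw [hHs iv]
    exact S.smul_mem _ (hgen iv (by omega))
  have hmS : m ∈ S := by rw [← hs0]; exact hgen 0 (by omega)
  have hSbot : S ≠ ⊥ := by
    intro hbot
    rw [hbot, Submodule.mem_bot] at hmS
    exact hm0 hmS
  -- pass to the quotient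
  set E' : Module.End ℂ (V ⧸ S) := S.mapQ S E (fun x hx => hSE x hx) with hE'_def
  set F' : Module.End ℂ (V ⧸ S) := S.mapQ S F (fun x hx => hSF x hx) with hF'_def
  set H' : Module.End ℂ (V ⧸ S) := S.mapQ S H (fun x hx => hSH x hx) with hH'_def
  have hEFp : ∀ x : V, E (F x) - F (E x) = H x := fun x => by
    have := congrArg (fun φ : Module.End ℂ V => φ x) hEF
    simpa using this
  have hHEp : ∀ x : V, H (E x) - E (H x) = (2:ℂ) • E x := fun x => by
    have := congrArg (fun φ : Module.End ℂ V => φ x) hHE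
    simpa using this
  have hHFp : ∀ x : V, H (F x) - F (H x) = -((2:ℂ) • F x) := fun x => by
    have := congrArg (fun φ : Module.End ℂ V => φ x) hHF
    simpa using this
  have hEF' : E' * F' - F' * E' = H' := by
    refine Submodule.linearMap_qext S ?_
    ext x
    simp only [LinearMap.comp_apply, Submodule.mkQ_apply, LinearMap.sub_apply,
      Module.End.mul_apply, Submodule.mapQ_apply, hE'_def, hF'_def, hH'_def]
    rw [← Submodule.Quotient.mk_sub, hEFp]
  have hHE' : H' * E' - E' * H' = (2:ℂ) • E' := by
    refine Submodule.linearMap_qext S ?_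
    ext x
    simp only [LinearMap.comp_apply, Submodule.mkQ_apply, LinearMap.sub_apply,
      Module.End.mul_apply, LinearMap.smul_apply, Submodule.mapQ_apply, hE'_def, hH'_def,
      ← Submodule.Quotient.mk_smul]
    rw [← Submodule.Quotient.mk_sub, hHEp]
  have hHF' : H' * F' - F' * H' = -((2:ℂ) • F') := by
    refine Submodule.linearMap_qext S ?_
    ext x
    simp only [LinearMap.comp_apply, Submodule.mkQ_apply, LinearMap.sub_apply, LinearMap.neg_apply,
      Module.End.mul_apply, LinearMap.smul_apply, Submodule.mapQ_apply, hF'_def, hH'_def,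
      ← Submodule.Quotient.mk_smul, ← Submodule.Quotient.mk_neg]
    rw [← Submodule.Quotient.mk_sub, hHFp]
  have hqH : ∀ (N : ℕ) (x : V), ((H' - μ0 • 1) ^ N) (S.mkQ x) = S.mkQ (((H - μ0 • 1) ^ N) x) := by
    intro N
    induction N with
    | zero => intro x; simp
    | succ N ih =>
      intro x
      rw [pow_succ', Module.End.mul_apply, ih, pow_succ', Module.End.mul_apply]
      simp only [LinearMap.sub_apply, LinearMap.smul_apply, Module.End.one_apply,
        Submodule.mkQ_apply, hH'_def, Submodule.mapQ_apply, ← Submodule.Quotient.mk_smul,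
        ← Submodule.Quotient.mk_sub]
  have hqE : ∀ (N : ℕ) (x : V), (E' ^ N) (S.mkQ x) = S.mkQ ((E ^ N) x) := by
    intro N
    induction N with
    | zero => intro x; simp
    | succ N ih =>
      intro x
      rw [pow_succ', Module.End.mul_apply, ih, pow_succ', Module.End.mul_apply, hE'_def,
        Submodule.mkQ_apply, Submodule.mapQ_apply]
      rfl
  -- apply the induction hypothesis to the quotient
  have hSpos : 0 < finrank ℂ S := by
    have : Nontrivial S := Submodule.nontrivial_iff_ne_bot.mpr hSbot
    exact finrank_pos
  have hQdim : finrank ℂ (V ⧸ S) < fuel := by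
    have h1 := Submodule.finrank_quotient_add_finrank S
    have h2 : finrank ℂ V ≤ fuel := hdim
    omega
  have hvq : S.mkQ v = 0 := by
    refine IH (finrank ℂ (V ⧸ S)) hQdim (V ⧸ S) inferInstance inferInstance inferInstance le_rfl E' F' H' hEF' hHE' hHF' k hk
      (S.mkQ v) ?_ ?_
    · rw [Module.End.mem_maxGenEigenspace] at hv ⊢
      obtain ⟨N, hN⟩ := hv
      refine ⟨N, ?_⟩
      show ((H' - μ0 • 1) ^ N) (S.mkQ v) = 0
      rw [hqH N v, hN, map_zero]
    · rw [hqE k v, hEv, map_zero]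
  have hvS : v ∈ S := by
    rwa [Submodule.mkQ_apply, Submodule.Quotient.mk_eq_zero] at hvq
  -- coordinates along the string
  rw [hS_def, Submodule.mem_span_range_iff_exists_fun] at hvS
  obtain ⟨c, hc⟩ := hvS
  rw [Module.End.mem_maxGenEigenspace] at hv
  obtain ⟨N, hN⟩ := hv
  have hcoord : ∀ i : Fin (n + 1), c i * ((n:ℂ) - 2 * (i:ℕ) + k) ^ N = 0 := by
    have hsum : ∑ i : Fin (n + 1), (c i * ((n:ℂ) - 2 * (i:ℕ) + k) ^ N) • s (i:ℕ) = 0 := by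
      have h1 : ((H - (-(k:ℂ)) • 1) ^ N) v = 0 := hN
      calc ∑ i : Fin (n + 1), (c i * ((n:ℂ) - 2 * (i:ℕ) + k) ^ N) • s (i:ℕ)
          = ∑ i : Fin (n + 1), c i • (((n:ℂ) - 2 * (i:ℕ) + k) ^ N • s (i:ℕ)) := by
            simp only [smul_smul]
        _ = ∑ i : Fin (n + 1), c i • (((H - (-(k:ℂ)) • 1) ^ N) (s (i:ℕ))) := by
            refine Finset.sum_congr rfl fun i _ => ?_
            rw [pow_eigen (hHs (i:ℕ)) (-(k:ℂ)) N]
            ring_nf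
        _ = ((H - (-(k:ℂ)) • 1) ^ N) (∑ i : Fin (n + 1), c i • s (i:ℕ)) := by
            rw [map_sum]
            refine Finset.sum_congr rfl fun i _ => ?_
            rw [map_smul]
        _ = 0 := by rw [hc]; exact h1
    exact fun i => linearIndependent_iff'.mp hlin Finset.univ _ hsum i (Finset.mem_univ i)
  -- all coefficients vanish except possibly at the special index
  rcases eq_or_ne N 0 with hN0 | hN0
  · apply hv0
    rw [← hc]
    refine Finset.sum_eq_zero fun i _ => ?_
    have := hcoord i
    rw [hN0, pow_zero, mul_one] at this
    rw [this, zero_smul]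
  have hzero : ∀ i : Fin (n + 1), c i ≠ 0 → 2 * (i:ℕ) = n + k := by
    intro i hci
    have h1 := hcoord i
    rcases mul_eq_zero.mp h1 with h | h
    · exact absurd h hci
    · have h2 : (n:ℂ) - 2 * (i:ℕ) + k = 0 := pow_eq_zero_iff hN0 |>.mp h
      have h3 : ((2 * (i:ℕ) : ℕ) : ℂ) = ((n + k : ℕ) : ℂ) := by push_cast; linear_combination -h2
      exact_mod_cast h3
  by_cases hall : ∀ i : Fin (n + 1), c i = 0
  · apply hv0
    rw [← hc]
    exact Finset.sum_eq_zero fun i _ => by rw [hall i, zero_smul]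
  push_neg at hall
  obtain ⟨j, hcj⟩ := hall
  have hj2 : 2 * (j:ℕ) = n + k := hzero j hcj
  have hkj : k ≤ (j:ℕ) := by have := j.is_le; omega
  have hjn : (j:ℕ) ≤ n := by omega
  have hvj : v = c j • s (j:ℕ) := by
    rw [← hc]
    refine Finset.sum_eq_single_of_mem j (Finset.mem_univ j) fun i _ hij => ?_
    rcases eq_or_ne (c i) 0 with h | h
    · rw [h, zero_smul]
    · exfalso
      have := hzero i h
      have : (i:ℕ) = (j:ℕ) := by omega
      exact hij (Fin.ext this)
  -- the E-power formula on the string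
  have hEpow : ∀ (a i : ℕ), a ≤ i → i ≤ n → ∃ cc : ℂ, cc ≠ 0 ∧ (E ^ a) (s i) = cc • s (i - a) := by
    intro a
    induction a with
    | zero => intro i _ _; exact ⟨1, one_ne_zero, by simp⟩
    | succ a ih =>
      intro i hai hin
      obtain ⟨i', rfl⟩ : ∃ i', i = i' + 1 := ⟨i - 1, by omega⟩
      obtain ⟨cc, hcc0, hcc⟩ := ih i' (by omega) (by omega)
      refine ⟨(((i':ℂ) + 1) * ((n:ℂ) - i')) * cc, ?_, ?_⟩
      · refine mul_ne_zero (mul_ne_zero ?_ ?_) hcc0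
        · intro hcon
          norm_cast at hcon
        · rw [sub_ne_zero]
          intro hcon
          have : (n:ℕ) = i' := by exact_mod_cast hcon
          omega
      · have hidx : i' + 1 - (a + 1) = i' - a := by omega
        rw [pow_succ, Module.End.mul_apply, hEs i', map_smul, hcc, smul_smul, hidx]
  obtain ⟨cc, hcc0, hcc⟩ := hEpow k (j:ℕ) hkj hjn
  have hfinal : (E ^ k) v = (c j * cc) • s ((j:ℕ) - k) := by
    rw [hvj, map_smul, hcc, smul_smul]
  rw [hEv] at hfinal
  have hsne' : s ((j:ℕ) - k) ≠ 0 := hsne _ (by omega)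
  rcases smul_eq_zero.mp hfinal.symm with h | h
  · rcases mul_eq_zero.mp h with h' | h'
    · exact hcj h'
    · exact hcc0 h'
  · exact hsne' h

/-- Wrapper for `epow_injective_aux`. -/
theorem epow_injective {V : Type u} [AddCommGroup V] [Module ℂ V] [FiniteDimensional ℂ V]
    {E F H : Module.End ℂ V}
    (hEF : E * F - F * E = H) (hHE : H * E - E * H = (2:ℂ) • E)
    (hHF : H * F - F * H = -((2:ℂ) • F)) {k : ℕ} (hk : 0 < k) {v : V}
    (hv : v ∈ H.maxGenEigenspace (-(k:ℂ))) (hEv : (E ^ k) v = 0) : v = 0 :=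
  epow_injective_aux (finrank ℂ V) V inferInstance inferInstance inferInstance le_rfl
    E F H hEF hHE hHF k hk v hv hEv

/-- Every generalized eigenvalue of `H` is an integer. -/
theorem eigenvalue_int {V : Type u} [AddCommGroup V] [Module ℂ V] [FiniteDimensional ℂ V]
    {E F H : Module.End ℂ V}
    (hEF : E * F - F * E = H) (hHE : H * E - E * H = (2:ℂ) • E)
    (hHF : H * F - F * H = -((2:ℂ) • F)) {μ : ℂ}
    (hμ : H.maxGenEigenspace μ ≠ ⊥) : ∃ z : ℤ, μ = (z : ℂ) := by
  by_cases hH0 : H = 0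
  · refine ⟨0, ?_⟩
    obtain ⟨w, hw, hw0⟩ := Submodule.exists_mem_ne_zero_of_ne_bot hμ
    rw [Module.End.mem_maxGenEigenspace] at hw
    obtain ⟨N, hN⟩ := hw
    rw [hH0] at hN
    have h1 : ((0:Module.End ℂ V) - μ • 1) ^ N = (-μ) ^ N • 1 := by
      rw [zero_sub, ← neg_smul, smul_pow, one_pow]
    rw [h1] at hN
    simp only [LinearMap.smul_apply, Module.End.one_apply, smul_eq_zero] at hN
    rcases hN with h | h
    · rcases pow_eq_zero_iff'.mp h with ⟨h2, -⟩
      rw [neg_eq_zero] at h2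
      exact h2.symm ▸ by norm_num
    · exact absurd h hw0
  · have t : IsSl2Triple H E F := by
      refine ⟨hH0, ?_, ?_, ?_⟩
      · rw [Ring.lie_def, hEF]
      · rw [Ring.lie_def, hHE, two_smul, two_smul]
      · rw [Ring.lie_def, hHF, two_smul, two_smul]
    have hfin : {ν : ℂ | H.maxGenEigenspace ν ≠ ⊥}.Finite :=
      WellFoundedGT.finite_ne_bot_of_iSupIndep H.independent_maxGenEigenspace
    have hinjr : Function.Injective (fun r : ℕ => μ + 2 * (r : ℂ)) := by
      intro a b hab
      simp only [add_right_inj] at hab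
      field_simp at hab
      exact_mod_cast hab
    have hTfin : {r : ℕ | H.maxGenEigenspace (μ + 2 * (r:ℂ)) ≠ ⊥}.Finite := by
      have : {r : ℕ | H.maxGenEigenspace (μ + 2 * (r:ℂ)) ≠ ⊥} =
          (fun r : ℕ => μ + 2 * (r : ℂ)) ⁻¹' {ν : ℂ | H.maxGenEigenspace ν ≠ ⊥} := rfl
      rw [this]
      exact hfin.preimage hinjr.injOn
    have hT0 : (0:ℕ) ∈ hTfin.toFinset := by
      simp only [Set.Finite.mem_toFinset, Set.mem_setOf_eq]
      simpa using hμ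
    set r : ℕ := hTfin.toFinset.max' ⟨0, hT0⟩ with hr_def
    have hr : H.maxGenEigenspace (μ + 2 * (r:ℂ)) ≠ ⊥ := by
      have := hTfin.toFinset.max'_mem ⟨0, hT0⟩
      simpa only [Set.Finite.mem_toFinset, Set.mem_setOf_eq] using this
    have hrtop : H.maxGenEigenspace (μ + 2 * ((r:ℂ) + 1)) = ⊥ := by
      by_contra hcon
      have hmem : (r + 1 : ℕ) ∈ hTfin.toFinset := by
        simp only [Set.Finite.mem_toFinset, Set.mem_setOf_eq]
        push_cast
        exact hcon
      have := hTfin.toFinset.le_max' _ hmem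
      omega
    obtain ⟨m, hm0, hHm, hmmem⟩ := exists_eigenvector hr
    have hEm : E m = 0 := by
      have := shift hHE (μ + 2 * (r:ℂ)) m hmmem
      rw [show μ + 2 * (r:ℂ) + 2 = μ + 2 * ((r:ℂ) + 1) by ring] at this
      rw [hrtop, Submodule.mem_bot] at this
      exact this
    have P : t.HasPrimitiveVectorWith m (μ + 2 * (r:ℂ)) :=
      ⟨hm0, by rw [Module.End.lie_apply]; exact hHm, by rw [Module.End.lie_apply]; exact hEm⟩
    obtain ⟨n, hn⟩ := P.exists_nat
    refine ⟨(n : ℤ) - 2 * r, ?_⟩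
    push_cast
    linear_combination hn

lemma sum_Icc_symm (Fz : ℤ → ℤ) (B : ℕ) :
    ∑ z ∈ Finset.Icc (-(B:ℤ)) B, Fz z
      = (∑ k ∈ Finset.Icc (1:ℤ) B, (Fz k + Fz (-k))) + Fz 0 := by
  induction B with
  | zero => simp
  | succ B ih =>
    have h1 : Finset.Icc (-(B+1:ℕ):ℤ) ((B+1:ℕ):ℤ)
        = insert (-(B+1:ℕ):ℤ) (insert ((B+1:ℕ):ℤ) (Finset.Icc (-(B:ℕ):ℤ) (B:ℕ))) := by
      ext z
      simp only [Finset.mem_Icc, Finset.mem_insert]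
      push_cast
      omega
    have h2 : Finset.Icc (1:ℤ) ((B+1:ℕ):ℤ) = insert ((B+1:ℕ):ℤ) (Finset.Icc (1:ℤ) (B:ℕ)) := by
      ext z
      simp only [Finset.mem_Icc, Finset.mem_insert]
      push_cast
      omega
    have hn1 : (-(B+1:ℕ):ℤ) ∉ insert ((B+1:ℕ):ℤ) (Finset.Icc (-(B:ℕ):ℤ) (B:ℕ)) := by
      simp only [Finset.mem_insert, Finset.mem_Icc]
      push_cast
      omega
    have hn2 : ((B+1:ℕ):ℤ) ∉ Finset.Icc (-(B:ℕ):ℤ) (B:ℕ) := by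
      simp only [Finset.mem_Icc]
      push_cast
      omega
    have hn3 : ((B+1:ℕ):ℤ) ∉ Finset.Icc (1:ℤ) (B:ℕ) := by
      simp only [Finset.mem_Icc]
      push_cast
      omega
    rw [h1, Finset.sum_insert hn1, Finset.sum_insert hn2, h2, Finset.sum_insert hn3, ih]
    ring

lemma int_sum_pos (g : ℤ → ℕ) (s' : Finset ℤ) (hsupp : ∀ z : ℤ, z ∉ s' → g z = 0)
    (hA : ∀ z : ℤ, z < 0 → g z ≤ g (-z)) (hB : g (-2) + 1 ≤ g 2) :
    0 < ∑ z ∈ s', z * (g z : ℤ) := by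
  set B : ℕ := 2 ⊔ s'.sup (fun z => z.natAbs) with hB_def
  have hB2 : 2 ≤ B := le_max_left _ _
  have hsub : s' ⊆ Finset.Icc (-(B:ℤ)) B := by
    intro z hz
    have h1 : z.natAbs ≤ s'.sup (fun z => z.natAbs) := Finset.le_sup hz
    have h2 : z.natAbs ≤ B := le_trans h1 (le_max_right _ _)
    rw [Finset.mem_Icc]
    omega
  have hsum : ∑ z ∈ s', z * (g z : ℤ) = ∑ z ∈ Finset.Icc (-(B:ℤ)) B, z * (g z : ℤ) := by
    refine Finset.sum_subset hsub fun z _ hzs => ?_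
    rw [hsupp z hzs]
    simp
  rw [hsum, sum_Icc_symm (fun z => z * (g z : ℤ)) B]
  have hterm : ∀ k : ℤ, 1 ≤ k → k * (g k : ℤ) + (-k) * (g (-k) : ℤ)
      = k * ((g k : ℤ) - (g (-k) : ℤ)) := by intro k _; ring
  have hnonneg : ∀ k ∈ Finset.Icc (1:ℤ) (B:ℤ),
      0 ≤ k * (g k : ℤ) + (-k) * (g (-k) : ℤ) := by
    intro k hk
    rw [Finset.mem_Icc] at hk
    rw [hterm k hk.1]
    have h1 : g (-k) ≤ g k := by
      have := hA (-k) (by omega)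
      simpa using this
    have h2 : (0:ℤ) ≤ (g k : ℤ) - (g (-k) : ℤ) := by
      have : (g (-k) : ℤ) ≤ (g k : ℤ) := by exact_mod_cast h1
      omega
    exact mul_nonneg (by omega) h2
  have h2mem : (2:ℤ) ∈ Finset.Icc (1:ℤ) (B:ℤ) := by
    rw [Finset.mem_Icc]
    omega
  have hpos : 0 < ∑ k ∈ Finset.Icc (1:ℤ) (B:ℤ), (k * (g k : ℤ) + (-k) * (g (-k) : ℤ)) := by
    refine Finset.sum_pos' hnonneg ⟨2, h2mem, ?_⟩
    rw [hterm 2 (by norm_num)]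
    have : (g (-2) : ℤ) + 1 ≤ (g 2 : ℤ) := by exact_mod_cast hB
    omega
  simpa using hpos

set_option synthInstance.maxHeartbeats 1000000 in
set_option maxHeartbeats 2000000 in
theorem core_trace {V : Type u} [AddCommGroup V] [Module ℂ V] [FiniteDimensional ℂ V]
    (E F H : Module.End ℂ V) (hEF : E * F - F * E = H) (hHE : H * E - E * H = (2:ℂ) • E)
    (hHF : H * F - F * H = -((2:ℂ) • F))
    (U : Submodule ℂ V) (hUH : ∀ x ∈ U, H x ∈ U) (hUE : ∀ x ∈ U, E x ∈ U)
    (e f : V) (he : e ∈ U) (hf : f ∉ U) (he0 : e ≠ 0)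
    (hHe : H e = (2:ℂ) • e) (hHf : H f = (-2:ℂ) • f) (hE2f : (E ^ 2) f = (-2:ℂ) • e) :
    ∃ n : ℕ, 0 < n ∧ LinearMap.trace ℂ U (H.restrict hUH) = (n : ℂ) := by
  classical
  set HU : Module.End ℂ U := H.restrict hUH with hHU_def
  set EU : Module.End ℂ U := E.restrict hUE with hEU_def
  -- transfer of generalized eigenspaces between `U` and `V`
  have hHUpow : ∀ (μ : ℂ) (N : ℕ) (x : U),
      (((HU - μ • 1) ^ N) x : V) = ((H - μ • 1) ^ N) (x : V) := by
    intro μ N x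
    induction N generalizing x with
    | zero => simp
    | succ N ih =>
      rw [pow_succ', Module.End.mul_apply, pow_succ', Module.End.mul_apply, ← ih]
      set y := ((HU - μ • 1) ^ N) x
      show (((HU - μ • 1)) y : V) = (H - μ • 1) (y : V)
      simp only [LinearMap.sub_apply, LinearMap.smul_apply, Module.End.one_apply,
        Submodule.coe_sub, Submodule.coe_smul, hHU_def]
      rfl
  have hcorr : ∀ (μ : ℂ) (x : U),
      x ∈ HU.maxGenEigenspace μ ↔ (x : V) ∈ H.maxGenEigenspace μ := by
    intro μ x
    rw [Module.End.mem_maxGenEigenspace, Module.End.mem_maxGenEigenspace]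
    constructor
    · rintro ⟨N, hN⟩
      exact ⟨N, by rw [← hHUpow μ N x, hN, Submodule.coe_zero]⟩
    · rintro ⟨N, hN⟩
      refine ⟨N, ?_⟩
      have : (((HU - μ • 1) ^ N) x : V) = 0 := by rw [hHUpow μ N x, hN]
      exact Subtype.ext this
  have hEUpow : ∀ (N : ℕ) (x : U), ((EU ^ N) x : V) = (E ^ N) (x : V) := by
    intro N x
    induction N generalizing x with
    | zero => simp
    | succ N ih =>
      rw [pow_succ', Module.End.mul_apply, pow_succ', Module.End.mul_apply, ← ih]
      rfl
  -- iterated shift on the ambient space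
  have hshiftpow : ∀ (N : ℕ) (μ : ℂ) (v : V), v ∈ H.maxGenEigenspace μ →
      (E ^ N) v ∈ H.maxGenEigenspace (μ + 2 * N) := by
    intro N
    induction N with
    | zero => intro μ v hv; simpa using hv
    | succ N ih =>
      intro μ v hv
      have h1 := shift hHE (μ + 2 * N) _ (ih μ v hv)
      rw [pow_succ', Module.End.mul_apply,
        show μ + 2 * ((N+1:ℕ):ℂ) = μ + 2 * (N:ℂ) + 2 by push_cast; ring]
      exact h1
  -- the trace as a sum over generalized eigenspaces
  have hds : DirectSum.IsInternal (fun μ : ℂ => HU.maxGenEigenspace μ) :=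
    DirectSum.isInternal_submodule_of_iSupIndep_of_iSup_eq_top
      HU.independent_maxGenEigenspace (Module.End.iSup_maxGenEigenspace_eq_top HU)
  have hfinspec : {μ : ℂ | HU.maxGenEigenspace μ ≠ ⊥}.Finite :=
    WellFoundedGT.finite_ne_bot_of_iSupIndep HU.independent_maxGenEigenspace
  have hmaps : ∀ μ : ℂ, Set.MapsTo HU (HU.maxGenEigenspace μ) (HU.maxGenEigenspace μ) :=
    fun μ => Module.End.mapsTo_maxGenEigenspace_of_comm rfl μ
  have htr : LinearMap.trace ℂ U HU
      = ∑ μ ∈ hfinspec.toFinset, LinearMap.trace ℂ _ (HU.restrict (hmaps μ)) :=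
    LinearMap.trace_eq_sum_trace_restrict' hds hfinspec hmaps
  set G : ℂ → ℕ := fun μ => finrank ℂ (HU.maxGenEigenspace μ) with hG_def
  have htrμ : ∀ μ : ℂ, LinearMap.trace ℂ _ (HU.restrict (hmaps μ)) = μ * (G μ : ℂ) := by
    intro μ
    have hnil := Module.End.isNilpotent_restrict_maxGenEigenspace_sub_algebraMap HU μ
    have hsplit : HU.restrict (hmaps μ)
        = (HU - algebraMap ℂ (Module.End ℂ U) μ).restrict
            (Module.End.mapsTo_maxGenEigenspace_of_comm
              (Algebra.mul_sub_algebraMap_commutes HU μ) μ) + μ • 1 := by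
      refine LinearMap.ext fun x => Subtype.ext ?_
      change (HU (x:U) : U) = ((HU - algebraMap ℂ (Module.End ℂ U) μ) (x:U) : U) + μ • (x:U)
      simp only [LinearMap.sub_apply, Module.algebraMap_end_apply]
      abel
    rw [hsplit, map_add]
    have h1 : LinearMap.trace ℂ _ ((HU - algebraMap ℂ (Module.End ℂ U) μ).restrict
        (Module.End.mapsTo_maxGenEigenspace_of_comm
          (Algebra.mul_sub_algebraMap_commutes HU μ) μ)) = 0 := by
      have := LinearMap.isNilpotent_trace_of_isNilpotent hnil
      exact this.eq_zero
    rw [h1, zero_add, map_smul, LinearMap.trace_one]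
    simp [hG_def]
  have htr2 : LinearMap.trace ℂ U HU = ∑ μ ∈ hfinspec.toFinset, μ * (G μ : ℂ) := by
    rw [htr]
    exact Finset.sum_congr rfl fun μ _ => htrμ μ
  -- all eigenvalues are integers
  have hint : ∀ μ ∈ hfinspec.toFinset, ∃ z : ℤ, μ = (z:ℂ) := by
    intro μ hμ
    rw [Set.Finite.mem_toFinset, Set.mem_setOf_eq] at hμ
    obtain ⟨x, hx, hx0⟩ := Submodule.exists_mem_ne_zero_of_ne_bot hμ
    have hxV : (x : V) ∈ H.maxGenEigenspace μ := (hcorr μ x).mp hx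
    have hxV0 : (x : V) ≠ 0 := fun hc => hx0 (Subtype.ext hc)
    have hne : H.maxGenEigenspace μ ≠ ⊥ := by
      intro hbot
      rw [hbot, Submodule.mem_bot] at hxV
      exact hxV0 hxV
    exact eigenvalue_int hEF hHE hHF hne
  -- reindex the sum over the integers
  set s' : Finset ℤ := hfinspec.toFinset.preimage (Int.cast : ℤ → ℂ)
    Int.cast_injective.injOn with hs'_def
  set g : ℤ → ℕ := fun z => G (z:ℂ) with hg_def
  have hreindex : ∑ μ ∈ hfinspec.toFinset, μ * (G μ : ℂ)
      = ∑ z ∈ s', (z:ℂ) * (g z : ℂ) := by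
    rw [hs'_def]
    refine (Finset.sum_preimage (Int.cast : ℤ → ℂ) hfinspec.toFinset _
      (fun μ => μ * (G μ : ℂ)) ?_).symm
    intro μ hμ hrange
    exfalso
    obtain ⟨z, hz⟩ := hint μ hμ
    exact hrange ⟨z, hz.symm⟩
  -- the generalized eigenspace maps needed for the inequalities
  have hmapsEk : ∀ (k : ℕ), 0 < k → ∀ x : U, x ∈ HU.maxGenEigenspace (-(k:ℂ)) →
      (EU ^ k) x ∈ HU.maxGenEigenspace ((k:ℂ)) := by
    intro k hk x hx
    rw [hcorr] at hx ⊢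
    rw [hEUpow]
    have := hshiftpow k (-(k:ℂ)) (x:V) hx
    rwa [show -(k:ℂ) + 2 * k = (k:ℂ) by ring] at this
  have hinjEk : ∀ (k : ℕ), 0 < k → ∀ x : U, x ∈ HU.maxGenEigenspace (-(k:ℂ)) →
      (EU ^ k) x = 0 → x = 0 := by
    intro k hk x hx hEx
    have h1 : (E ^ k) (x : V) = 0 := by
      rw [← hEUpow]
      rw [hEx, Submodule.coe_zero]
    have h2 : (x : V) ∈ H.maxGenEigenspace (-(k:ℂ)) := (hcorr _ x).mp hx
    exact Subtype.ext (epow_injective hEF hHE hHF hk h2 h1)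
  -- inequality (A): `g z ≤ g (-z)` for negative `z`
  have hA : ∀ z : ℤ, z < 0 → g z ≤ g (-z) := by
    intro z hz
    set k : ℕ := (-z).toNat with hk_def
    have hkz : (k:ℤ) = -z := Int.toNat_of_nonneg (by omega)
    have hk : 0 < k := by omega
    have hz' : z = -(k:ℤ) := by omega
    have hzk : ((z:ℤ):ℂ) = -(k:ℂ) := by rw [hz']; push_cast; ring
    have hzk' : ((-z:ℤ):ℂ) = (k:ℂ) := by rw [hz']; push_cast; ring
    have hspace1 : HU.maxGenEigenspace ((z:ℤ):ℂ) = HU.maxGenEigenspace (-(k:ℂ)) := by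
      rw [hzk]
    have hspace2 : HU.maxGenEigenspace ((-z:ℤ):ℂ) = HU.maxGenEigenspace ((k:ℂ)) := by
      rw [hzk']
    have hmapsto : ∀ x ∈ HU.maxGenEigenspace ((z:ℤ):ℂ),
        (EU ^ k) x ∈ HU.maxGenEigenspace ((-z:ℤ):ℂ) := by
      intro x hx
      rw [hspace1] at hx
      rw [hspace2]
      exact hmapsEk k hk x hx
    set φ := (EU ^ k).restrict hmapsto with hφ
    have hφinj : Function.Injective φ := by
      rw [← LinearMap.ker_eq_bot, LinearMap.ker_eq_bot']
      intro x hx0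
      have h1 : (EU ^ k) (x : U) = 0 := by
        have := congrArg (Subtype.val) hx0
        simpa [hφ, LinearMap.restrict_coe_apply] using this
      have h2 : (x : U) ∈ HU.maxGenEigenspace (-(k:ℂ)) := hspace1 ▸ x.2
      exact Subtype.ext (hinjEk k hk (x : U) h2 h1)
    exact LinearMap.finrank_le_finrank_of_injective hφinj
  -- inequality (B): strictness at `2`
  have heU : (⟨e, he⟩ : U) ∈ HU.maxGenEigenspace (((2:ℤ)):ℂ) := by
    rw [hcorr]
    rw [Module.End.mem_maxGenEigenspace]
    refine ⟨1, ?_⟩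
    simp only [pow_one, LinearMap.sub_apply, LinearMap.smul_apply, Module.End.one_apply]
    rw [hHe]
    push_cast
    rw [sub_self]
  have hfV : f ∈ H.maxGenEigenspace (-(2:ℂ)) := by
    rw [Module.End.mem_maxGenEigenspace]
    refine ⟨1, ?_⟩
    simp only [pow_one, LinearMap.sub_apply, LinearMap.smul_apply, Module.End.one_apply]
    rw [hHf]
    ring_nf
    abel
  have hB : g (-2) + 1 ≤ g 2 := by
    have hc2 : ((-2:ℤ):ℂ) = -((2:ℕ):ℂ) := by push_cast; ring
    have hc2' : ((2:ℤ):ℂ) = ((2:ℕ):ℂ) := by push_cast; ring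
    have hspace1 : HU.maxGenEigenspace ((-2:ℤ):ℂ) = HU.maxGenEigenspace (-((2:ℕ):ℂ)) := by
      rw [hc2]
    have hspace2 : HU.maxGenEigenspace ((2:ℤ):ℂ) = HU.maxGenEigenspace (((2:ℕ)):ℂ) := by
      rw [hc2']
    have hmapsto : ∀ x ∈ HU.maxGenEigenspace ((-2:ℤ):ℂ),
        (EU ^ 2) x ∈ HU.maxGenEigenspace ((2:ℤ):ℂ) := by
      intro x hx
      rw [hspace1] at hx
      rw [hspace2]
      have := hmapsEk 2 (by norm_num) x (by exact_mod_cast hx)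
      exact_mod_cast this
    set φ := (EU ^ 2).restrict hmapsto with hφ
    have hφinj : Function.Injective φ := by
      rw [← LinearMap.ker_eq_bot, LinearMap.ker_eq_bot']
      intro x hx0
      have h1 : (EU ^ 2) (x : U) = 0 := by
        have := congrArg (Subtype.val) hx0
        simpa [hφ, LinearMap.restrict_coe_apply] using this
      have h2 : (x : U) ∈ HU.maxGenEigenspace (-((2:ℕ):ℂ)) := hspace1 ▸ x.2
      exact Subtype.ext (hinjEk 2 (by norm_num) (x : U) (by exact_mod_cast h2)
        (by exact_mod_cast h1))
    set eW : HU.maxGenEigenspace ((2:ℤ):ℂ) := ⟨⟨e, he⟩, heU⟩ with heW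
    have heW0 : eW ≠ 0 := by
      intro hc
      apply he0
      have := congrArg (fun w : HU.maxGenEigenspace ((2:ℤ):ℂ) => ((w : U) : V)) hc
      simpa [heW] using this
    have heWnr : eW ∉ LinearMap.range φ := by
      rintro ⟨u, hu⟩
      have h1 : (E ^ 2) ((u : U) : V) = e := by
        have := congrArg (fun w : HU.maxGenEigenspace ((2:ℤ):ℂ) => ((w : U) : V)) hu
        simp only [hφ, LinearMap.restrict_coe_apply, heW] at this
        rw [← this, hEUpow]
      have h2 : ((u : U) : V) ∈ H.maxGenEigenspace (-((2:ℕ):ℂ)) :=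
        (hcorr _ (u : U)).mp (hspace1 ▸ u.2)
      have h3 : ((u : U) : V) + (2:ℂ)⁻¹ • f ∈ H.maxGenEigenspace (-((2:ℕ):ℂ)) := by
        refine Submodule.add_mem _ h2 (Submodule.smul_mem _ _ ?_)
        have : -((2:ℕ):ℂ) = -(2:ℂ) := by norm_num
        rw [this]
        exact hfV
      have h4 : (E ^ 2) (((u : U) : V) + (2:ℂ)⁻¹ • f) = 0 := by
        rw [map_add, map_smul, h1, hE2f, smul_smul]
        norm_num
      have h5 := epow_injective hEF hHE hHF (by norm_num : 0 < 2) h3 h4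
      apply hf
      have h7 : (2:ℂ)⁻¹ • f = -((u : U) : V) := by
        rw [← sub_eq_zero, ← h5]
        abel
      have h8 : f = (-2:ℂ) • ((u : U) : V) := by
        have h9 := congrArg (fun w => (2:ℂ) • w) h7
        simp only [smul_smul] at h9
        norm_num at h9
        rw [h9]
        module
      rw [h8]
      exact Submodule.smul_mem _ _ (by exact ((u : U)).2)
    have hfr : finrank ℂ (LinearMap.range φ) = finrank ℂ (HU.maxGenEigenspace ((-2:ℤ):ℂ)) :=
      (LinearEquiv.finrank_eq (LinearEquiv.ofInjective φ hφinj)).symm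
    have hdisj : LinearMap.range φ ⊓ Submodule.span ℂ {eW} = ⊥ := by
      rw [Submodule.eq_bot_iff]
      intro x hx
      rw [Submodule.mem_inf] at hx
      obtain ⟨hxr, hxs⟩ := hx
      rw [Submodule.mem_span_singleton] at hxs
      obtain ⟨c, rfl⟩ := hxs
      rcases eq_or_ne c 0 with rfl | hc0
      · simp
      · exfalso
        apply heWnr
        have : eW = c⁻¹ • (c • eW) := by rw [smul_smul, inv_mul_cancel₀ hc0, one_smul]
        rw [this]
        exact Submodule.smul_mem _ _ hxr
    have hsup := Submodule.finrank_sup_add_finrank_inf_eq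
      (LinearMap.range φ) (Submodule.span ℂ {eW})
    rw [hdisj, finrank_bot, finrank_span_singleton heW0, hfr] at hsup
    have hle : finrank ℂ ↥(LinearMap.range φ ⊔ Submodule.span ℂ {eW}) 
        ≤ finrank ℂ (HU.maxGenEigenspace ((2:ℤ):ℂ)) := Submodule.finrank_le _
    simp only [hg_def, hG_def]
    omega
  -- support of `g`
  have hsupp : ∀ z : ℤ, z ∉ s' → g z = 0 := by
    intro z hz
    rw [hs'_def, Finset.mem_preimage, Set.Finite.mem_toFinset, Set.mem_setOf_eq, not_not] at hz
    show finrank ℂ (HU.maxGenEigenspace ((z:ℤ):ℂ)) = 0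
    rw [hz]
    exact finrank_bot ℂ U
  -- put everything together
  have hposZ : 0 < ∑ z ∈ s', z * (g z : ℤ) := int_sum_pos g s' hsupp hA hB
  refine ⟨(∑ z ∈ s', z * (g z : ℤ)).toNat, by omega, ?_⟩
  have hti : ((∑ z ∈ s', z * (g z : ℤ)).toNat : ℤ) = ∑ z ∈ s', z * (g z : ℤ) :=
    Int.toNat_of_nonneg (le_of_lt hposZ)
  have hcastfin : (((∑ z ∈ s', z * (g z : ℤ)).toNat : ℕ) : ℂ)
      = ∑ z ∈ s', (z:ℂ) * (g z : ℂ) := by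
    have h1 : (((∑ z ∈ s', z * (g z : ℤ)).toNat : ℕ) : ℂ)
        = ((∑ z ∈ s', z * (g z : ℤ) : ℤ) : ℂ) := by exact_mod_cast congrArg Int.cast hti
    rw [h1]
    push_cast
    rfl
  rw [htr2, hreindex]
  exact hcastfin.symm

end Sl2Aux

attribute [local instance 100] LieRing.ofAssociativeRing


open LieAlgebra LieModule LieAlgebra.IsKilling

/-- Let `𝔤` be a finite-dimensional complex Lie algebra, `𝔤'` a semisimple
subalgebra (semisimplicity expressed via `IsKilling`), `𝔥'` a Cartan subalgebra of `𝔤'`, `α` a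
root of `(𝔤',𝔥')` with coroot `coroot α`, and regard `𝔤` as a `𝔤'`-module via the adjoint
action.  If `𝔲 ⊆ 𝔤` is an `𝔥'`-invariant subspace with `⁅𝔤'_α, 𝔲⁆ ⊆ 𝔲`, `𝔤'_α ⊆ 𝔲` and
`𝔤'_{-α} ∩ 𝔲 = 0`, then the trace of `ad(coroot α)` on `𝔲` (i.e. `ρ_𝔲(h_α)`, twice half the
sum of the `𝔥'`-weights of `𝔲` evaluated at the coroot) is a strictly positive integer. -/
theorem trace_ad_coroot_pos
    {𝔤 : Type*} [LieRing 𝔤] [LieAlgebra ℂ 𝔤] [FiniteDimensional ℂ 𝔤]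
    (𝔤' : LieSubalgebra ℂ 𝔤) [FiniteDimensional ℂ ↥𝔤'] [LieAlgebra.IsKilling ℂ ↥𝔤']
    (𝔥' : LieSubalgebra ℂ ↥𝔤') [𝔥'.IsCartanSubalgebra]
    (α : LieModule.Weight ℂ 𝔥' ↥𝔤') (hα : α.IsNonZero)
    (𝔲 : Submodule ℂ 𝔤)
    (h𝔥 : ∀ (H : 𝔥') (u : 𝔤), u ∈ 𝔲 → (LieAlgebra.ad ℂ 𝔤 ((H : ↥𝔤') : 𝔤)) u ∈ 𝔲)
    (hbr : ∀ x : ↥𝔤', x ∈ rootSpace 𝔥' ⇑α → ∀ u ∈ 𝔲, ⁅(x : 𝔤), u⁆ ∈ 𝔲)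
    (hsub : ∀ x : ↥𝔤', x ∈ rootSpace 𝔥' ⇑α → (x : 𝔤) ∈ 𝔲)
    (hdisj : ∀ x : ↥𝔤', x ∈ rootSpace 𝔥' (-⇑α) → (x : 𝔤) ∈ 𝔲 → x = 0) :
    ∃ n : ℕ, 0 < n ∧
      LinearMap.trace ℂ 𝔲
        ((LieAlgebra.ad ℂ 𝔤 ((((coroot α : ↥𝔥') : ↥𝔤') : 𝔤))).restrict
          (fun u hu => h𝔥 (coroot α) u hu)) = (n : ℂ) := by
  classical
  obtain ⟨h, e, f, ht, heα, hfα⟩ := exists_isSl2Triple_of_weight_isNonZero hα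
  have hcor : h = ((coroot α : ↥𝔥') : ↥𝔤') := ht.h_eq_coroot hα heα hfα
  have hcorV : ((h : ↥𝔤') : 𝔤) = (((coroot α : ↥𝔥') : ↥𝔤') : 𝔤) := by rw [hcor]
  set Eop : Module.End ℂ 𝔤 := LieAlgebra.ad ℂ 𝔤 ((e : 𝔤)) with hEop_def
  set Fop : Module.End ℂ 𝔤 := LieAlgebra.ad ℂ 𝔤 ((f : 𝔤)) with hFop_def
  set Hop : Module.End ℂ 𝔤 := LieAlgebra.ad ℂ 𝔤 ((h : 𝔤)) with hHop_def
  -- coercion facts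
  have hbra : ∀ x y : ↥𝔤', ((⁅x, y⁆ : ↥𝔤') : 𝔤) = ⁅(x : 𝔤), (y : 𝔤)⁆ := fun x y => rfl
  have h2e : ((2 • e : ↥𝔤') : 𝔤) = (2:ℂ) • (e : 𝔤) := by
    have h1 : ((2 • e : ↥𝔤') : 𝔤) = 2 • (e : 𝔤) := rfl
    rw [h1, ← Nat.cast_smul_eq_nsmul ℂ 2 ((e : 𝔤) : 𝔤)]
    norm_num
  have h2f : ((2 • f : ↥𝔤') : 𝔤) = (2:ℂ) • (f : 𝔤) := by
    have h1 : ((2 • f : ↥𝔤') : 𝔤) = 2 • (f : 𝔤) := rfl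
    rw [h1, ← Nat.cast_smul_eq_nsmul ℂ 2 ((f : 𝔤) : 𝔤)]
    norm_num
  -- the sl2 relations for the adjoint operators
  have hEF : Eop * Fop - Fop * Eop = Hop := by
    rw [hEop_def, hFop_def, hHop_def, ← Ring.lie_def, ← LieHom.map_lie, ← hbra, ht.lie_e_f]
  have hHE : Hop * Eop - Eop * Hop = (2:ℂ) • Eop := by
    rw [hEop_def, hHop_def, ← Ring.lie_def, ← LieHom.map_lie, ← hbra, ht.lie_h_e_nsmul]
    have h1 : ((2 • e : ↥𝔤') : 𝔤) = (2:ℂ) • (e : 𝔤) := h2e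
    rw [h1, map_smul]
  have hHF : Hop * Fop - Fop * Hop = -((2:ℂ) • Fop) := by
    rw [hFop_def, hHop_def, ← Ring.lie_def, ← LieHom.map_lie, ← hbra, ht.lie_h_f_nsmul]
    have h1 : ((-(2 • f) : ↥𝔤') : 𝔤) = -((2:ℂ) • (f : 𝔤)) := by
      rw [← h2f]; rfl
    rw [h1, map_neg, map_smul]
  -- invariance of 𝔲
  have hUH : ∀ x ∈ 𝔲, Hop x ∈ 𝔲 := by
    intro x hx
    rw [hHop_def, hcorV]
    exact h𝔥 (coroot α) x hx
  have hUE : ∀ x ∈ 𝔲, Eop x ∈ 𝔲 := by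
    intro x hx
    rw [hEop_def, LieAlgebra.ad_apply]
    exact hbr e heα x hx
  -- vectors
  have he_mem : (e : 𝔤) ∈ 𝔲 := hsub e heα
  have hf_not : (f : 𝔤) ∉ 𝔲 := fun hmem => ht.f_ne_zero (hdisj f hfα hmem)
  have he0 : (e : 𝔤) ≠ 0 := by
    simpa using ht.e_ne_zero
  have hHe : Hop (e : 𝔤) = (2:ℂ) • (e : 𝔤) := by
    rw [hHop_def, LieAlgebra.ad_apply, ← hbra, ht.lie_h_e_nsmul, h2e]
  have hHf : Hop (f : 𝔤) = (-2:ℂ) • (f : 𝔤) := by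
    rw [hHop_def, LieAlgebra.ad_apply, ← hbra, ht.lie_h_f_nsmul]
    have h1 : ((-(2 • f) : ↥𝔤') : 𝔤) = -((2:ℂ) • (f : 𝔤)) := by rw [← h2f]; rfl
    rw [h1]
    module
  have hE2f : (Eop ^ 2) (f : 𝔤) = (-2:ℂ) • (e : 𝔤) := by
    rw [pow_two, Module.End.mul_apply, hEop_def, LieAlgebra.ad_apply, LieAlgebra.ad_apply,
      ← hbra, ht.lie_e_f, ← hbra]
    have h1 : ⁅e, h⁆ = -(2 • e) := by rw [← lie_skew, ht.lie_h_e_nsmul]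
    rw [h1]
    have h2 : ((-(2 • e) : ↥𝔤') : 𝔤) = -((2:ℂ) • (e : 𝔤)) := by rw [← h2e]; rfl
    rw [h2]
    module
  obtain ⟨n, hn, htrace⟩ := Sl2Aux.core_trace Eop Fop Hop hEF hHE hHF 𝔲 hUH hUE
    (e : 𝔤) (f : 𝔤) he_mem hf_not he0 hHe hHf hE2f
  refine ⟨n, hn, ?_⟩
  have hopeq : (LieAlgebra.ad ℂ 𝔤 ((((coroot α : ↥𝔥') : ↥𝔤') : 𝔤))) = Hop := by
    rw [hHop_def, hcorV]
  have hrestr : (LieAlgebra.ad ℂ 𝔤 ((((coroot α : ↥𝔥') : ↥𝔤') : 𝔤))).restrict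
      (fun u hu => h𝔥 (coroot α) u hu) = Hop.restrict hUH := by
    refine LinearMap.ext fun x => Subtype.ext ?_
    rw [LinearMap.restrict_coe_apply, LinearMap.restrict_coe_apply, hopeq]
  rw [hrestr]
  exact htrace
end

section
/- Let Φ be a finite, reduced, crystallographic root system in a finite-dimensional real inner product space E, with Weyl group W (the group generated by the reflections in the roots of Φ) and a fixed set Φ⁺ of positive roots. Let λ₁ and λ₂ be dominant integral weights, i.e. (λ_i, α) ≥ 0 for all α ∈ Φ⁺ and 2(λ_i,α)/(α,α) ∈ ℤ for all α ∈ Φ. Then Co(W·λ₁) + Co(W·λ₂) = Co(W·(λ₁+λ₂)), where Co denotes the convex hull and + the Minkowski sum of subsets of E. -/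
set_option linter.unusedSectionVars false

open scoped Pointwise RealInnerProductSpace

namespace WeylOrbitAux

variable {E : Type*} [NormedAddCommGroup E] [InnerProductSpace ℝ E]

lemma inner_self_pos' {α : E} (h : α ≠ 0) : 0 < ⟪α, α⟫ :=
  lt_of_le_of_ne real_inner_self_nonneg (Ne.symm (inner_self_ne_zero.mpr h))

/-- Reflection coefficient. -/
noncomputable def co (α x : E) : ℝ := 2 * ⟪x, α⟫ / ⟪α, α⟫

lemma co_sub (α x y : E) : co α (x - y) = co α x - co α y := by
  simp only [co, inner_sub_left]; ring

lemma co_add (α x y : E) : co α (x + y) = co α x + co α y := by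
  simp only [co, inner_add_left]; ring

lemma co_smul (α : E) (t : ℝ) (y : E) : co α (t • y) = t * co α y := by
  simp only [co, real_inner_smul_left]; ring

lemma co_self {α : E} (hα : α ≠ 0) : co α α = 2 := by
  have hQ : ⟪α, α⟫ ≠ 0 := inner_self_ne_zero.mpr hα
  rw [co, mul_div_assoc, div_self hQ, mul_one]

lemma co_zero_left (x : E) : co 0 x = 0 := by simp [co]

/-- The reflection in `α` as a linear map. -/
noncomputable def rmap (α : E) : E →ₗ[ℝ] E where
  toFun x := x - co α x • α
  map_add' x y := by show x + y - co α (x+y) • α = (x - co α x • α) + (y - co α y • α); rw [co_add, add_smul]; abel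
  map_smul' t x := by
    show t • x - co α (t • x) • α = t • (x - co α x • α)
    rw [co_smul, smul_sub, smul_smul]

lemma rmap_apply (α x : E) : rmap α x = x - co α x • α := rfl

lemma rmap_involutive (α : E) : Function.Involutive (rmap α) := by
  intro x
  by_cases hα : α = 0
  · simp [rmap_apply, hα]
  · rw [rmap_apply, rmap_apply, co_sub, co_smul, co_self hα]
    rw [show co α x - co α x * 2 = - co α x by ring]
    rw [neg_smul, sub_neg_eq_add, sub_add_cancel]

/-- The reflection in `α` as a linear automorphism. -/
noncomputable def rE (α : E) : E ≃ₗ[ℝ] E :=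
  LinearEquiv.ofInvolutive (rmap α) (rmap_involutive α)

lemma rE_apply (α x : E) : rE α x = x - co α x • α := rfl

lemma rE_fix {α x : E} (h : ⟪x, α⟫ = 0) : rE α x = x := by
  rw [rE_apply, co, h]; simp

lemma rE_self {α : E} (hα : α ≠ 0) : rE α α = -α := by
  rw [rE_apply, co_self hα, two_smul]; abel

lemma rE_rE (α x : E) : rE α (rE α x) = x := rmap_involutive α x

lemma rE_mul_self (α : E) : rE α * rE α = 1 :=
  LinearEquiv.ext fun x => rE_rE α x

lemma rE_inv (α : E) : (rE α)⁻¹ = rE α :=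
  inv_eq_of_mul_eq_one_right (rE_mul_self α)

lemma inner_rE_rE (α x y : E) : ⟪rE α x, rE α y⟫ = ⟪x, y⟫ := by
  by_cases hα : α = 0
  · simp [rE_apply, hα]
  · have hQ : ⟪α, α⟫ ≠ 0 := inner_self_ne_zero.mpr hα
    simp only [rE_apply, co, inner_sub_left, inner_sub_right, real_inner_smul_left,
      real_inner_smul_right]
    rw [real_inner_comm y α]
    field_simp
    ring

lemma rE_neg (α : E) : rE (-α) = rE α := by
  refine LinearEquiv.ext fun x => ?_
  simp only [rE_apply, co, inner_neg_right, inner_neg_left, neg_neg, smul_neg, neg_smul]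
  rw [show 2 * -⟪x, α⟫ / ⟪α, α⟫ = -(2 * ⟪x, α⟫ / ⟪α, α⟫) by ring]
  rw [neg_smul, neg_neg]

lemma rE_conj {g : E ≃ₗ[ℝ] E} (hg : ∀ x y : E, ⟪g x, g y⟫ = ⟪x, y⟫) (α : E) :
    rE (g α) = g * rE α * g⁻¹ := by
  refine LinearEquiv.ext fun x => ?_
  have hx : x = g (g⁻¹ x) := (g.apply_symm_apply x).symm
  have h1 : ⟪x, g α⟫ = ⟪(g⁻¹ : E ≃ₗ[ℝ] E) x, α⟫ := by
    conv_lhs => rw [hx]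
    exact hg _ _
  show x - co (g α) x • g α = g (rE α ((g⁻¹ : E ≃ₗ[ℝ] E) x))
  rw [rE_apply, map_sub, map_smul, co, co, h1, hg α α]
  rw [← hx]


section RootSystem

variable (Φ : Set E) (v : E)

/-- Positive roots. -/
def Pos : Set E := {α | α ∈ Φ ∧ 0 < ⟪v, α⟫}

/-- Simple (indecomposable) positive roots. -/
def Simp : Set E := {δ | δ ∈ Pos Φ v ∧ ¬ ∃ β ∈ Pos Φ v, ∃ γ ∈ Pos Φ v, δ = β + γ}

variable {Φ v}

lemma Simp.pos {δ : E} (h : δ ∈ Simp Φ v) : δ ∈ Pos Φ v := h.1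

lemma Pos.mem {α : E} (h : α ∈ Pos Φ v) : α ∈ Φ := h.1

lemma Pos.lt {α : E} (h : α ∈ Pos Φ v) : 0 < ⟪v, α⟫ := h.2

variable (hΦfin : Φ.Finite) (hΦne : ∀ α ∈ Φ, α ≠ 0)
  (hΦrefl : ∀ α ∈ Φ, ∀ β ∈ Φ, β - (2 * ⟪β, α⟫ / ⟪α, α⟫) • α ∈ Φ)
  (hΦcrys : ∀ α ∈ Φ, ∀ β ∈ Φ, ∃ n : ℤ, 2 * ⟪β, α⟫ / ⟪α, α⟫ = (n : ℝ))
  (hΦred : ∀ α ∈ Φ, ∀ t : ℝ, t • α ∈ Φ → t = 1 ∨ t = -1)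
  (hv : ∀ α ∈ Φ, ⟪v, α⟫ ≠ 0)

include hΦrefl in
lemma rE_mem {α β : E} (hα : α ∈ Φ) (hβ : β ∈ Φ) : rE α β ∈ Φ := hΦrefl α hα β hβ

include hΦrefl hΦne in
lemma neg_mem {α : E} (hα : α ∈ Φ) : -α ∈ Φ := by
  have := hΦrefl α hα α hα
  rwa [show α - (2 * ⟪α, α⟫ / ⟪α, α⟫) • α = rE α α from rfl, rE_self (hΦne α hα)] at this

include hv in
lemma neg_inner_of_not_pos {α : E} (hα : α ∈ Φ) (h : α ∉ Pos Φ v) : ⟪v, α⟫ < 0 := by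
  rcases lt_or_gt_of_ne (hv α hα) with h' | h'
  · exact h'
  · exact absurd ⟨hα, h'⟩ h

include hΦrefl hΦne hv in
lemma neg_mem_pos_of_not_pos {α : E} (hα : α ∈ Φ) (h : α ∉ Pos Φ v) : -α ∈ Pos Φ v := by
  refine ⟨neg_mem hΦne hΦrefl hα, ?_⟩
  rw [inner_neg_right]
  linarith [neg_inner_of_not_pos hv hα h]

lemma not_pos_of_neg_pos {α : E} (h : -α ∈ Pos Φ v) : α ∉ Pos Φ v := by
  intro h'
  have := h.2
  rw [inner_neg_right] at this
  linarith [h'.2]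

/-- inner product with a multiset sum -/
lemma inner_multiset_sum (y : E) (m : Multiset E) :
    ⟪y, m.sum⟫ = (m.map fun z => ⟪y, z⟫).sum := by
  induction m using Multiset.induction with
  | empty => simp
  | cons a s ih => simp [inner_add_right, ih]

include hΦfin in
lemma pos_finite : (Pos Φ v).Finite := hΦfin.subset fun _ h => h.1

include hΦfin in
/-- 3a: every positive root is a sum of a multiset of simple roots. -/
lemma pos_isSimpSum {α : E} (hα : α ∈ Pos Φ v) :
    ∃ m : Multiset E, (∀ γ ∈ m, γ ∈ Simp Φ v) ∧ m.sum = α := by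
  classical
  suffices h : ∀ n : ℕ, ∀ α : E, α ∈ Pos Φ v →
      ({γ ∈ Pos Φ v | ⟪v, γ⟫ < ⟪v, α⟫}).ncard ≤ n →
      ∃ m : Multiset E, (∀ γ ∈ m, γ ∈ Simp Φ v) ∧ m.sum = α by
    exact h _ α hα le_rfl
  intro n
  induction n with
  | zero =>
    intro α hα hcard
    by_cases hs : α ∈ Simp Φ v
    · exact ⟨{α}, by simpa using hs, by simp⟩
    · exfalso
      have hdec : ∃ β ∈ Pos Φ v, ∃ γ ∈ Pos Φ v, α = β + γ := by
        by_contra h'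
        exact hs ⟨hα, h'⟩
      obtain ⟨β, hβ, γ, hγ, rfl⟩ := hdec
      have hβlt : ⟪v, β⟫ < ⟪v, β + γ⟫ := by
        rw [inner_add_right]; linarith [hγ.2]
      have : β ∈ {γ' ∈ Pos Φ v | ⟪v, γ'⟫ < ⟪v, β + γ⟫} := ⟨hβ, hβlt⟩
      have hne : 0 < ({γ' ∈ Pos Φ v | ⟪v, γ'⟫ < ⟪v, β + γ⟫}).ncard := by
        rw [Set.ncard_pos ((pos_finite hΦfin).subset fun _ h => h.1)]
        exact ⟨β, this⟩
      omega
  | succ n ih =>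
    intro α hα hcard
    by_cases hs : α ∈ Simp Φ v
    · exact ⟨{α}, by simpa using hs, by simp⟩
    · have hdec : ∃ β ∈ Pos Φ v, ∃ γ ∈ Pos Φ v, α = β + γ := by
        by_contra h'
        exact hs ⟨hα, h'⟩
      obtain ⟨β, hβ, γ, hγ, rfl⟩ := hdec
      have hfin : ∀ x : E, ({γ' ∈ Pos Φ v | ⟪v, γ'⟫ < ⟪v, x⟫}).Finite :=
        fun x => (pos_finite hΦfin).subset fun _ h => h.1
      have hβlt : ⟪v, β⟫ < ⟪v, β + γ⟫ := by rw [inner_add_right]; linarith [hγ.2]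
      have hγlt : ⟪v, γ⟫ < ⟪v, β + γ⟫ := by rw [inner_add_right]; linarith [hβ.2]
      have hsub : ∀ x : E, x ∈ Pos Φ v → ⟪v, x⟫ < ⟪v, β + γ⟫ →
          ({γ' ∈ Pos Φ v | ⟪v, γ'⟫ < ⟪v, x⟫}).ncard < ({γ' ∈ Pos Φ v | ⟪v, γ'⟫ < ⟪v, β + γ⟫}).ncard := by
        intro x hx hxlt
        refine Set.ncard_lt_ncard ?_ (hfin _)
        constructor
        · rintro y ⟨hy, hylt⟩
          exact ⟨hy, lt_trans hylt hxlt⟩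
        · intro hsub'
          have := hsub' ⟨hx, hxlt⟩
          exact absurd this.2 (lt_irrefl _)
      obtain ⟨m₁, hm₁, hs₁⟩ := ih β hβ (by have := hsub β hβ hβlt; omega)
      obtain ⟨m₂, hm₂, hs₂⟩ := ih γ hγ (by have := hsub γ hγ hγlt; omega)
      refine ⟨m₁ + m₂, ?_, by rw [Multiset.sum_add, hs₁, hs₂]⟩
      intro x hx
      rcases Multiset.mem_add.mp hx with h | h
      · exact hm₁ x h
      · exact hm₂ x h


include hΦcrys hΦrefl hΦne hΦred in
/-- Crystallographic lemma: roots at acute angle differ by a root. -/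
lemma sub_mem_of_inner_pos {α β : E} (hα : α ∈ Φ) (hβ : β ∈ Φ)
    (hip : 0 < ⟪α, β⟫) (hne : α ≠ β) : α - β ∈ Φ ∨ β - α ∈ Φ := by
  have hα0 : α ≠ 0 := hΦne α hα
  have hβ0 : β ≠ 0 := hΦne β hβ
  have hQα : (0:ℝ) < ⟪α, α⟫ := inner_self_pos' hα0
  have hQβ : (0:ℝ) < ⟪β, β⟫ := inner_self_pos' hβ0
  obtain ⟨na, hna⟩ := hΦcrys β hβ α hα
  obtain ⟨nb, hnb⟩ := hΦcrys α hα β hβ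
  -- na = 2⟪α,β⟫/⟪β,β⟫, nb = 2⟪β,α⟫/⟪α,α⟫
  have hna_pos : (0:ℝ) < na := by
    rw [← hna]; positivity
  have hIβα : 0 < ⟪β, α⟫ := by rwa [real_inner_comm]
  have hnb_pos : (0:ℝ) < nb := by
    rw [← hnb]; positivity
  have hna1 : 1 ≤ na := by exact_mod_cast hna_pos
  have hnb1 : 1 ≤ nb := by exact_mod_cast hnb_pos
  by_cases hna_eq : na = 1
  · left
    have := hΦrefl β hβ α hα
    rwa [hna, hna_eq, Int.cast_one, one_smul] at this
  by_cases hnb_eq : nb = 1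
  · right
    have := hΦrefl α hα β hβ
    rwa [hnb, hnb_eq, Int.cast_one, one_smul] at this
  -- both ≥ 2, contradiction via Cauchy-Schwarz
  exfalso
  have hna2 : (2:ℝ) ≤ na := by exact_mod_cast (by omega : (2:ℤ) ≤ na)
  have hnb2 : (2:ℝ) ≤ nb := by exact_mod_cast (by omega : (2:ℤ) ≤ nb)
  have hcs : ⟪α, β⟫ * ⟪α, β⟫ ≤ ⟪α, α⟫ * ⟪β, β⟫ := real_inner_mul_inner_self_le α β
  have hprod : (na:ℝ) * nb = 4 * (⟪α, β⟫ * ⟪α, β⟫) / (⟪α, α⟫ * ⟪β, β⟫) := by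
    rw [← hna, ← hnb, real_inner_comm β α]
    field_simp
    ring
  have h4 : (na:ℝ) * nb ≤ 4 := by
    rw [hprod]
    rw [div_le_iff₀ (by positivity)]
    nlinarith
  have h4' : (4:ℝ) ≤ (na:ℝ) * nb := by nlinarith
  have heq : ⟪α, β⟫ * ⟪α, β⟫ = ⟪α, α⟫ * ⟪β, β⟫ := by
    have : (na:ℝ) * nb = 4 := le_antisymm h4 h4'
    rw [this] at hprod
    have := hprod.symm
    field_simp at this
    nlinarith
  -- equality in Cauchy-Schwarz: β = r • α
  have habs : ‖⟪α, β⟫‖ = ‖α‖ * ‖β‖ := by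
    have h1 : ⟪α, α⟫ = ‖α‖^2 := real_inner_self_eq_norm_sq α
    have h2 : ⟪β, β⟫ = ‖β‖^2 := real_inner_self_eq_norm_sq β
    have : ⟪α, β⟫ * ⟪α, β⟫ = (‖α‖ * ‖β‖)^2 := by rw [heq, h1, h2]; ring
    have h3 : ‖⟪α, β⟫‖^2 = (‖α‖ * ‖β‖)^2 := by
      rw [Real.norm_eq_abs, sq_abs]; nlinarith
    have h4'' : (0:ℝ) ≤ ‖⟪α, β⟫‖ := norm_nonneg _
    have h5 : (0:ℝ) ≤ ‖α‖ * ‖β‖ := by positivity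
    nlinarith
  obtain ⟨r, hr0, hrβ⟩ := (norm_inner_eq_norm_iff hα0 hβ0).mp habs
  rcases hΦred α hα r (hrβ ▸ hβ) with h1 | h1
  · exact hne (by rw [hrβ, h1, one_smul])
  · rw [hrβ, h1, neg_one_smul] at hip
    rw [inner_neg_right] at hip
    nlinarith [inner_self_pos' hα0]

include hΦcrys hΦrefl hΦne hΦred hv in
/-- 3b: distinct simple roots are at obtuse angles. -/
lemma simp_inner_nonpos {δ δ' : E} (hδ : δ ∈ Simp Φ v) (hδ' : δ' ∈ Simp Φ v)
    (hne : δ ≠ δ') : ⟪δ, δ'⟫ ≤ 0 := by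
  by_contra h
  push_neg at h
  rcases sub_mem_of_inner_pos hΦne hΦrefl hΦcrys hΦred hδ.1.1 hδ'.1.1 h hne with hε | hε
  · rcases Classical.em (δ - δ' ∈ Pos Φ v) with hp | hp
    · exact hδ.2 ⟨δ', hδ'.1, δ - δ', hp, by abel⟩
    · have : -(δ - δ') ∈ Pos Φ v := neg_mem_pos_of_not_pos hΦne hΦrefl hv hε hp
      exact hδ'.2 ⟨δ, hδ.1, -(δ - δ'), this, by abel⟩
  · rcases Classical.em (δ' - δ ∈ Pos Φ v) with hp | hp
    · exact hδ'.2 ⟨δ, hδ.1, δ' - δ, hp, by abel⟩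
    · have : -(δ' - δ) ∈ Pos Φ v := neg_mem_pos_of_not_pos hΦne hΦrefl hv hε hp
      exact hδ.2 ⟨δ', hδ'.1, -(δ' - δ), this, by abel⟩


lemma multiset_map_sum_pos (f : E → ℝ) (m : Multiset E)
    (h : ∀ x ∈ m, 0 < f x) (hm : m ≠ 0) : 0 < (m.map f).sum := by
  induction m using Multiset.induction with
  | empty => simp at hm
  | cons a s ih =>
    simp only [Multiset.map_cons, Multiset.sum_cons]
    have ha := h a (Multiset.mem_cons_self a s)
    rcases Classical.em (s = 0) with rfl | hs
    · simpa using ha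
    · have := ih (fun x hx => h x (Multiset.mem_cons_of_mem hx)) hs
      linarith

include hΦfin hΦne hΦrefl hΦcrys hΦred hv in
/-- 3c: a simple reflection permutes the positive roots other than itself. -/
lemma rE_simp_pos {δ α : E} (hδ : δ ∈ Simp Φ v) (hα : α ∈ Pos Φ v) (hne : α ≠ δ) :
    rE δ α ∈ Pos Φ v ∧ rE δ α ≠ δ := by
  have hδΦ : δ ∈ Φ := hδ.1.1
  have hδ0 : δ ≠ 0 := hΦne δ hδΦ
  have hQδ : (0:ℝ) < ⟪δ, δ⟫ := inner_self_pos' hδ0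
  have hvδ : (0:ℝ) < ⟪v, δ⟫ := hδ.1.2
  have hmem : rE δ α ∈ Φ := rE_mem hΦrefl hδΦ hα.1
  have hinner : ⟪v, rE δ α⟫ = ⟪v, α⟫ - co δ α * ⟪v, δ⟫ := by
    rw [rE_apply, inner_sub_right, real_inner_smul_right]
  have hne' : rE δ α ≠ δ := by
    intro h
    have : α = rE δ (rE δ α) := (rE_rE δ α).symm
    rw [h, rE_self hδ0] at this
    rw [this] at hα
    have := hα.2
    rw [inner_neg_right] at this
    linarith
  refine ⟨?_, hne'⟩
  by_cases hc : co δ α ≤ 0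
  · exact ⟨hmem, by rw [hinner]; nlinarith [hα.2]⟩
  push_neg at hc
  by_contra hpos
  have hβ : -(rE δ α) ∈ Pos Φ v := neg_mem_pos_of_not_pos hΦne hΦrefl hv hmem hpos
  set c := co δ α with hcdef
  have hβeq : -(rE δ α) = c • δ - α := by rw [rE_apply]; abel
  obtain ⟨A, hA, hAs⟩ := pos_isSimpSum hΦfin hα
  obtain ⟨B, hB, hBs⟩ := pos_isSimpSum hΦfin hβ
  classical
  set m := A + B with hmdef
  have hmsum : m.sum = c • δ := by
    rw [hmdef, Multiset.sum_add, hAs, hBs, hβeq]; abel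
  have hmmem : ∀ γ ∈ m, γ ∈ Simp Φ v := by
    intro γ hγ
    rcases Multiset.mem_add.mp hγ with h | h
    · exact hA γ h
    · exact hB γ h
  set k := m.count δ with hkdef
  set m' := m.filter (fun a => ¬ a = δ) with hm'def
  have hsplit : m.filter (fun a => a = δ) + m' = m := Multiset.filter_add_not _ m
  have hfeq : m.filter (fun a => a = δ) = Multiset.replicate k δ := by
    rw [hkdef]
    exact Multiset.filter_eq' m δ
  have hm'sum : m'.sum = (c - (k:ℝ)) • δ := by
    have h1 : m.sum = (Multiset.replicate k δ).sum + m'.sum := by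
      conv_lhs => rw [← hsplit]
      rw [Multiset.sum_add, hfeq]
    rw [Multiset.sum_replicate] at h1
    have h2 : m'.sum = m.sum - k • δ := by rw [h1]; abel
    rw [h2, hmsum, sub_smul, Nat.cast_smul_eq_nsmul]
  have hm'mem : ∀ γ ∈ m', γ ∈ Simp Φ v ∧ γ ≠ δ := by
    intro γ hγ
    have h1 := Multiset.of_mem_filter hγ
    exact ⟨hmmem γ (Multiset.mem_of_mem_filter hγ), h1⟩
  -- pair with v : (c-k) ⟪v,δ⟫ ≥ 0
  have hvpair : 0 ≤ (c - (k:ℝ)) * ⟪v, δ⟫ := by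
    have : ⟪v, m'.sum⟫ = (m'.map fun z => ⟪v, z⟫).sum := inner_multiset_sum v m'
    rw [hm'sum, real_inner_smul_right] at this
    rw [this]
    refine Multiset.sum_nonneg ?_
    intro x hx
    obtain ⟨γ, hγ, rfl⟩ := Multiset.mem_map.mp hx
    exact le_of_lt (hm'mem γ hγ).1.1.2
  -- pair with δ : (c-k) ⟪δ,δ⟫ ≤ 0
  have hδpair : (c - (k:ℝ)) * ⟪δ, δ⟫ ≤ 0 := by
    have : ⟪δ, m'.sum⟫ = (m'.map fun z => ⟪δ, z⟫).sum := inner_multiset_sum δ m'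
    rw [hm'sum, real_inner_smul_right] at this
    rw [this]
    have hle : ∀ γ ∈ m', ⟪δ, γ⟫ ≤ (fun _ => (0:ℝ)) γ := by
      intro γ hγ
      exact simp_inner_nonpos hΦne hΦrefl hΦcrys hΦred hv hδ (hm'mem γ hγ).1
        (Ne.symm (hm'mem γ hγ).2)
    calc (m'.map fun z => ⟪δ, z⟫).sum ≤ (m'.map fun _ => (0:ℝ)).sum :=
          Multiset.sum_map_le_sum_map _ _ hle
      _ = 0 := by simp
  have hck : c = (k:ℝ) := by nlinarith
  -- hence m' has nonneg v-sum zero, so m' = 0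
  have hm'zero : m' = 0 := by
    by_contra hm'ne
    have h0 : (0:ℝ) < (m'.map fun z => ⟪v, z⟫).sum := by
      refine multiset_map_sum_pos _ _ (fun x hx => (hm'mem x hx).1.1.2) hm'ne
    have : ⟪v, m'.sum⟫ = (m'.map fun z => ⟪v, z⟫).sum := inner_multiset_sum v m'
    rw [hm'sum, hck, sub_self, zero_smul, inner_zero_right] at this
    linarith [this ▸ h0]
  -- all elements of A are δ
  have hAδ : ∀ γ ∈ A, γ = δ := by
    intro γ hγ
    by_contra hγδ
    have : γ ∈ m' := by
      rw [hm'def]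
      refine Multiset.mem_filter.mpr ⟨Multiset.mem_add.mpr (Or.inl hγ), hγδ⟩
    rw [hm'zero] at this
    exact absurd this (Multiset.notMem_zero γ)
  have hαδ : α = (A.card : ℝ) • δ := by
    have hrep : A = Multiset.replicate A.card δ :=
      Multiset.eq_replicate_card.mpr hAδ
    have h6 : α = A.card • δ := by
      rw [← hAs]
      conv_lhs => rw [hrep]
      rw [Multiset.sum_replicate]
    rw [h6, Nat.cast_smul_eq_nsmul]
  have hcard : (A.card : ℝ) = 1 ∨ (A.card : ℝ) = -1 :=
    hΦred δ hδΦ _ (hαδ ▸ hα.1)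
  rcases hcard with h1 | h1
  · rw [h1, one_smul] at hαδ
    exact hne hαδ
  · have : (0:ℝ) ≤ (A.card : ℝ) := Nat.cast_nonneg _
    linarith [h1 ▸ this]

include hΦfin hΦne hΦrefl hΦcrys hΦred hv in
/-- 3d: a simple reflection sends a negative root to a positive root only if it is `-δ`. -/
lemma eq_neg_of_rE_pos {δ γ : E} (hδ : δ ∈ Simp Φ v) (hγ : γ ∈ Φ)
    (hγn : γ ∉ Pos Φ v) (h : rE δ γ ∈ Pos Φ v) : γ = -δ := by
  have hng : -γ ∈ Pos Φ v := neg_mem_pos_of_not_pos hΦne hΦrefl hv hγ hγn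
  by_contra hne
  have hne' : -γ ≠ δ := fun h' => hne (by rw [← h', neg_neg])
  have h3 := rE_simp_pos hΦfin hΦne hΦrefl hΦcrys hΦred hv hδ hng hne'
  have : rE δ (-γ) = -(rE δ γ) := by rw [map_neg]
  rw [this] at h3
  exact not_pos_of_neg_pos h3.1 h


include hΦfin in
/-- 3e: if some positive root pairs negatively with `x`, so does some simple root. -/
lemma exists_simp_neg {x : E} (h : ∃ α ∈ Pos Φ v, ⟪x, α⟫ < 0) :
    ∃ δ ∈ Simp Φ v, ⟪x, δ⟫ < 0 := by
  obtain ⟨α, hα, hxα⟩ := h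
  by_contra hcon
  push_neg at hcon
  obtain ⟨m, hm, hms⟩ := pos_isSimpSum hΦfin hα
  have : ⟪x, α⟫ = (m.map fun z => ⟪x, z⟫).sum := by
    rw [← hms]; exact inner_multiset_sum x m
  have hnn : 0 ≤ (m.map fun z => ⟪x, z⟫).sum := by
    refine Multiset.sum_nonneg ?_
    intro y hy
    obtain ⟨γ, hγ, rfl⟩ := Multiset.mem_map.mp hy
    exact hcon γ (hm γ hγ)
  linarith [this ▸ hxα]

/-- product of reflections along a list of roots -/
noncomputable def prodRE (L : List E) : E ≃ₗ[ℝ] E := (L.map rE).prod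

lemma prodRE_nil : prodRE ([] : List E) = 1 := rfl

lemma prodRE_cons (a : E) (L : List E) : prodRE (a :: L) = rE a * prodRE L := by
  rw [prodRE, List.map_cons, List.prod_cons]; rfl

lemma prodRE_append (L₁ L₂ : List E) : prodRE (L₁ ++ L₂) = prodRE L₁ * prodRE L₂ := by
  rw [prodRE, List.map_append, List.prod_append]; rfl

lemma prodRE_singleton (a : E) : prodRE [a] = rE a := by
  rw [prodRE_cons, prodRE_nil, mul_one]

lemma prodRE_inner (L : List E) (x y : E) : ⟪prodRE L x, prodRE L y⟫ = ⟪x, y⟫ := by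
  induction L with
  | nil => rfl
  | cons a L ih =>
    rw [prodRE_cons]
    show ⟪rE a (prodRE L x), rE a (prodRE L y)⟫ = ⟪x, y⟫
    rw [inner_rE_rE, ih]

include hΦrefl in
lemma prodRE_mem {L : List E} (hL : ∀ a ∈ L, a ∈ Φ) {x : E} (hx : x ∈ Φ) :
    prodRE L x ∈ Φ := by
  induction L with
  | nil => exact hx
  | cons a L ih =>
    rw [prodRE_cons]
    show rE a (prodRE L x) ∈ Φ
    exact rE_mem hΦrefl (hL a List.mem_cons_self)
      (ih fun b hb => hL b (List.mem_cons_of_mem a hb))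

lemma prodRE_inv_reverse (L : List E) : (prodRE L)⁻¹ = prodRE L.reverse := by
  induction L with
  | nil => simp [prodRE_nil]
  | cons a L ih =>
    rw [prodRE_cons, List.reverse_cons, prodRE_append, prodRE_singleton, mul_inv_rev,
      rE_inv, ih]

/-- number of positive roots pairing negatively with x -/
noncomputable def nInv (Φ : Set E) (v x : E) : ℕ := ({α ∈ Pos Φ v | ⟪x, α⟫ < 0}).ncard

include hΦfin hΦne hΦrefl hΦcrys hΦred hv in
/-- 3f: reflecting in a violated simple root strictly decreases the inversion number. -/
lemma nInv_rE_lt {δ x : E} (hδ : δ ∈ Simp Φ v) (hxδ : ⟪x, δ⟫ < 0) :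
    nInv Φ v (rE δ x) < nInv Φ v x := by
  classical
  have hfin : ({α ∈ Pos Φ v | ⟪x, α⟫ < 0}).Finite :=
    (pos_finite hΦfin).subset fun _ h => h.1
  have hδmem : δ ∈ {α ∈ Pos Φ v | ⟪x, α⟫ < 0} := ⟨hδ.1, hxδ⟩
  have hinj : Set.InjOn (rE δ) {α ∈ Pos Φ v | ⟪rE δ x, α⟫ < 0} :=
    fun a _ b _ hab => (rE δ).injective hab
  have hmaps : ∀ β ∈ {α ∈ Pos Φ v | ⟪rE δ x, α⟫ < 0},
      rE δ β ∈ {α ∈ Pos Φ v | ⟪x, α⟫ < 0} \ {δ} := by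
    rintro β ⟨hβ, hβneg⟩
    have hβδ : β ≠ δ := by
      intro h
      rw [h] at hβneg
      have : ⟪rE δ x, δ⟫ = -⟪x, δ⟫ := by
        have h1 : ⟪rE δ x, δ⟫ = ⟪rE δ (rE δ x), rE δ δ⟫ := (inner_rE_rE δ _ _).symm
        rw [h1, rE_rE, rE_self (hΦne δ hδ.1.1), inner_neg_right]
      linarith [this ▸ hβneg]
    have h3 := rE_simp_pos hΦfin hΦne hΦrefl hΦcrys hΦred hv hδ hβ hβδ
    refine ⟨⟨h3.1, ?_⟩, by simpa using h3.2⟩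
    have : ⟪x, rE δ β⟫ = ⟪rE δ x, β⟫ := by
      conv_lhs => rw [show x = rE δ (rE δ x) from (rE_rE δ x).symm]
      exact inner_rE_rE δ _ _
    rw [this]
    exact hβneg
  calc nInv Φ v (rE δ x)
      ≤ (({α ∈ Pos Φ v | ⟪x, α⟫ < 0}) \ {δ}).ncard :=
        Set.ncard_le_ncard_of_injOn (rE δ) hmaps hinj (hfin.subset Set.diff_subset)
    _ < nInv Φ v x := Set.ncard_diff_singleton_lt_of_mem hδmem hfin


include hΦfin hΦne hΦrefl hΦcrys hΦred hv in
/-- (iii): the reflection in any positive root is a product of simple reflections. -/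
lemma rE_pos_word {α : E} (hα : α ∈ Pos Φ v) :
    ∃ L : List E, (∀ a ∈ L, a ∈ Simp Φ v) ∧ rE α = prodRE L := by
  classical
  suffices h : ∀ n : ℕ, ∀ α : E, α ∈ Pos Φ v →
      ({γ ∈ Pos Φ v | ⟪v, γ⟫ < ⟪v, α⟫}).ncard ≤ n →
      ∃ L : List E, (∀ a ∈ L, a ∈ Simp Φ v) ∧ rE α = prodRE L by
    exact h _ α hα le_rfl
  intro n
  induction n with
  | zero =>
    intro α hα hcard
    by_cases hs : α ∈ Simp Φ v
    · exact ⟨[α], by simpa using hs, (prodRE_singleton α).symm⟩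
    · exfalso
      -- find δ simple with ⟪α, δ⟫ > 0
      obtain ⟨m, hm, hms⟩ := pos_isSimpSum hΦfin hα
      have hQα : (0:ℝ) < ⟪α, α⟫ := inner_self_pos' (hΦne α hα.1)
      have hsum : ⟪α, α⟫ = (m.map fun z => ⟪α, z⟫).sum := by
        have h' := inner_multiset_sum α m
        rwa [hms] at h'
      have hex : ∃ γ ∈ m, 0 < ⟪α, γ⟫ := by
        by_contra hcon
        push_neg at hcon
        have : (m.map fun z => ⟪α, z⟫).sum ≤ (m.map fun _ => (0:ℝ)).sum :=
          Multiset.sum_map_le_sum_map _ _ hcon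
        simp only [Multiset.map_const', Multiset.sum_replicate, smul_zero] at this
        linarith [hsum ▸ hQα]
      obtain ⟨δ, hδm, hδip⟩ := hex
      have hδ : δ ∈ Simp Φ v := hm δ hδm
      have hαδ : α ≠ δ := fun h => hs (h ▸ hδ)
      have hβ := rE_simp_pos hΦfin hΦne hΦrefl hΦcrys hΦred hv hδ hα hαδ
      have hco : 0 < co δ α := by
        rw [co]
        have := inner_self_pos' (hΦne δ hδ.1.1)
        positivity
      have hlt : ⟪v, rE δ α⟫ < ⟪v, α⟫ := by
        rw [rE_apply, inner_sub_right, real_inner_smul_right]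
        nlinarith [hδ.1.2]
      have hmem : rE δ α ∈ {γ ∈ Pos Φ v | ⟪v, γ⟫ < ⟪v, α⟫} := ⟨hβ.1, hlt⟩
      have : 0 < ({γ ∈ Pos Φ v | ⟪v, γ⟫ < ⟪v, α⟫}).ncard := by
        rw [Set.ncard_pos ((pos_finite hΦfin).subset fun _ h => h.1)]
        exact ⟨_, hmem⟩
      omega
  | succ n ih =>
    intro α hα hcard
    by_cases hs : α ∈ Simp Φ v
    · exact ⟨[α], by simpa using hs, (prodRE_singleton α).symm⟩
    · obtain ⟨m, hm, hms⟩ := pos_isSimpSum hΦfin hα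
      have hQα : (0:ℝ) < ⟪α, α⟫ := inner_self_pos' (hΦne α hα.1)
      have hsum : ⟪α, α⟫ = (m.map fun z => ⟪α, z⟫).sum := by
        have h' := inner_multiset_sum α m
        rwa [hms] at h'
      have hex : ∃ γ ∈ m, 0 < ⟪α, γ⟫ := by
        by_contra hcon
        push_neg at hcon
        have : (m.map fun z => ⟪α, z⟫).sum ≤ (m.map fun _ => (0:ℝ)).sum :=
          Multiset.sum_map_le_sum_map _ _ hcon
        simp only [Multiset.map_const', Multiset.sum_replicate, smul_zero] at this
        linarith [hsum ▸ hQα]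
      obtain ⟨δ, hδm, hδip⟩ := hex
      have hδ : δ ∈ Simp Φ v := hm δ hδm
      have hαδ : α ≠ δ := fun h => hs (h ▸ hδ)
      have hβpos := rE_simp_pos hΦfin hΦne hΦrefl hΦcrys hΦred hv hδ hα hαδ
      set β := rE δ α with hβdef
      have hco : 0 < co δ α := by
        rw [co]
        have := inner_self_pos' (hΦne δ hδ.1.1)
        positivity
      have hlt : ⟪v, β⟫ < ⟪v, α⟫ := by
        rw [hβdef, rE_apply, inner_sub_right, real_inner_smul_right]
        nlinarith [hδ.1.2]
      have hmlt : ({γ ∈ Pos Φ v | ⟪v, γ⟫ < ⟪v, β⟫}).ncard <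
          ({γ ∈ Pos Φ v | ⟪v, γ⟫ < ⟪v, α⟫}).ncard := by
        refine Set.ncard_lt_ncard ?_ ((pos_finite hΦfin).subset fun _ h => h.1)
        constructor
        · rintro y ⟨hy, hylt⟩
          exact ⟨hy, lt_trans hylt hlt⟩
        · intro hsub'
          have := hsub' ⟨hβpos.1, hlt⟩
          exact absurd this.2 (lt_irrefl _)
      obtain ⟨L', hL', hwd⟩ := ih β hβpos.1 (by omega)
      refine ⟨[δ] ++ L' ++ [δ], ?_, ?_⟩
      · intro a ha
        simp only [List.mem_append, List.mem_singleton] at ha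
        rcases ha with (h | h) | h
        · exact h ▸ hδ
        · exact hL' a h
        · exact h ▸ hδ
      · have hαβ : α = rE δ β := by rw [hβdef, rE_rE]
        have hconj : rE (rE δ β) = rE δ * rE β * (rE δ)⁻¹ :=
          rE_conj (fun x y => inner_rE_rE δ x y) β
        rw [prodRE_append, prodRE_append, prodRE_singleton, ← hwd]
        rw [hαβ, hconj, rE_inv, mul_assoc]


include hΦfin hΦne hΦrefl hΦcrys hΦred hv in
/-- (iv)/deletion: a product of simple reflections preserving the positive system is trivial. -/
lemma prodRE_pos_preserving_eq_one :
    ∀ n : ℕ, ∀ L : List E, L.length ≤ n → (∀ a ∈ L, a ∈ Simp Φ v) →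
      (∀ α ∈ Pos Φ v, prodRE L α ∈ Pos Φ v) → prodRE L = 1 := by
  classical
  intro n
  induction n with
  | zero =>
    intro L hlen _ _
    have : L = [] := List.eq_nil_of_length_eq_zero (by omega)
    rw [this, prodRE_nil]
  | succ n ih =>
    intro L hlen hLs hLpos
    rcases L.eq_nil_or_concat' with rfl | ⟨M, aL, rfl⟩
    · rw [prodRE_nil]
    -- setup
    have haLs : aL ∈ Simp Φ v := hLs aL (by simp)
    have haLp : aL ∈ Pos Φ v := haLs.1
    have hMs : ∀ a ∈ M, a ∈ Simp Φ v := fun a ha => hLs a (by simp [ha])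
    have hMΦ : ∀ a ∈ M, a ∈ Φ := fun a ha => (hMs a ha).1.1
    have hnegaL : -aL ∈ Φ := neg_mem hΦne hΦrefl haLp.1
    set k := M.length with hk
    -- the chain
    set t : ℕ → E := fun i => prodRE (M.drop i) (-aL) with ht
    have htΦ : ∀ i, t i ∈ Φ := fun i =>
      prodRE_mem hΦrefl (fun a ha => hMΦ a (List.drop_subset _ _ ha)) hnegaL
    have htk : t k ∉ Pos Φ v := by
      have hdrop : M.drop k = [] := by simp [hk]
      have : t k = -aL := by
        rw [ht]
        show prodRE (M.drop k) (-aL) = -aL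
        rw [hdrop, prodRE_nil]
        rfl
      rw [this]
      exact not_pos_of_neg_pos (by rwa [neg_neg])
    have hL_eq : prodRE (M ++ [aL]) = prodRE M * rE aL := by
      rw [prodRE_append, prodRE_singleton]
    have ht0 : t 0 ∈ Pos Φ v := by
      have h1 : t 0 = prodRE (M ++ [aL]) aL := by
        rw [ht, hL_eq]
        show prodRE M (-aL) = (prodRE M) (rE aL aL)
        rw [rE_self (hΦne aL haLp.1)]
      rw [h1]
      exact hLpos aL haLp
    have hrel : ∀ i (hik : i < k), t i = rE (M[i]'hik) (t (i + 1)) := by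
      intro i hik
      rw [ht]
      show prodRE (M.drop i) (-aL) = rE (M[i]'hik) (prodRE (M.drop (i+1)) (-aL))
      rw [List.drop_eq_getElem_cons hik, prodRE_cons]
      rfl
    -- minimal index with t j not positive
    have hex : ∃ i, t i ∉ Pos Φ v := ⟨k, htk⟩
    have hJ : ∃ j, t j ∉ Pos Φ v ∧ j ≤ k ∧ j ≠ 0 ∧ ∀ m < j, t m ∈ Pos Φ v := by
      refine ⟨Nat.find hex, Nat.find_spec hex, Nat.find_min' hex htk, ?_, ?_⟩
      · intro h
        exact (h ▸ Nat.find_spec hex) ht0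
      · intro m hm
        exact not_not.mp (Nat.find_min hex hm)
    obtain ⟨j, hjspec, hjk, hj0, hjmin⟩ := hJ
    obtain ⟨i, rfl⟩ : ∃ i, j = i + 1 := ⟨j - 1, by omega⟩
    have hik : i < k := by omega
    have hti : t i ∈ Pos Φ v := hjmin i (by omega)
    -- identify t (i+1) = -M[i]
    have htipos : rE (M[i]'hik) (t (i + 1)) ∈ Pos Φ v := by
      rw [← hrel i hik]; exact hti
    have hMi : M[i]'hik ∈ Simp Φ v := hMs _ (List.getElem_mem hik)
    have htneg : t (i + 1) = -(M[i]'hik) :=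
      eq_neg_of_rE_pos hΦfin hΦne hΦrefl hΦcrys hΦred hv hMi (htΦ _) hjspec htipos
    -- conjugation
    set g := prodRE (M.drop (i + 1)) with hg
    have hgaL : g aL = M[i]'hik := by
      have h1 : g (-aL) = -(M[i]'hik) := htneg
      have h2 : g (-aL) = -(g aL) := map_neg g aL
      rw [h2] at h1
      exact neg_injective h1
    have hconj : rE (M[i]'hik) * g = g * rE aL := by
      have h1 : rE (g aL) = g * rE aL * g⁻¹ :=
        rE_conj (fun x y => prodRE_inner _ x y) aL
      rw [hgaL] at h1
      rw [h1, mul_assoc, inv_mul_cancel, mul_one]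
    -- rewrite the product
    have hsplit : prodRE M = prodRE (M.take i) * (rE (M[i]'hik) * g) := by
      conv_lhs => rw [← List.take_append_drop i M]
      rw [prodRE_append, List.drop_eq_getElem_cons hik, prodRE_cons]
    have hLnew : prodRE (M ++ [aL]) = prodRE (M.take i ++ M.drop (i + 1)) := by
      rw [hL_eq, hsplit, hconj, prodRE_append]
      rw [mul_assoc, mul_assoc, rE_mul_self, mul_one]
    -- conclude by induction
    have hlen' : (M.take i ++ M.drop (i + 1)).length ≤ n := by
      rw [List.length_append, List.length_take, List.length_drop]
      have hlenL : (M ++ [aL]).length = k + 1 := by simp [hk]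
      omega
    have hs' : ∀ a ∈ M.take i ++ M.drop (i + 1), a ∈ Simp Φ v := by
      intro a ha
      rcases List.mem_append.mp ha with h | h
      · exact hMs a (List.take_subset _ _ h)
      · exact hMs a (List.drop_subset _ _ h)
    have hpos' : ∀ α ∈ Pos Φ v, prodRE (M.take i ++ M.drop (i + 1)) α ∈ Pos Φ v := by
      intro α hα
      rw [← hLnew]
      exact hLpos α hα
    rw [hLnew]
    exact ih _ hlen' hs' hpos'


section Weyl

variable (W : Subgroup (E ≃ₗ[ℝ] E))
  (hW : W = Subgroup.closure
    {s : E ≃ₗ[ℝ] E | ∃ α ∈ Φ, ∀ x : E, s x = x - (2 * ⟪x, α⟫ / ⟪α, α⟫) • α})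

include hW in
lemma rE_mem_W {α : E} (hα : α ∈ Φ) : rE α ∈ W := by
  rw [hW]
  exact Subgroup.subset_closure ⟨α, hα, fun x => rfl⟩

include hΦfin hΦne hΦrefl hΦcrys hΦred hv hW in
lemma exists_word {g : E ≃ₗ[ℝ] E} (hg : g ∈ W) :
    ∃ L : List E, (∀ a ∈ L, a ∈ Simp Φ v) ∧ g = prodRE L := by
  rw [hW] at hg
  induction hg using Subgroup.closure_induction with
  | mem s hs =>
    obtain ⟨α, hα, hsα⟩ := hs
    have hseq : s = rE α := LinearEquiv.ext fun x => hsα x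
    rcases Classical.em (α ∈ Pos Φ v) with hp | hp
    · obtain ⟨L, hL, hw⟩ := rE_pos_word hΦfin hΦne hΦrefl hΦcrys hΦred hv hp
      exact ⟨L, hL, hseq ▸ hw⟩
    · have hnp : -α ∈ Pos Φ v := neg_mem_pos_of_not_pos hΦne hΦrefl hv hα hp
      obtain ⟨L, hL, hw⟩ := rE_pos_word hΦfin hΦne hΦrefl hΦcrys hΦred hv hnp
      refine ⟨L, hL, ?_⟩
      rw [hseq, ← rE_neg, hw]
  | one => exact ⟨[], by simp, prodRE_nil.symm⟩
  | mul x y hx hy ihx ihy =>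
    obtain ⟨L₁, hL₁, hw₁⟩ := ihx
    obtain ⟨L₂, hL₂, hw₂⟩ := ihy
    refine ⟨L₁ ++ L₂, ?_, by rw [prodRE_append, hw₁, hw₂]⟩
    intro a ha
    rcases List.mem_append.mp ha with h | h
    · exact hL₁ a h
    · exact hL₂ a h
  | inv x hx ihx =>
    obtain ⟨L, hL, hw⟩ := ihx
    refine ⟨L.reverse, fun a ha => hL a (List.mem_reverse.mp ha), ?_⟩
    rw [hw, prodRE_inv_reverse]

include hΦfin hΦne hΦrefl hΦcrys hΦred hv hW in
lemma W_inner {g : E ≃ₗ[ℝ] E} (hg : g ∈ W) (x y : E) : ⟪g x, g y⟫ = ⟪x, y⟫ := by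
  obtain ⟨L, _, rfl⟩ := exists_word hΦfin hΦne hΦrefl hΦcrys hΦred hv W hW hg
  exact prodRE_inner L x y

include hΦfin hΦne hΦrefl hΦcrys hΦred hv hW in
lemma W_mem_Φ {g : E ≃ₗ[ℝ] E} (hg : g ∈ W) {x : E} (hx : x ∈ Φ) : g x ∈ Φ := by
  obtain ⟨L, hL, rfl⟩ := exists_word hΦfin hΦne hΦrefl hΦcrys hΦred hv W hW hg
  exact prodRE_mem hΦrefl (fun a ha => (hL a ha).1.1) hx

include hΦfin hΦne hΦrefl hΦcrys hΦred hv hW in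
/-- Key step: if `g` sends some positive root negative, it sends some simple root negative. -/
lemma exists_simp_g_neg {g : E ≃ₗ[ℝ] E} (hg : g ∈ W)
    (h : ∃ α ∈ Pos Φ v, g α ∉ Pos Φ v) : ∃ δ ∈ Simp Φ v, g δ ∉ Pos Φ v := by
  obtain ⟨α, hα, hgα⟩ := h
  by_contra hcon
  push_neg at hcon
  obtain ⟨m, hm, hms⟩ := pos_isSimpSum hΦfin hα
  have hgαΦ : g α ∈ Φ := W_mem_Φ hΦfin hΦne hΦrefl hΦcrys hΦred hv W hW hg hα.1
  have hneg : ⟪v, g α⟫ < 0 := neg_inner_of_not_pos hv hgαΦ hgα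
  have hsum : g α = (m.map fun γ => g γ).sum := by
    rw [← hms, map_multiset_sum]
  have h2 : ⟪v, g α⟫ = ((m.map fun γ => g γ).map fun z => ⟪v, z⟫).sum := by
    rw [hsum]
    exact inner_multiset_sum v _
  have h3 : 0 ≤ ((m.map fun γ => g γ).map fun z => ⟪v, z⟫).sum := by
    refine Multiset.sum_nonneg ?_
    intro y hy
    obtain ⟨z, hz, rfl⟩ := Multiset.mem_map.mp hy
    obtain ⟨γ, hγ, rfl⟩ := Multiset.mem_map.mp hz
    exact le_of_lt (hcon γ (hm γ hγ)).2
  linarith [h2 ▸ hneg]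

include hΦfin hΦne hΦrefl hΦcrys hΦred hv hW in
/-- Uniqueness of the dominant representative in a Weyl orbit. -/
lemma dominant_eq {z x : E} (hz : ∀ α ∈ Pos Φ v, 0 ≤ ⟪z, α⟫)
    (hx : ∀ α ∈ Pos Φ v, 0 ≤ ⟪x, α⟫) {g : E ≃ₗ[ℝ] E} (hg : g ∈ W) (hgz : g z = x) :
    x = z := by
  classical
  suffices h : ∀ n : ℕ, ∀ g : E ≃ₗ[ℝ] E, g ∈ W →
      ({α ∈ Pos Φ v | g α ∉ Pos Φ v}).ncard ≤ n → g z = x → x = z by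
    exact h _ g hg le_rfl hgz
  intro n
  induction n with
  | zero =>
    intro g hg hcard hgz
    have hempty : {α ∈ Pos Φ v | g α ∉ Pos Φ v} = ∅ := by
      rw [← Set.ncard_eq_zero ((pos_finite hΦfin).subset fun _ h => h.1)]
      omega
    have hpres : ∀ α ∈ Pos Φ v, g α ∈ Pos Φ v := by
      intro α hα
      by_contra hcon
      have : α ∈ {α ∈ Pos Φ v | g α ∉ Pos Φ v} := ⟨hα, hcon⟩
      rw [hempty] at this
      exact this
    obtain ⟨L, hL, hword⟩ := exists_word hΦfin hΦne hΦrefl hΦcrys hΦred hv W hW hg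
    have h1 : prodRE L = 1 := by
      refine prodRE_pos_preserving_eq_one hΦfin hΦne hΦrefl hΦcrys hΦred hv
        L.length L le_rfl hL ?_
      intro α hα
      rw [← hword]
      exact hpres α hα
    rw [hword, h1] at hgz
    rw [← hgz]
    rfl
  | succ n ih =>
    intro g hg hcard hgz
    by_cases hzero : ({α ∈ Pos Φ v | g α ∉ Pos Φ v}).ncard = 0
    · exact ih g hg (by omega) hgz
    have hne : ∃ α ∈ Pos Φ v, g α ∉ Pos Φ v := by
      by_contra hcon
      push_neg at hcon
      have : {α ∈ Pos Φ v | g α ∉ Pos Φ v} = ∅ := by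
        ext y
        simp only [Set.mem_setOf_eq, Set.mem_empty_iff_false, iff_false, not_and, not_not]
        intro hy
        exact hcon y hy
      rw [this, Set.ncard_empty] at hzero
      exact hzero rfl
    obtain ⟨δ, hδ, hgδ⟩ := exists_simp_g_neg hΦfin hΦne hΦrefl hΦcrys hΦred hv W hW hg hne
    have hgδΦ : g δ ∈ Φ := W_mem_Φ hΦfin hΦne hΦrefl hΦcrys hΦred hv W hW hg hδ.1.1
    -- z ⊥ δ
    have hzδ : ⟪z, δ⟫ = 0 := by
      have h1 : 0 ≤ ⟪z, δ⟫ := hz δ hδ.1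
      have h2 : ⟪z, δ⟫ = ⟪x, g δ⟫ := by
        rw [← hgz]
        exact (W_inner hΦfin hΦne hΦrefl hΦcrys hΦred hv W hW hg z δ).symm
      have h3 : -(g δ) ∈ Pos Φ v := neg_mem_pos_of_not_pos hΦne hΦrefl hv hgδΦ hgδ
      have h4 : 0 ≤ ⟪x, -(g δ)⟫ := hx _ h3
      rw [inner_neg_right] at h4
      linarith [h2 ▸ h1]
    set g' := g * rE δ with hg'def
    have hg' : g' ∈ W := mul_mem hg (rE_mem_W W hW hδ.1.1)
    have hg'z : g' z = x := by
      rw [hg'def]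
      show g (rE δ z) = x
      rw [rE_fix hzδ, hgz]
    -- decrement
    have hδS : δ ∈ {α ∈ Pos Φ v | g α ∉ Pos Φ v} := ⟨hδ.1, hgδ⟩
    have hfin : ({α ∈ Pos Φ v | g α ∉ Pos Φ v}).Finite :=
      (pos_finite hΦfin).subset fun _ h => h.1
    have hmaps : ∀ β ∈ {α ∈ Pos Φ v | g' α ∉ Pos Φ v},
        rE δ β ∈ {α ∈ Pos Φ v | g α ∉ Pos Φ v} \ {δ} := by
      rintro β ⟨hβ, hβneg⟩
      have hβδ : β ≠ δ := by
        intro h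
        rw [h] at hβneg
        have : g' δ = -(g δ) := by
          rw [hg'def]
          show g (rE δ δ) = -(g δ)
          rw [rE_self (hΦne δ hδ.1.1), map_neg]
        rw [this] at hβneg
        exact hβneg (neg_mem_pos_of_not_pos hΦne hΦrefl hv hgδΦ hgδ)
      have h3 := rE_simp_pos hΦfin hΦne hΦrefl hΦcrys hΦred hv hδ hβ hβδ
      refine ⟨⟨h3.1, ?_⟩, by simpa using h3.2⟩
      have : g (rE δ β) = g' β := rfl
      rw [this]
      exact hβneg
    have hinj : Set.InjOn (rE δ) {α ∈ Pos Φ v | g' α ∉ Pos Φ v} :=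
      fun a _ b _ hab => (rE δ).injective hab
    have hdec : ({α ∈ Pos Φ v | g' α ∉ Pos Φ v}).ncard ≤ n := by
      have h5 : ({α ∈ Pos Φ v | g' α ∉ Pos Φ v}).ncard ≤
          (({α ∈ Pos Φ v | g α ∉ Pos Φ v}) \ {δ}).ncard :=
        Set.ncard_le_ncard_of_injOn (rE δ) hmaps hinj (hfin.subset Set.diff_subset)
      have h6 := Set.ncard_diff_singleton_lt_of_mem hδS hfin
      omega
    exact ih g' hg' hdec hg'z


lemma orbit_invar {g : E ≃ₗ[ℝ] E} (hg : g ∈ W) (m : E) :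
    g '' ((fun h : E ≃ₗ[ℝ] E => h m) '' (W : Set (E ≃ₗ[ℝ] E))) ⊆
      (fun h : E ≃ₗ[ℝ] E => h m) '' (W : Set (E ≃ₗ[ℝ] E)) := by
  rintro _ ⟨_, ⟨h, hh, rfl⟩, rfl⟩
  exact ⟨g * h, mul_mem hg hh, rfl⟩

lemma K_invar {g : E ≃ₗ[ℝ] E} (hg : g ∈ W) (m : E) {p : E}
    (hp : p ∈ convexHull ℝ ((fun h : E ≃ₗ[ℝ] E => h m) '' (W : Set (E ≃ₗ[ℝ] E)))) :
    g p ∈ convexHull ℝ ((fun h : E ≃ₗ[ℝ] E => h m) '' (W : Set (E ≃ₗ[ℝ] E))) := by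
  have h1 : g p ∈ g '' convexHull ℝ ((fun h : E ≃ₗ[ℝ] E => h m) '' (W : Set (E ≃ₗ[ℝ] E))) :=
    ⟨p, hp, rfl⟩
  have h2 : g '' convexHull ℝ ((fun h : E ≃ₗ[ℝ] E => h m) '' (W : Set (E ≃ₗ[ℝ] E))) =
      convexHull ℝ (g '' ((fun h : E ≃ₗ[ℝ] E => h m) '' (W : Set (E ≃ₗ[ℝ] E)))) := by
    exact (g : E →ₗ[ℝ] E).image_convexHull _
  rw [h2] at h1
  exact convexHull_mono (orbit_invar W hg m) h1

include hΦfin hΦne hΦrefl hΦcrys hΦred hv hW in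
/-- Main induction: `μ₁ + (orbit point of μ₂)` lies in the hull of the orbit of `μ₁ + μ₂`. -/
lemma mu_add_orbit_mem {μ₁ μ₂ : E}
    (hdom₁ : ∀ α ∈ Pos Φ v, 0 ≤ ⟪μ₁, α⟫) (hdom₂ : ∀ α ∈ Pos Φ v, 0 ≤ ⟪μ₂, α⟫) :
    ∀ g ∈ W, μ₁ + g μ₂ ∈
      convexHull ℝ ((fun h : E ≃ₗ[ℝ] E => h (μ₁ + μ₂)) '' (W : Set (E ≃ₗ[ℝ] E))) := by
  classical
  suffices h : ∀ n : ℕ, ∀ g ∈ W, nInv Φ v (g μ₂) ≤ n → μ₁ + g μ₂ ∈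
      convexHull ℝ ((fun h : E ≃ₗ[ℝ] E => h (μ₁ + μ₂)) '' (W : Set (E ≃ₗ[ℝ] E))) by
    exact fun g hg => h _ g hg le_rfl
  intro n
  induction n with
  | zero =>
    intro g hg hcard
    by_cases hdom : ∀ α ∈ Pos Φ v, 0 ≤ ⟪g μ₂, α⟫
    · have heq : g μ₂ = μ₂ :=
        dominant_eq hΦfin hΦne hΦrefl hΦcrys hΦred hv W hW hdom₂ hdom hg rfl
      rw [heq]
      exact subset_convexHull ℝ _ ⟨1, one_mem W, rfl⟩
    · exfalso
      push_neg at hdom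
      obtain ⟨α, hα, hxα⟩ := hdom
      have : α ∈ {β ∈ Pos Φ v | ⟪g μ₂, β⟫ < 0} := ⟨hα, by linarith⟩
      have h0 : 0 < nInv Φ v (g μ₂) := by
        rw [nInv, Set.ncard_pos ((pos_finite hΦfin).subset fun _ h => h.1)]
        exact ⟨α, this⟩
      omega
  | succ n ih =>
    intro g hg hcard
    by_cases hdom : ∀ α ∈ Pos Φ v, 0 ≤ ⟪g μ₂, α⟫
    · have heq : g μ₂ = μ₂ :=
        dominant_eq hΦfin hΦne hΦrefl hΦcrys hΦred hv W hW hdom₂ hdom hg rfl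
      rw [heq]
      exact subset_convexHull ℝ _ ⟨1, one_mem W, rfl⟩
    · push_neg at hdom
      obtain ⟨α', hα', hxα'⟩ := hdom
      obtain ⟨δ, hδ, hxδ⟩ := exists_simp_neg hΦfin ⟨α', hα', by linarith⟩
      set x := g μ₂ with hxdef
      have hδΦ : δ ∈ Φ := hδ.1.1
      have hQδ : (0:ℝ) < ⟪δ, δ⟫ := inner_self_pos' (hΦne δ hδΦ)
      have hc : co δ x < 0 := div_neg_of_neg_of_pos (by linarith) hQδ
      have hc₁ : 0 ≤ co δ μ₁ := div_nonneg (by linarith [hdom₁ δ hδ.1]) (le_of_lt hQδ)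
      set c := co δ x
      set c₁ := co δ μ₁
      -- induction step for rE δ * g
      have hg'' : rE δ * g ∈ W := mul_mem (rE_mem_W W hW hδΦ) hg
      have hx'' : (rE δ * g) μ₂ = rE δ x := rfl
      have hdec : nInv Φ v ((rE δ * g) μ₂) ≤ n := by
        rw [hx'']
        have := nInv_rE_lt hΦfin hΦne hΦrefl hΦcrys hΦred hv hδ hxδ
        omega
      have hA := ih (rE δ * g) hg'' hdec
      rw [hx''] at hA
      set K := convexHull ℝ ((fun h : E ≃ₗ[ℝ] E => h (μ₁ + μ₂)) '' (W : Set (E ≃ₗ[ℝ] E)))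
      have hB : rE δ (μ₁ + rE δ x) ∈ K := K_invar W (rE_mem_W W hW hδΦ) _ hA
      have hBeq : rE δ (μ₁ + rE δ x) = (μ₁ + x) - c₁ • δ := by
        rw [map_add, rE_rE, rE_apply]
        abel
      have hAeq : μ₁ + rE δ x = (μ₁ + x) - c • δ := by
        rw [rE_apply]
        abel
      rw [hAeq] at hA
      rw [hBeq] at hB
      set p := μ₁ + x
      set t := c₁ / (c₁ - c) with htdef
      have hden : 0 < c₁ - c := by linarith
      have ht0 : 0 ≤ t := div_nonneg hc₁ (le_of_lt hden)
      have ht1 : 0 ≤ 1 - t := by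
        have : t ≤ 1 := by
          rw [htdef, div_le_one hden]
          linarith
        linarith
      have hco0 : t * c + (1 - t) * c₁ = 0 := by
        rw [htdef]
        field_simp
        ring
      have hcomb : t • (p - c • δ) + (1 - t) • (p - c₁ • δ) = p := by
        have h1 : t • (p - c • δ) + (1 - t) • (p - c₁ • δ) =
            (t + (1 - t)) • p - (t * c + (1 - t) * c₁) • δ := by
          rw [smul_sub, smul_sub, smul_smul, smul_smul, add_smul, add_smul]
          abel
        rw [h1, hco0, zero_smul, sub_zero, show t + (1 - t) = 1 by ring, one_smul]
      have hmem := (convex_convexHull ℝ _) hA hB ht0 ht1 (by ring : t + (1 - t) = 1)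
      rw [hcomb] at hmem
      exact hmem

end Weyl
end RootSystem
end WeylOrbitAux

/-- Let `Φ` be a finite, reduced, crystallographic root system in a
finite-dimensional real inner product space `E`, with Weyl group `W` (the subgroup of linear
automorphisms generated by the orthogonal reflections in the roots) and positive system `Φ⁺`
cut out by a regular vector `v`.  If `μ₁` and `μ₂` are dominant integral weights then
`Co(W·μ₁) + Co(W·μ₂) = Co(W·(μ₁+μ₂))` (convex hulls, Minkowski sum). -/
theorem convexHull_weylOrbit_add
    {E : Type*} [NormedAddCommGroup E] [InnerProductSpace ℝ E] [FiniteDimensional ℝ E]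
    (Φ : Set E) (hΦfin : Φ.Finite)
    (hΦne : ∀ α ∈ Φ, α ≠ 0)
    (hΦrefl : ∀ α ∈ Φ, ∀ β ∈ Φ, β - (2 * ⟪β, α⟫ / ⟪α, α⟫) • α ∈ Φ)
    (hΦcrys : ∀ α ∈ Φ, ∀ β ∈ Φ, ∃ n : ℤ, 2 * ⟪β, α⟫ / ⟪α, α⟫ = (n : ℝ))
    (hΦred : ∀ α ∈ Φ, ∀ t : ℝ, t • α ∈ Φ → t = 1 ∨ t = -1)
    (v : E) (hv : ∀ α ∈ Φ, ⟪v, α⟫ ≠ 0)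
    (W : Subgroup (E ≃ₗ[ℝ] E))
    (hW : W = Subgroup.closure
      {s : E ≃ₗ[ℝ] E | ∃ α ∈ Φ, ∀ x : E, s x = x - (2 * ⟪x, α⟫ / ⟪α, α⟫) • α})
    (μ₁ μ₂ : E)
    (hdom₁ : ∀ α ∈ Φ, 0 < ⟪v, α⟫ → 0 ≤ ⟪μ₁, α⟫)
    (hdom₂ : ∀ α ∈ Φ, 0 < ⟪v, α⟫ → 0 ≤ ⟪μ₂, α⟫)
    (hint₁ : ∀ α ∈ Φ, ∃ n : ℤ, 2 * ⟪μ₁, α⟫ / ⟪α, α⟫ = (n : ℝ))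
    (hint₂ : ∀ α ∈ Φ, ∃ n : ℤ, 2 * ⟪μ₂, α⟫ / ⟪α, α⟫ = (n : ℝ)) :
    convexHull ℝ ((fun g : E ≃ₗ[ℝ] E => g μ₁) '' (W : Set (E ≃ₗ[ℝ] E))) +
      convexHull ℝ ((fun g : E ≃ₗ[ℝ] E => g μ₂) '' (W : Set (E ≃ₗ[ℝ] E))) =
      convexHull ℝ ((fun g : E ≃ₗ[ℝ] E => g (μ₁ + μ₂)) '' (W : Set (E ≃ₗ[ℝ] E))) := by
  open WeylOrbitAux in
  classical
  set A₁ := (fun g : E ≃ₗ[ℝ] E => g μ₁) '' (W : Set (E ≃ₗ[ℝ] E)) with hA₁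
  set A₂ := (fun g : E ≃ₗ[ℝ] E => g μ₂) '' (W : Set (E ≃ₗ[ℝ] E)) with hA₂
  set A₁₂ := (fun g : E ≃ₗ[ℝ] E => g (μ₁ + μ₂)) '' (W : Set (E ≃ₗ[ℝ] E)) with hA₁₂
  have hdom₁' : ∀ α ∈ WeylOrbitAux.Pos Φ v, 0 ≤ ⟪μ₁, α⟫ := fun α hα => hdom₁ α hα.1 hα.2
  have hdom₂' : ∀ α ∈ WeylOrbitAux.Pos Φ v, 0 ≤ ⟪μ₂, α⟫ := fun α hα => hdom₂ α hα.1 hα.2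
  have hmain := WeylOrbitAux.mu_add_orbit_mem hΦfin hΦne hΦrefl hΦcrys hΦred hv W hW
    hdom₁' hdom₂'
  have hkey : A₁ + A₂ ⊆ convexHull ℝ A₁₂ := by
    rintro _ ⟨_, ⟨g, hg, rfl⟩, _, ⟨h, hh, rfl⟩, rfl⟩
    have hq := hmain (g⁻¹ * h) (mul_mem (inv_mem hg) hh)
    have hgq := WeylOrbitAux.K_invar W hg (μ₁ + μ₂) hq
    have heq : g (μ₁ + (g⁻¹ * h) μ₂) = g μ₁ + h μ₂ := by
      rw [map_add]
      congr 1
      show g ((g⁻¹ * h) μ₂) = h μ₂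
      rw [show g ((g⁻¹ * h) μ₂) = (g * (g⁻¹ * h)) μ₂ from rfl, mul_inv_cancel_left]
    rw [heq] at hgq
    exact hgq
  have hsub₂ : A₁₂ ⊆ A₁ + A₂ := by
    rintro _ ⟨g, hg, rfl⟩
    show g (μ₁ + μ₂) ∈ A₁ + A₂
    have : g (μ₁ + μ₂) = g μ₁ + g μ₂ := map_add g μ₁ μ₂
    rw [this]
    exact Set.add_mem_add ⟨g, hg, rfl⟩ ⟨g, hg, rfl⟩
  have heq : convexHull ℝ (A₁ + A₂) = convexHull ℝ A₁₂ :=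
    le_antisymm (convexHull_min hkey (convex_convexHull ℝ A₁₂)) (convexHull_mono hsub₂)
  rw [← convexHull_add, heq]
end

section
/- Let A be a unital associative ℂ-algebra of at most countable dimension over ℂ, and suppose A admits an infinite-dimensional simple left A-module M. Then for every n ≥ 1, every polynomial identity of A is a polynomial identity of the matrix algebra Mₙ(ℂ); consequently PIdeg(A) = ∞. -/
/-- A noncommutative polynomial with integer coefficients in `n` indeterminates (an element of
the free `ℤ`-algebra on `n` generators) is a *polynomial identity* of a ring `A` if it vanishes
under every substitution of elements of `A` for the indeterminates. -/
def IsPolyIdentity (A : Type*) [Ring A] {n : ℕ} (p : FreeAlgebra ℤ (Fin n)) : Prop :=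
  ∀ v : Fin n → A, FreeAlgebra.lift ℤ v p = 0

/-- The PI degree of a ring `A`:
`PIdeg A = sup {n ≥ 1 : every polynomial identity of A is a polynomial identity of Mₙ(ℂ)}`,
an element of `ℕ∞`. -/
noncomputable def PIdeg (A : Type*) [Ring A] : ℕ∞ :=
  sSup {N : ℕ∞ | ∃ n : ℕ, N = n ∧ 1 ≤ n ∧
    ∀ (m : ℕ) (p : FreeAlgebra ℤ (Fin m)),
      IsPolyIdentity A p → IsPolyIdentity (Matrix (Fin n) (Fin n) ℂ) p}


open Cardinal in
lemma aux_dixmier {D : Type*} [DivisionRing D] [Algebra ℂ D]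
    (h : Module.rank ℂ D ≤ Cardinal.aleph0) :
    Function.Surjective (algebraMap ℂ D) := by
  have hint : ∀ d : D, IsIntegral ℂ d := by
    intro d
    by_contra hni
    have htr : Transcendental ℂ d := fun halg => hni halg.isIntegral
    set s : Set D := Set.centralizer {d} with hs
    set E : Subring D := Subring.centralizer s with hE
    have hds : d ∈ s := fun m hm => by
      rw [Set.mem_singleton_iff] at hm; rw [hm]
    have hdE : d ∈ E :=
      Subring.mem_centralizer_iff.2 fun g hg => (hg d (Set.mem_singleton d)).symm
    have hcE : ∀ c : ℂ, algebraMap ℂ D c ∈ E :=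
      fun c => Subring.mem_centralizer_iff.2 fun g _ => (Algebra.commutes c g).symm
    have hinv : ∀ x : D, x ∈ E → x⁻¹ ∈ E := by
      intro x hx
      have hx' : x ∈ Set.centralizer s := Set.mem_centralizer_iff.2
        (Subring.mem_centralizer_iff.1 hx)
      exact Subring.mem_centralizer_iff.2 (Set.mem_centralizer_iff.1
        (Set.inv_mem_centralizer₀ hx'))
    have hcomm : ∀ x y : E, x * y = y * x := by
      rintro ⟨x, hx⟩ ⟨y, hy⟩
      apply Subtype.ext
      have hxs : x ∈ s := by
        rw [hs]
        refine Set.mem_centralizer_iff.2 fun m hm => ?_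
        rw [Set.mem_singleton_iff] at hm
        rw [hm]
        exact Subring.mem_centralizer_iff.1 hx d hds
      exact Subring.mem_centralizer_iff.1 hy x hxs
    letI : Field E := IsField.toField
      { exists_pair_ne := ⟨0, 1, fun h01 => zero_ne_one (α := D) (congrArg Subtype.val h01)⟩
        mul_comm := hcomm
        mul_inv_cancel := fun {a} ha => ⟨⟨(a : D)⁻¹, hinv _ a.2⟩,
          Subtype.ext (mul_inv_cancel₀ (fun h0 => ha (Subtype.ext h0)))⟩ }
    letI : Algebra ℂ E := ((algebraMap ℂ D).codRestrict E hcE).toAlgebra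
    set x : E := ⟨d, hdE⟩ with hx
    let ι : E →ₐ[ℂ] D := { toRingHom := E.subtype, commutes' := fun c => rfl }
    have htrx : Transcendental ℂ x := by
      rw [transcendental_iff]
      intro p hp
      rw [transcendental_iff] at htr
      refine htr p ?_
      have : d = ι x := rfl
      rw [this, Polynomial.aeval_algHom_apply, hp, map_zero]
    have hli := htrx.linearIndependent_sub_inv
    have hinj : LinearMap.ker ι.toLinearMap = ⊥ :=
      LinearMap.ker_eq_bot.2 (fun a b hab => Subtype.val_injective hab)
    have hli2 := hli.map' ι.toLinearMap hinj
    have hcard := hli2.cardinal_lift_le_rank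
    have hfin := hcard.trans (Cardinal.lift_le.2 h)
    rw [mk_complex, Cardinal.lift_aleph0, Cardinal.lift_continuum] at hfin
    exact absurd hfin (not_le.2 Cardinal.aleph0_lt_continuum)
  haveI : Algebra.IsIntegral ℂ D := ⟨hint⟩
  exact IsAlgClosed.algebraMap_bijective_of_isIntegral.2


/-- Jacobson density, in the form needed: if every `A`-endomorphism of the simple module `M`
is a complex scalar, then the action of `A` on finitely many `ℂ`-linearly independent vectors
can be prescribed arbitrarily. -/
lemma aux_density {A : Type*} [Ring A] {M : Type*} [AddCommGroup M] [Module A M]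
    [Module ℂ M] [IsSimpleModule A M]
    (hEnd : ∀ f : M →ₗ[A] M, ∃ c : ℂ, ∀ m : M, f m = c • m) :
    ∀ (k : ℕ) (e : Fin k → M), LinearIndependent ℂ e →
      ∀ w : Fin k → M, ∃ a : A, ∀ i, a • e i = w i := by
  intro k
  induction k with
  | zero => exact fun e _ w => ⟨0, fun i => i.elim0⟩
  | succ k IH =>
    have claim : ∀ (e : Fin (k+1) → M), LinearIndependent ℂ e →
        ∃ a : A, (∀ j : Fin k, a • e j.castSucc = 0) ∧ a • e (Fin.last k) ≠ 0 := by
      intro e he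
      by_contra hcon
      push_neg at hcon
      have key : ∀ a b : A, (∀ j : Fin k, a • e j.castSucc = b • e j.castSucc) →
          a • e (Fin.last k) = b • e (Fin.last k) := by
        intro a b hab
        have := hcon (a - b) (fun j => by rw [sub_smul, hab j, sub_self])
        rwa [sub_smul, sub_eq_zero] at this
      have hec : LinearIndependent ℂ (fun j : Fin k => e j.castSucc) :=
        he.comp Fin.castSucc (Fin.castSucc_injective k)
      have pick : ∀ (i : Fin k) (m : M), ∃ a : A,
          ∀ j : Fin k, a • e j.castSucc = if j = i then m else 0 :=
        fun i m => IH _ hec (fun j => if j = i then m else 0)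
      choose ga hga using pick
      have hg : ∀ i : Fin k, ∃ c : ℂ, ∀ m : M, ga i m • e (Fin.last k) = c • m := by
        intro i
        have hadd : ∀ m₁ m₂ : M, ga i (m₁ + m₂) • e (Fin.last k)
            = ga i m₁ • e (Fin.last k) + ga i m₂ • e (Fin.last k) := by
          intro m₁ m₂
          rw [← add_smul]
          exact key _ _ (fun j => by rw [hga, add_smul, hga, hga]; split <;> simp)
        have hsmul : ∀ (b : A) (m : M), ga i (b • m) • e (Fin.last k)
            = b • (ga i m • e (Fin.last k)) := by
          intro b m
          rw [← mul_smul]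
          exact key _ _ (fun j => by rw [hga, mul_smul, hga]; split <;> simp)
        obtain ⟨c, hc⟩ := hEnd
          { toFun := fun m => ga i m • e (Fin.last k)
            map_add' := hadd
            map_smul' := hsmul }
        exact ⟨c, fun m => hc m⟩
      choose cc hcc using hg
      have heval : e (Fin.last k) = ∑ i : Fin k, cc i • e i.castSucc := by
        have h1 : (1 : A) • e (Fin.last k)
            = (∑ i : Fin k, ga i (e i.castSucc)) • e (Fin.last k) := by
          apply key
          intro j
          rw [one_smul, Finset.sum_smul]
          simp [hga]
        rw [one_smul, Finset.sum_smul] at h1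
        calc e (Fin.last k) = ∑ i : Fin k, ga i (e i.castSucc) • e (Fin.last k) := h1
          _ = ∑ i : Fin k, cc i • e i.castSucc :=
            Finset.sum_congr rfl fun i _ => hcc i (e i.castSucc)
      have heq : (Fin.snoc (fun j : Fin k => e j.castSucc) (e (Fin.last k)) : Fin (k+1) → M)
          = e := by
        funext i
        refine Fin.lastCases ?_ ?_ i
        · rw [Fin.snoc_last]
        · intro j; rw [Fin.snoc_castSucc]
      have h5 : LinearIndependent ℂ
          (Fin.snoc (fun j : Fin k => e j.castSucc) (e (Fin.last k)) : Fin (k+1) → M) := by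
        rw [heq]; exact he
      rw [linearIndependent_fin_snoc] at h5
      refine h5.2 ?_
      rw [heval]
      exact Submodule.sum_mem _ fun i _ =>
        Submodule.smul_mem _ _ (Submodule.subset_span ⟨i, rfl⟩)
    intro e he w
    have hone : ∀ i₀ : Fin (k+1), ∃ a : A, (∀ j, j ≠ i₀ → a • e j = 0) ∧ a • e i₀ ≠ 0 := by
      intro i₀
      set σ := Equiv.swap i₀ (Fin.last k) with hσ
      have hp : LinearIndependent ℂ (e ∘ σ) := he.comp σ σ.injective
      obtain ⟨a, h0, hne⟩ := claim (e ∘ σ) hp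
      refine ⟨a, fun j hj => ?_, ?_⟩
      · have hjl : σ j ≠ Fin.last k := by
          intro hh
          apply hj
          have h2 := congrArg σ hh
          rwa [Equiv.swap_apply_self, Equiv.swap_apply_right] at h2
        obtain ⟨jc, hjc⟩ := Fin.exists_castSucc_eq.2 hjl
        have h3 := h0 jc
        have h4 : σ jc.castSucc = j := by rw [hjc]; exact Equiv.swap_apply_self i₀ (Fin.last k) j
        rw [show (e ∘ σ) jc.castSucc = e j from by rw [Function.comp_apply, h4]] at h3
        exact h3
      · have h6 : σ (Fin.last k) = i₀ := Equiv.swap_apply_right _ _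
        rw [show (e ∘ σ) (Fin.last k) = e i₀ from by rw [Function.comp_apply, h6]] at hne
        exact hne
    choose aa h0 hne using hone
    have hb : ∀ i, ∃ b : A, b • (aa i • e i) = w i := fun i =>
      IsSimpleModule.toSpanSingleton_surjective A (hne i) (w i)
    choose bb hbb using hb
    refine ⟨∑ i, bb i * aa i, fun j => ?_⟩
    rw [Finset.sum_smul, Finset.sum_eq_single j]
    · rw [mul_smul]; exact hbb j
    · intro i _ hij
      rw [mul_smul, h0 i j (fun hji => hij (hji ▸ rfl)), smul_zero]
    · intro hj; exact absurd (Finset.mem_univ j) hj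

lemma aux_rank_surj {X : Type*} {Y : Type*} [AddCommGroup X] [AddCommGroup Y]
    [Module ℂ X] [Module ℂ Y] (f : X →ₗ[ℂ] Y) (h : Function.Surjective f)
    (hx : Module.rank ℂ X ≤ Cardinal.aleph0) : Module.rank ℂ Y ≤ Cardinal.aleph0 := by
  have h1 := LinearMap.lift_rank_le_of_surjective f h
  have h3 := h1.trans ((Cardinal.lift_le.2 hx).trans_eq Cardinal.lift_aleph0)
  exact Cardinal.lift_le_aleph0.1 h3

lemma aux_rank_inj {X : Type*} {Y : Type*} [AddCommGroup X] [AddCommGroup Y]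
    [Module ℂ X] [Module ℂ Y] (f : X →ₗ[ℂ] Y) (h : Function.Injective f)
    (hy : Module.rank ℂ Y ≤ Cardinal.aleph0) : Module.rank ℂ X ≤ Cardinal.aleph0 := by
  have h1 := LinearMap.lift_rank_le_of_injective f h
  have h3 := h1.trans ((Cardinal.lift_le.2 hy).trans_eq Cardinal.lift_aleph0)
  exact Cardinal.lift_le_aleph0.1 h3

/-- Let `A` be a unital associative `ℂ`-algebra of at most countable dimension
admitting an infinite-dimensional simple left `A`-module `M`.  Then for every `n ≥ 1` every
polynomial identity of `A` is a polynomial identity of `Mₙ(ℂ)`; consequently `PIdeg A = ∞`. -/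
theorem pIdeg_eq_top_of_infinite_dimensional_simple
    {A : Type*} [Ring A] [Algebra ℂ A]
    (hdim : Module.rank ℂ A ≤ Cardinal.aleph0)
    (M : Type*) [AddCommGroup M] [Module A M] [Module ℂ M] [IsScalarTower ℂ A M]
    [IsSimpleModule A M]
    (hinf : ¬ FiniteDimensional ℂ M) :
    (∀ n : ℕ, 1 ≤ n →
      ∀ (m : ℕ) (p : FreeAlgebra ℤ (Fin m)),
        IsPolyIdentity A p → IsPolyIdentity (Matrix (Fin n) (Fin n) ℂ) p) ∧
    PIdeg A = ⊤ := by
  classical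
  haveI hAC : SMulCommClass A ℂ M := ⟨fun a c m => by
    rw [← algebraMap_smul A c m, ← mul_smul, ← Algebra.commutes, mul_smul, algebraMap_smul]⟩
  haveI : SMulCommClass ℂ A M := SMulCommClass.symm A ℂ M
  haveI : Nontrivial M := IsSimpleModule.nontrivial A M
  obtain ⟨m₀, hm₀⟩ := exists_ne (0 : M)
  -- M has countable dimension over ℂ
  have hrankM : Module.rank ℂ M ≤ Cardinal.aleph0 := by
    let f : A →ₗ[ℂ] M :=
      { toFun := fun a => a • m₀
        map_add' := fun a b => add_smul a b m₀
        map_smul' := fun c a => smul_assoc c a m₀ }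
    have hsurj : Function.Surjective f := fun m =>
      IsSimpleModule.toSpanSingleton_surjective A hm₀ m
    exact aux_rank_surj f hsurj hdim
  -- The endomorphism algebra
  letI : DivisionRing (M →ₗ[A] M) := Module.End.instDivisionRing
  letI instAlg : Algebra ℂ (M →ₗ[A] M) := Algebra.ofModule
    (fun c f g => LinearMap.ext fun x => rfl)
    (fun c f g => LinearMap.ext fun x => by
      show f ((c • g) x) = c • (f (g x))
      rw [LinearMap.smul_apply, ← algebraMap_smul A c (g x), LinearMap.map_smul,
        algebraMap_smul])
  have hrankD : Module.rank ℂ (M →ₗ[A] M) ≤ Cardinal.aleph0 := by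
    let g : (M →ₗ[A] M) →ₗ[ℂ] M :=
      { toFun := fun f => f m₀
        map_add' := fun f₁ f₂ => rfl
        map_smul' := fun c f => rfl }
    have hginj : Function.Injective g := by
      intro f₁ f₂ hf
      by_contra hne
      have hsub : f₁ - f₂ ≠ 0 := sub_ne_zero.2 hne
      have hi := LinearMap.injective_of_ne_zero hsub
      apply hm₀
      apply hi
      show (f₁ - f₂) m₀ = (f₁ - f₂) 0
      rw [LinearMap.sub_apply, map_zero, sub_eq_zero]
      exact hf
    exact aux_rank_inj g hginj hrankM
  have hEnd : ∀ f : M →ₗ[A] M, ∃ c : ℂ, ∀ m : M, f m = c • m := by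
    intro f
    obtain ⟨c, hc⟩ := aux_dixmier hrankD f
    refine ⟨c, fun m => ?_⟩
    rw [← hc, Algebra.algebraMap_eq_smul_one]
    rfl
  have main : ∀ n : ℕ, 1 ≤ n → ∀ (m : ℕ) (p : FreeAlgebra ℤ (Fin m)),
      IsPolyIdentity A p → IsPolyIdentity (Matrix (Fin n) (Fin n) ℂ) p := by
    intro n hn m p hp v
    obtain ⟨e, he⟩ : ∃ e : Fin n → M, LinearIndependent ℂ e := by
      let B := Module.Basis.ofVectorSpace ℂ M
      haveI : Infinite (Module.Basis.ofVectorSpaceIndex ℂ M) :=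
        not_finite_iff_infinite.1 fun hF => hinf (B.finiteDimensional_of_finite)
      let emb : Fin n ↪ (Module.Basis.ofVectorSpaceIndex ℂ M) :=
        (Fin.valEmbedding).trans (Infinite.natEmbedding _)
      exact ⟨B ∘ emb, B.linearIndependent.comp emb emb.injective⟩
    set W : Submodule ℂ M := Submodule.span ℂ (Set.range e) with hW
    let b : Module.Basis (Fin n) ℂ W := Module.Basis.span he
    have hai : ∀ i : Fin m, ∃ a : A, ∀ j : Fin n, a • e j = ∑ l : Fin n, v i l j • e l :=
      fun i => aux_density hEnd n e he (fun j => ∑ l, v i l j • e l)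
    choose a ha using hai
    let S : Subring A :=
      { carrier := {x : A | ∀ w : W, x • (w : M) ∈ W}
        mul_mem' := fun {x y} hx hy w => by
          rw [mul_smul]; exact hx ⟨_, hy w⟩
        one_mem' := fun w => by rw [one_smul]; exact w.2
        add_mem' := fun {x y} hx hy w => by
          rw [add_smul]; exact W.add_mem (hx w) (hy w)
        zero_mem' := fun w => by rw [zero_smul]; exact W.zero_mem
        neg_mem' := fun {x} hx w => by rw [neg_smul]; exact W.neg_mem (hx w) }
    let ρ : S → (W →ₗ[ℂ] W) := fun x =>
      { toFun := fun w => ⟨(x : A) • (w : M), x.2 w⟩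
        map_add' := fun w₁ w₂ => Subtype.ext (smul_add (x : A) (w₁ : M) (w₂ : M))
        map_smul' := fun c w => Subtype.ext (smul_comm (x : A) c (w : M)) }
    let Φ : S →+* Matrix (Fin n) (Fin n) ℂ :=
      { toFun := fun x => LinearMap.toMatrix b b (ρ x)
        map_one' := by
          have h1 : ρ 1 = LinearMap.id := by
            ext w; exact congrArg Subtype.val (Subtype.ext (one_smul A (w : M)))
          show LinearMap.toMatrix b b (ρ 1) = 1
          rw [h1, LinearMap.toMatrix_id]
        map_mul' := fun x y => by
          have h1 : ρ (x * y) = (ρ x).comp (ρ y) := by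
            ext w; exact congrArg Subtype.val (Subtype.ext (mul_smul (x : A) (y : A) (w : M)))
          show LinearMap.toMatrix b b (ρ (x * y))
            = LinearMap.toMatrix b b (ρ x) * LinearMap.toMatrix b b (ρ y)
          rw [h1, LinearMap.toMatrix_comp b b b]
        map_zero' := by
          have h1 : ρ 0 = 0 := by
            ext w; exact congrArg Subtype.val (Subtype.ext (zero_smul A (w : M)))
          show LinearMap.toMatrix b b (ρ 0) = 0
          rw [h1]; exact map_zero (LinearMap.toMatrix b b)
        map_add' := fun x y => by
          have h1 : ρ (x + y) = ρ x + ρ y := by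
            ext w; exact congrArg Subtype.val (Subtype.ext (add_smul (x : A) (y : A) (w : M)))
          show LinearMap.toMatrix b b (ρ (x + y))
            = LinearMap.toMatrix b b (ρ x) + LinearMap.toMatrix b b (ρ y)
          rw [h1]; exact map_add (LinearMap.toMatrix b b) _ _ }
    have haS : ∀ i, a i ∈ S := by
      intro i w
      obtain ⟨w, hw⟩ := w
      show a i • w ∈ W
      refine Submodule.span_induction ?_ ?_ ?_ ?_ hw
      · rintro x ⟨j, rfl⟩
        rw [ha i j]
        exact Submodule.sum_mem _ fun l _ =>
          Submodule.smul_mem _ _ (Submodule.subset_span ⟨l, rfl⟩)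
      · rw [smul_zero]; exact W.zero_mem
      · intro x y _ _ hx hy
        rw [smul_add]; exact W.add_mem hx hy
      · intro c x _ hx
        rw [smul_comm]; exact W.smul_mem c hx
    let a' : Fin m → S := fun i => ⟨a i, haS i⟩
    have hlift : FreeAlgebra.lift ℤ a' p = 0 := by
      have h1 : (S.subtype.toIntAlgHom.comp (FreeAlgebra.lift ℤ a'))
          = FreeAlgebra.lift ℤ (fun i => ((a' i : A))) :=
        FreeAlgebra.hom_ext (funext fun i => by simp)
      have h2 := hp a
      have h3 : S.subtype.toIntAlgHom (FreeAlgebra.lift ℤ a' p) = 0 := by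
        have := DFunLike.congr_fun h1 p
        rw [AlgHom.comp_apply] at this
        rw [this]
        exact h2
      exact Subtype.val_injective h3
    have h3 : (Φ.toIntAlgHom.comp (FreeAlgebra.lift ℤ a'))
        = FreeAlgebra.lift ℤ (fun i => Φ (a' i)) :=
      FreeAlgebra.hom_ext (funext fun i => by simp; exact (FreeAlgebra.lift_ι_apply (R := ℤ) (A := Matrix (Fin n) (Fin n) ℂ) (fun i => Φ (a' i)) i).symm)
    have h4 : ∀ i, Φ (a' i) = v i := by
      intro i
      ext l j
      show LinearMap.toMatrix b b (ρ (a' i)) l j = v i l j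
      rw [LinearMap.toMatrix_apply]
      have hbj : (ρ (a' i)) (b j) = ∑ l : Fin n, v i l j • b l := by
        apply Subtype.ext
        show (a i) • ((b j : W) : M) = _
        rw [Module.Basis.span_apply]
        rw [ha i j]
        rw [Submodule.coe_sum]
        exact Finset.sum_congr rfl fun l _ => by rw [SetLike.val_smul, Module.Basis.span_apply]
      rw [hbj]
      rw [map_sum]
      simp [Module.Basis.repr_self, Finsupp.single_apply]
    have h5 := DFunLike.congr_fun h3 p
    rw [AlgHom.comp_apply, hlift, map_zero] at h5
    rw [show v = (fun i => Φ (a' i)) from funext fun i => (h4 i).symm]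
    exact h5.symm
  refine ⟨main, ?_⟩
  have hle : ∀ n : ℕ, ((n : ℕ∞)) ≤ PIdeg A := by
    intro n
    have hmem : ((n + 1 : ℕ) : ℕ∞) ∈ {N : ℕ∞ | ∃ n' : ℕ, N = n' ∧ 1 ≤ n' ∧
        ∀ (m : ℕ) (p : FreeAlgebra ℤ (Fin m)),
          IsPolyIdentity A p → IsPolyIdentity (Matrix (Fin n') (Fin n') ℂ) p} :=
      ⟨n + 1, rfl, Nat.succ_le_succ (Nat.zero_le n), main (n + 1) (Nat.succ_le_succ (Nat.zero_le n))⟩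
    refine le_trans ?_ (le_sSup hmem)
    exact_mod_cast Nat.le_succ n
  by_contra hne
  obtain ⟨k, hk⟩ := WithTop.ne_top_iff_exists.1 hne
  have hk' : ((k : ℕ) : ℕ∞) = PIdeg A := hk
  have hcon := hle (k + 1)
  rw [← hk'] at hcon
  have : k + 1 ≤ k := by exact_mod_cast hcon
  omega
end

section
/- Let A be a unital associative ℂ-algebra of at most countable dimension over ℂ such that the intersection of the annihilators of all simple left A-modules is zero. Then PIdeg(A) = 1 if and only if A is commutative. -/
open Cardinal Polynomial

universe u

/-- Evaluation of free-algebra elements commutes with ring homomorphisms. -/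
lemma lift_ringHom_comm {B C : Type*} [Ring B] [Ring C] (h : B →+* C) {m : ℕ}
    (v : Fin m → B) (p : FreeAlgebra ℤ (Fin m)) :
    h (FreeAlgebra.lift ℤ v p) = FreeAlgebra.lift ℤ (fun i => h (v i)) p := by
  have : (h.toIntAlgHom.comp (FreeAlgebra.lift ℤ v) : FreeAlgebra ℤ (Fin m) →ₐ[ℤ] C)
      = FreeAlgebra.lift ℤ (fun i => h (v i)) := by
    apply FreeAlgebra.hom_ext
    funext i
    simp
  exact DFunLike.congr_fun this p

/-- Every PI of `A` is a PI of `ℂ ≅ M₁(ℂ)`. -/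
lemma one_mem_aux {A : Type u} [Ring A] [Nontrivial A] [Algebra ℂ A]
    {m : ℕ} (p : FreeAlgebra ℤ (Fin m)) (hp : IsPolyIdentity A p) :
    IsPolyIdentity (Matrix (Fin 1) (Fin 1) ℂ) p := by
  intro v
  let χ : Matrix (Fin 1) (Fin 1) ℂ →+* ℂ :=
    { toFun := fun X => X 0 0
      map_one' := by simp [Matrix.one_apply]
      map_mul' := fun X Y => by simp [Matrix.mul_apply]
      map_zero' := rfl
      map_add' := fun X Y => rfl }
  have hχinj : Function.Injective χ := by
    intro X Y h
    ext i j
    have : i = 0 := Subsingleton.elim i 0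
    have : j = 0 := Subsingleton.elim j 0
    subst_vars
    exact h
  let θ : Matrix (Fin 1) (Fin 1) ℂ →+* A := (algebraMap ℂ A).comp χ
  have hθinj : Function.Injective θ := (algebraMap ℂ A).injective.comp hχinj
  apply hθinj
  rw [map_zero, lift_ringHom_comm]
  exact hp _

/-- A division ring which is a `ℂ`-algebra of at most countable dimension is `ℂ` itself. -/
lemma scalar_of_divisionRing {D : Type*} [DivisionRing D] [Algebra ℂ D]
    (hrank : Module.rank ℂ D ≤ Cardinal.aleph0) (f : D) :
    ∃ z : ℂ, f = algebraMap ℂ D z := by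
  classical
  by_contra hf
  push_neg at hf
  have hnz : ∀ z : ℂ, f - algebraMap ℂ D z ≠ 0 := fun z h => hf z (by rwa [sub_eq_zero] at h)
  -- `f` is transcendental over `ℂ`
  have H : ∀ p : ℂ[X], (aeval f) p = 0 → p = 0 := by
    suffices key : ∀ (n : ℕ) (p : ℂ[X]), p.natDegree = n → p ≠ 0 → (aeval f) p ≠ 0 by
      intro p hp
      by_contra h0
      exact key p.natDegree p rfl h0 hp
    intro n
    induction n using Nat.strong_induction_on with
    | _ n ih =>
      intro p hn hp0
      rcases eq_or_ne n 0 with rfl | h0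
      · obtain ⟨c, rfl⟩ := Polynomial.natDegree_eq_zero.mp hn
        have hc : c ≠ 0 := fun h => hp0 (by simp [h])
        simp only [Polynomial.aeval_C]
        intro h
        exact hc ((algebraMap ℂ D).injective (by rw [h, map_zero]))
      · have hdeg : 0 < p.degree := by
          rw [← Polynomial.natDegree_pos_iff_degree_pos]
          omega
        obtain ⟨z, hz⟩ := Complex.exists_root hdeg
        obtain ⟨q, hq⟩ := Polynomial.dvd_iff_isRoot.mpr hz
        have hq0 : q ≠ 0 := by rintro rfl; rw [mul_zero] at hq; exact hp0 hq
        rw [hq, Polynomial.natDegree_mul (Polynomial.X_sub_C_ne_zero z) hq0,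
          Polynomial.natDegree_X_sub_C] at hn
        have hr := ih q.natDegree (by omega) q rfl hq0
        rw [hq, map_mul]
        have : (aeval f) (X - C z) = f - algebraMap ℂ D z := by
          simp [map_sub]
        rw [this]
        exact mul_ne_zero (hnz z) hr
  -- the family `(f - z)⁻¹` is linearly independent over `ℂ`
  have hli : LinearIndependent ℂ (fun z : ℂ => (f - algebraMap ℂ D z)⁻¹) := by
    rw [linearIndependent_iff']
    intro s g hg i hi
    have h1 : ∀ i ∈ s, (aeval f (∏ j ∈ s, (X - C j))) * (f - algebraMap ℂ D i)⁻¹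
        = aeval f (∏ j ∈ s.erase i, (X - C j)) := by
      intro i hi
      rw [← Finset.prod_erase_mul _ _ hi, map_mul]
      have : (aeval f) (X - C i) = f - algebraMap ℂ D i := by simp [map_sub]
      rw [this, mul_inv_cancel_right₀ (hnz i)]
    have hm' := congrArg (fun d => (aeval f (∏ j ∈ s, (X - C j))) * d) hg
    simp only [mul_zero, Finset.mul_sum, mul_smul_comm] at hm'
    have h2 : ∀ i ∈ s, g i • ((aeval f (∏ j ∈ s, (X - C j))) * (f - algebraMap ℂ D i)⁻¹)
        = aeval f (C (g i) * ∏ j ∈ s.erase i, (X - C j)) := by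
      intro i hi
      rw [h1 i hi, map_mul, aeval_C, ← Algebra.smul_def]
    rw [Finset.sum_congr rfl h2, ← map_sum] at hm'
    have hp0 := H _ hm'
    have hev := congrArg (Polynomial.eval i) hp0
    rw [Polynomial.eval_finset_sum] at hev
    rw [Finset.sum_eq_single i (fun b hb hbi => ?_) (fun h => absurd hi h)] at hev
    · simp only [Polynomial.eval_mul, Polynomial.eval_C, Polynomial.eval_prod,
        Polynomial.eval_sub, Polynomial.eval_X, Polynomial.eval_zero] at hev
      have hprod : (∏ j ∈ s.erase i, (i - j)) ≠ 0 :=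
        Finset.prod_ne_zero_iff.mpr fun j hj =>
          sub_ne_zero.mpr (Finset.ne_of_mem_erase hj).symm
      exact (mul_eq_zero.mp hev).resolve_right hprod
    · have : i ∈ s.erase b := Finset.mem_erase_of_ne_of_mem (fun h => hbi h.symm) hi
      simp only [Polynomial.eval_mul, Polynomial.eval_prod, Polynomial.eval_sub,
        Polynomial.eval_X, Polynomial.eval_C]
      rw [Finset.prod_eq_zero this (by ring), mul_zero]
  -- contradiction with countable dimension
  have hcard := hli.cardinal_lift_le_rank
  rw [mk_complex] at hcard
  have : (𝔠 : Cardinal) ≤ ℵ₀ := by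
    have h2 := hcard.trans (Cardinal.lift_le.mpr hrank)
    rwa [Cardinal.lift_continuum, Cardinal.lift_aleph0] at h2
  exact absurd this (not_le.mpr Cardinal.aleph0_lt_continuum)

/-- Every endomorphism of a simple module over a countable-dimensional `ℂ`-algebra is a scalar. -/
lemma end_scalar {A : Type u} [Ring A] [Algebra ℂ A]
    (hdim : Module.rank ℂ A ≤ Cardinal.aleph0)
    (M : Type u) [AddCommGroup M] [Module A M] [IsSimpleModule A M]
    (f : M →ₗ[A] M) : ∃ z : ℂ, ∀ x : M, f x = algebraMap ℂ A z • x := by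
  classical
  letI : Module ℂ M := Module.compHom M (algebraMap ℂ A)
  -- the scalar endomorphisms
  let φ : ℂ →+* Module.End A M :=
    { toFun := fun z =>
        { toFun := fun x => algebraMap ℂ A z • x
          map_add' := fun x y => smul_add _ x y
          map_smul' := fun a x => by
            simp only [RingHom.id_apply, smul_smul, Algebra.commutes z a] }
      map_one' := by ext x; simp
      map_mul' := fun z w => by
        ext x
        simp [Module.End.mul_apply, smul_smul, ← map_mul, mul_comm z w]
      map_zero' := by ext x; simp
      map_add' := fun z w => by ext x; simp [add_smul] }
  letI : DivisionRing (Module.End A M) := Module.End.instDivisionRing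
  letI : Algebra ℂ (Module.End A M) := RingHom.toAlgebra' φ (by
    intro z g
    ext x
    simp only [Module.End.mul_apply]
    show φ z (g x) = g (algebraMap ℂ A z • x)
    rw [map_smul]
    rfl)
  have halg : ∀ z : ℂ, algebraMap ℂ (Module.End A M) z = φ z := fun z => rfl
  have := IsSimpleModule.nontrivial A M
  obtain ⟨m₀, hm₀⟩ := exists_ne (0 : M)
  -- rank estimates
  have hsur : Function.Surjective (LinearMap.toSpanSingleton A M m₀) :=
    IsSimpleModule.toSpanSingleton_surjective A hm₀
  let ev : Module.End A M →ₗ[ℂ] M :=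
    { toFun := fun g => g m₀
      map_add' := fun g h => rfl
      map_smul' := fun z g => by
        show (z • g) m₀ = algebraMap ℂ A z • g m₀
        rw [Algebra.smul_def, halg]
        rfl }
  have hinj : Function.Injective ev := by
    intro g h hgh
    have : (g - h) m₀ = 0 := by
      show g m₀ - h m₀ = 0
      rw [sub_eq_zero]; exact hgh
    rcases LinearMap.injective_or_eq_zero (g - h) with hi | hz
    · exact absurd (hi (show (g - h) m₀ = (g - h) 0 by rw [map_zero]; exact this)) hm₀
    · exact sub_eq_zero.mp hz
  let sur : A →ₗ[ℂ] M :=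
    { toFun := fun a => a • m₀
      map_add' := fun a b => add_smul a b m₀
      map_smul' := fun z a => by
        show (z • a) • m₀ = algebraMap ℂ A z • a • m₀
        rw [Algebra.smul_def, mul_smul] }
  have hsur' : Function.Surjective sur := hsur
  have hrank : Module.rank ℂ (Module.End A M) ≤ Cardinal.aleph0 :=
    ((LinearMap.rank_le_of_injective ev hinj).trans
      (LinearMap.rank_le_of_surjective sur hsur')).trans hdim
  obtain ⟨z, hz⟩ := scalar_of_divisionRing hrank f
  exact ⟨z, fun x => by rw [hz, halg]; rfl⟩

lemma half_trans {A : Type u} [Ring A] [Algebra ℂ A]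
    (hdim : Module.rank ℂ A ≤ Cardinal.aleph0)
    (M : Type u) [AddCommGroup M] [Module A M] [IsSimpleModule A M]
    (u w : M) (hu : u ≠ 0) (huw : ∀ z : ℂ, w ≠ algebraMap ℂ A z • u) (t : M) :
    ∃ a : A, a • u = 0 ∧ a • w = t := by
  classical
  set g₁ := LinearMap.toSpanSingleton A M u with hg₁
  set g₂ := LinearMap.toSpanSingleton A M w with hg₂
  have hsur : Function.Surjective g₁ := IsSimpleModule.toSpanSingleton_surjective A hu
  have hnotle : ¬ (LinearMap.ker g₁ ≤ LinearMap.ker g₂) := by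
    intro hle
    let f : M →ₗ[A] M :=
      ((LinearMap.ker g₁).liftQ g₂ hle) ∘ₗ (g₁.quotKerEquivOfSurjective hsur).symm.toLinearMap
    have h1 : (g₁.quotKerEquivOfSurjective hsur) (Submodule.Quotient.mk 1) = u := by
      simp [LinearMap.quotKerEquivOfSurjective, LinearMap.quotKerEquivRange, hg₁]
    have h2 : (g₁.quotKerEquivOfSurjective hsur).symm u = Submodule.Quotient.mk 1 := by
      rw [← h1, LinearEquiv.symm_apply_apply]
    have hfu : f u = w := by
      show ((LinearMap.ker g₁).liftQ g₂ hle) ((g₁.quotKerEquivOfSurjective hsur).symm u) = w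
      rw [h2, Submodule.liftQ_apply]
      simp [hg₂]
    obtain ⟨z, hz⟩ := end_scalar hdim M f
    exact huw z (by rw [← hfu, hz u])
  obtain ⟨a₀, ha₀k, ha₀n⟩ := SetLike.not_le_iff_exists.mp hnotle
  have hN : Submodule.map g₂ (LinearMap.ker g₁) = ⊤ := by
    rcases eq_bot_or_eq_top (Submodule.map g₂ (LinearMap.ker g₁)) with h | h
    · exfalso
      apply ha₀n
      rw [LinearMap.mem_ker]
      have : g₂ a₀ ∈ Submodule.map g₂ (LinearMap.ker g₁) := ⟨a₀, ha₀k, rfl⟩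
      rw [h] at this
      simpa using this
    · exact h
  have ht : t ∈ Submodule.map g₂ (LinearMap.ker g₁) := by rw [hN]; trivial
  obtain ⟨a, hak, hat⟩ := ht
  exact ⟨a, by simpa [hg₁] using hak, by simpa [hg₂] using hat⟩

lemma key {A : Type u} [Ring A] [Nontrivial A] [Algebra ℂ A]
    (hdim : Module.rank ℂ A ≤ Cardinal.aleph0)
    (hsemi : sInf {J : Ideal A | ∃ M : ModuleCat.{u} A,
        IsSimpleModule A M ∧ J = Module.annihilator A M} = ⊥)
    (hnc : ¬ ∀ x y : A, x * y = y * x)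
    {m : ℕ} (p : FreeAlgebra ℤ (Fin m)) (hp : IsPolyIdentity A p) :
    IsPolyIdentity (Matrix (Fin 2) (Fin 2) ℂ) p := by
  classical
  push_neg at hnc
  obtain ⟨x, y, hxy⟩ := hnc
  set c := x * y - y * x with hc
  have hc0 : c ≠ 0 := sub_ne_zero.mpr hxy
  -- find a simple module on which c acts nontrivially
  have hnot : ¬ ∀ J ∈ {J : Ideal A | ∃ M : ModuleCat.{u} A,
      IsSimpleModule A M ∧ J = Module.annihilator A M}, c ∈ J := by
    intro h
    have hmem := Submodule.mem_sInf.mpr h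
    rw [hsemi] at hmem
    exact hc0 (by simpa using hmem)
  push_neg at hnot
  obtain ⟨J, ⟨M, hMs, rfl⟩, hcJ⟩ := hnot
  haveI : IsSimpleModule A ↑M := hMs
  rw [Module.mem_annihilator] at hcJ
  push_neg at hcJ
  obtain ⟨m₀, hm₀⟩ := hcJ
  -- commutation of central scalars with the action
  have hcomm : ∀ (b : A) (z : ℂ) (n : ↑M), b • (algebraMap ℂ A z • n)
      = algebraMap ℂ A z • (b • n) := by
    intro b z n
    rw [smul_smul, ← Algebra.commutes z b, mul_smul]
  -- malleable scalar cancellation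
  have hzsmul : ∀ (z : ℂ) (n : ↑M), z ≠ 0 → algebraMap ℂ A z • n = 0 → n = 0 := by
    intro z n hz h
    have : algebraMap ℂ A z⁻¹ • algebraMap ℂ A z • n = n := by
      rw [smul_smul, ← map_mul, inv_mul_cancel₀ hz, map_one, one_smul]
    rw [h, smul_zero] at this
    exact this.symm
  -- existence of a ℂ-independent pair
  by_cases hex : ∃ e₁ e₂ : ↑M, ∀ z w : ℂ,
      algebraMap ℂ A z • e₁ + algebraMap ℂ A w • e₂ = 0 → z = 0 ∧ w = 0
  · obtain ⟨e₁, e₂, hind⟩ := hex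
    have he₁ : e₁ ≠ 0 := by
      intro h
      have := hind 1 0 (by simp [h])
      simp at this
    have he₂ : e₂ ≠ 0 := by
      intro h
      have := hind 0 1 (by simp [h])
      simp at this
    have h21 : ∀ z : ℂ, e₂ ≠ algebraMap ℂ A z • e₁ := by
      intro z h
      have := hind z (-1) (by rw [map_neg, map_one, neg_smul, one_smul, ← h]; abel)
      simp at this
    have h12 : ∀ z : ℂ, e₁ ≠ algebraMap ℂ A z • e₂ := by
      intro z h
      have := hind (-1) z (by rw [map_neg, map_one, neg_smul, one_smul, ← h]; abel)
      simp at this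
    -- two-point transitivity
    have htrans : ∀ t₁ t₂ : ↑M, ∃ a : A, a • e₁ = t₁ ∧ a • e₂ = t₂ := by
      intro t₁ t₂
      obtain ⟨a, ha1, ha2⟩ := half_trans hdim ↑M e₁ e₂ he₁ h21 t₂
      obtain ⟨b, hb1, hb2⟩ := half_trans hdim ↑M e₂ e₁ he₂ h12 t₁
      exact ⟨a + b, by rw [add_smul, ha1, hb2, zero_add],
        by rw [add_smul, ha2, hb1, add_zero]⟩
    intro v
    -- pick representatives for the matrices `v i`
    set e : Fin 2 → ↑M := ![e₁, e₂] with he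
    have hindep : ∀ z : Fin 2 → ℂ, (∑ k, algebraMap ℂ A (z k) • e k) = 0 → ∀ k, z k = 0 := by
      intro z h
      rw [Fin.sum_univ_two] at h
      have := hind (z 0) (z 1) (by simpa [he] using h)
      intro k
      fin_cases k
      · exact this.1
      · exact this.2
    have hchoice : ∀ i : Fin m, ∃ a : A, ∀ j : Fin 2,
        a • e j = ∑ k, algebraMap ℂ A (v i k j) • e k := by
      intro i
      obtain ⟨a, ha1, ha2⟩ := htrans (∑ k, algebraMap ℂ A (v i k 0) • e k)
        (∑ k, algebraMap ℂ A (v i k 1) • e k)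
      refine ⟨a, fun j => ?_⟩
      fin_cases j
      · simpa [he] using ha1
      · simpa [he] using ha2
    choose a ha using hchoice
    -- the word lemma
    have word : ∀ q : FreeAlgebra ℤ (Fin m), ∀ j : Fin 2,
        (FreeAlgebra.lift ℤ a q) • e j
          = ∑ k, algebraMap ℂ A ((FreeAlgebra.lift ℤ v q) k j) • e k := by
      intro q
      induction q with
      | grade0 r =>
        intro j
        rw [AlgHom.commutes, AlgHom.commutes]
        have hM : ∀ k, (algebraMap ℤ (Matrix (Fin 2) (Fin 2) ℂ) r) k j
            = if k = j then ((r : ℂ)) else 0 := by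
          intro k
          rw [eq_intCast (algebraMap ℤ (Matrix (Fin 2) (Fin 2) ℂ)) r]
          show ((r : ℤ) : Matrix (Fin 2) (Fin 2) ℂ) k j = _
          rw [← Matrix.diagonal_intCast, Matrix.diagonal_apply]
        simp only [hM, apply_ite (algebraMap ℂ A), map_zero, ite_smul, zero_smul,
          Finset.sum_ite_eq', Finset.mem_univ, if_true]
        rw [algebraMap_int_eq]
        show ((r : ℤ) : A) • e j = _
        rw [map_intCast (algebraMap ℂ A) r]
      | grade1 i =>
        intro j
        rw [FreeAlgebra.lift_ι_apply, FreeAlgebra.lift_ι_apply]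
        exact ha i j
      | mul q₁ q₂ ih₁ ih₂ =>
        intro j
        rw [map_mul, map_mul, mul_smul, ih₂ j, Finset.smul_sum]
        calc ∑ k, (FreeAlgebra.lift ℤ a q₁)
              • (algebraMap ℂ A ((FreeAlgebra.lift ℤ v q₂) k j) • e k)
            = ∑ k, algebraMap ℂ A ((FreeAlgebra.lift ℤ v q₂) k j)
              • ((FreeAlgebra.lift ℤ a q₁) • e k) :=
              Finset.sum_congr rfl fun k _ => hcomm _ _ _
          _ = ∑ k, algebraMap ℂ A ((FreeAlgebra.lift ℤ v q₂) k j)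
              • ∑ l, algebraMap ℂ A ((FreeAlgebra.lift ℤ v q₁) l k) • e l := by
              simp_rw [ih₁]
          _ = ∑ k, ∑ l, algebraMap ℂ A
              ((FreeAlgebra.lift ℤ v q₁) l k * (FreeAlgebra.lift ℤ v q₂) k j) • e l := by
              refine Finset.sum_congr rfl fun k _ => ?_
              rw [Finset.smul_sum]
              refine Finset.sum_congr rfl fun l _ => ?_
              rw [smul_smul, ← map_mul, mul_comm]
          _ = ∑ l, (∑ k, algebraMap ℂ A
              ((FreeAlgebra.lift ℤ v q₁) l k * (FreeAlgebra.lift ℤ v q₂) k j)) • e l := by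
              rw [Finset.sum_comm]
              exact Finset.sum_congr rfl fun l _ => (Finset.sum_smul).symm
          _ = ∑ k, algebraMap ℂ A
              (((FreeAlgebra.lift ℤ v q₁) * (FreeAlgebra.lift ℤ v q₂)) k j) • e k := by
              refine Finset.sum_congr rfl fun l _ => ?_
              rw [Matrix.mul_apply, map_sum]
      | add q₁ q₂ ih₁ ih₂ =>
        intro j
        rw [map_add, map_add, add_smul, ih₁ j, ih₂ j, ← Finset.sum_add_distrib]
        refine Finset.sum_congr rfl fun k _ => ?_
        rw [Matrix.add_apply, map_add, add_smul]
    -- conclude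
    have hzero := hp a
    apply Matrix.ext
    intro k j
    have := word p j
    rw [hzero, zero_smul] at this
    exact (hindep _ this.symm k)
  · -- all pairs are dependent: the action on M is by "scalars", contradiction
    exfalso
    push_neg at hex
    have hcol : ∀ (b : A) (n : ↑M), ∃ z : ℂ, b • n = algebraMap ℂ A z • n := by
      intro b n
      obtain ⟨z, w, hsum, hzw⟩ := hex n (b • n)
      by_cases hw : w = 0
      · subst hw
        have hz : z ≠ 0 := fun h => hzw h rfl
        have hn : n = 0 := hzsmul z n hz (by simpa using hsum)
        exact ⟨0, by simp [hn]⟩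
      · refine ⟨-(w⁻¹ * z), ?_⟩
        have h2 := congrArg (fun t => algebraMap ℂ A w⁻¹ • t) hsum
        simp only [smul_add, smul_zero, smul_smul, ← map_mul,
          inv_mul_cancel₀ hw, map_one, one_smul] at h2
        have h3 := eq_neg_of_add_eq_zero_right h2
        rw [← mul_assoc, ← map_mul, inv_mul_cancel₀ hw, map_one, one_mul] at h3
        rw [h3, ← neg_smul, ← map_neg]
    obtain ⟨zy, hzy⟩ := hcol y m₀
    obtain ⟨zx, hzx⟩ := hcol x m₀
    apply hm₀
    rw [hc, sub_smul, mul_smul, mul_smul, hzy, hzx, hcomm, hcomm, sub_eq_zero, hzy, hzx,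
      smul_smul, smul_smul, ← map_mul, ← map_mul, mul_comm]

/-- Let `A` be a unital associative `ℂ`-algebra of at most countable dimension such
that the intersection of the annihilators of all simple left `A`-modules is zero.  Then
`PIdeg A = 1` if and only if `A` is commutative. -/
theorem pIdeg_eq_one_iff_commutative
    {A : Type u} [Ring A] [Nontrivial A] [Algebra ℂ A]
    (hdim : Module.rank ℂ A ≤ Cardinal.aleph0)
    (hsemi : sInf {J : Ideal A | ∃ M : ModuleCat.{u} A,
        IsSimpleModule A M ∧ J = Module.annihilator A M} = ⊥) :
    PIdeg A = 1 ↔ ∀ x y : A, x * y = y * x := by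
  constructor
  · intro h
    by_contra hnc
    have h2S : (2 : ℕ∞) ∈ {N : ℕ∞ | ∃ n : ℕ, N = n ∧ 1 ≤ n ∧
        ∀ (m : ℕ) (p : FreeAlgebra ℤ (Fin m)),
          IsPolyIdentity A p → IsPolyIdentity (Matrix (Fin n) (Fin n) ℂ) p} := by
      refine ⟨2, by norm_num, by norm_num, fun m p hp => key hdim hsemi hnc p hp⟩
    have := le_sSup h2S
    rw [PIdeg] at h
    rw [h] at this
    norm_num at this
  · intro hcomm
    have h1S : (1 : ℕ∞) ∈ {N : ℕ∞ | ∃ n : ℕ, N = n ∧ 1 ≤ n ∧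
        ∀ (m : ℕ) (p : FreeAlgebra ℤ (Fin m)),
          IsPolyIdentity A p → IsPolyIdentity (Matrix (Fin n) (Fin n) ℂ) p} :=
      ⟨1, by norm_num, le_refl 1, fun m p hp => one_mem_aux p hp⟩
    refine le_antisymm (sSup_le ?_) (le_sSup h1S)
    rintro N ⟨n, rfl, hn1, hprop⟩
    -- if `n ≥ 2` the commutator identity rules it out
    rw [show (1 : ℕ∞) = ((1 : ℕ) : ℕ∞) from rfl, Nat.cast_le]
    by_contra hgt
    push_neg at hgt
    have hn2 : 2 ≤ n := hgt
    -- the commutator polynomial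
    set q : FreeAlgebra ℤ (Fin 2) :=
      FreeAlgebra.ι ℤ 0 * FreeAlgebra.ι ℤ 1 - FreeAlgebra.ι ℤ 1 * FreeAlgebra.ι ℤ 0 with hq
    have hqA : IsPolyIdentity A q := by
      intro v
      rw [hq, map_sub, map_mul, map_mul, FreeAlgebra.lift_ι_apply, FreeAlgebra.lift_ι_apply,
        hcomm (v 0) (v 1), sub_self]
    have hqM := hprop 2 q hqA
    set i0 : Fin n := ⟨0, by omega⟩
    set i1 : Fin n := ⟨1, by omega⟩
    have hne : i0 ≠ i1 := by
      simp only [i0, i1, Fin.mk.injEq, ne_eq]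
      omega
    set v : Fin 2 → Matrix (Fin n) (Fin n) ℂ :=
      ![Matrix.single i0 i1 1, Matrix.single i1 i0 1] with hv
    have := hqM v
    rw [hq, map_sub, map_mul, map_mul, FreeAlgebra.lift_ι_apply, FreeAlgebra.lift_ι_apply] at this
    have hentry := congrArg (fun X => X i0 i0) this
    simp only [hv, Matrix.cons_val_zero, Matrix.cons_val_one, Matrix.head_cons,
      Matrix.single_mul_single_same, one_mul, Matrix.sub_apply,
      Matrix.single_apply_same, Matrix.zero_apply] at hentry
    have h0 : Matrix.single i1 i1 (1 : ℂ) i0 i0 = 0 :=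
      Matrix.single_apply_of_ne i1 i1 1 i0 i0 (fun h => hne h.1.symm)
    rw [h0] at hentry
    norm_num at hentry
end
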